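/- arXiv:2007.04351 — 8 statements merged into one kernel-verified Lean document; each statement's English description precedes it below -/
import Mathlib

section
/- For every real number d ≥ 1/2, ψ(d) < 2·ξ(d); that is, (1/2)·(1 − exp(−(d/2)·(1+e^{−d}))) < (2/3)·(1 − (2d+1)^{−1/2}). -/
/-- Taylor upper bound: if `1 ≤ c · T₁₂(a)` then `exp (-a) ≤ c`. -/
lemma expA {a c : ℝ} (ha : 0 ≤ a) (hc : 0 < c)
    (h : 1 ≤ c * (1 + a + a^2/2 + a^3/6 + a^4/24 + a^5/120 + a^6/720 + a^7/5040
      + a^8/40320 + a^9/362880 + a^10/3628800 + a^11/39916800 + a^12/479001600)) :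
    Real.exp (-a) ≤ c := by
  have hT := Real.sum_le_exp_of_nonneg ha 13
  simp [Finset.sum_range_succ, Nat.factorial] at hT
  have h2 : 1 ≤ c * Real.exp a := by nlinarith [Real.exp_pos a]
  rw [Real.exp_neg, inv_le_iff_one_le_mul₀ (Real.exp_pos a)]
  linarith [h2]

/-- Degree-6 Taylor lower bound for `exp (-y)` on `[0,1]`. -/
lemma expB {y : ℝ} (h0 : 0 ≤ y) (h1 : y ≤ 1) :
    1 - y + y^2/2 - y^3/6 + y^4/24 - y^5/120 - 7*y^6/4320 ≤ Real.exp (-y) := by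
  have hb := Real.exp_bound (x := -y) (by rwa [abs_neg, abs_of_nonneg h0]) (n := 6) (by norm_num)
  rw [abs_le] at hb
  have := hb.1
  simp [Finset.sum_range_succ, Nat.factorial, abs_neg, abs_of_nonneg h0] at this
  nlinarith [this]

/-- Interval step lemma. -/
lemma key {d : ℝ} (a b c r y : ℝ)
    (hda : a ≤ d) (hdb : d ≤ b) (ha : 0 < a)
    (hc0 : 0 ≤ c) (hc : Real.exp (-a) ≤ c)
    (hy : (b/2)*(1+c) = 4*y) (hy0 : 0 ≤ y) (hy1 : y ≤ 1)
    (hr0 : 0 < r) (hr2 : 1 ≤ r^2*(2*a+1))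
    (hE0 : 0 ≤ 1 - y + y^2/2 - y^3/6 + y^4/24 - y^5/120 - 7*y^6/4320)
    (hfin : 1/2*(1-(1 - y + y^2/2 - y^3/6 + y^4/24 - y^5/120 - 7*y^6/4320)^4) < 2/3*(1-r)) :
    (1 / 2) * (1 - Real.exp (-(d / 2) * (1 + Real.exp (-d))))
      < (2 / 3) * (1 - (2 * d + 1) ^ (-(1 / 2) : ℝ)) := by
  have hd0 : 0 < d := lt_of_lt_of_le ha hda
  have hed : Real.exp (-d) ≤ c :=
    le_trans (Real.exp_le_exp.mpr (by linarith)) hc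
  have hedpos : 0 < Real.exp (-d) := Real.exp_pos _
  have hg : d/2 * (1 + Real.exp (-d)) ≤ 4*y := by
    rw [← hy]
    have h1 : d * (1 + Real.exp (-d)) ≤ b * (1 + c) :=
      mul_le_mul hdb (by linarith) (by positivity) (by linarith)
    linarith
  have hexp : (1 - y + y^2/2 - y^3/6 + y^4/24 - y^5/120 - 7*y^6/4320)^4
      ≤ Real.exp (-(d / 2) * (1 + Real.exp (-d))) := by
    have h2 : Real.exp (-(4*y)) ≤ Real.exp (-(d / 2) * (1 + Real.exp (-d))) := by
      rw [show -(d/2) * (1 + Real.exp (-d)) = -(d/2 * (1 + Real.exp (-d))) by ring]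
      exact Real.exp_le_exp.mpr (by linarith)
    have h3 : Real.exp (-(4*y)) = (Real.exp (-y))^4 := by
      rw [show -(4*y) = (4:ℕ) * (-y) by push_cast; ring, Real.exp_nat_mul]
    calc (1 - y + y^2/2 - y^3/6 + y^4/24 - y^5/120 - 7*y^6/4320)^4
        ≤ (Real.exp (-y))^4 := pow_le_pow_left₀ hE0 (expB hy0 hy1) 4
      _ = Real.exp (-(4*y)) := h3.symm
      _ ≤ _ := h2
  have hrpow : (2 * d + 1) ^ (-(1 / 2) : ℝ) ≤ r := by
    have hx : (0:ℝ) < 2*d+1 := by linarith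
    rw [Real.rpow_neg hx.le, ← Real.sqrt_eq_rpow]
    have hX : 0 < Real.sqrt (2*d+1) := Real.sqrt_pos.mpr hx
    have hsq : 1/r ≤ Real.sqrt (2*d+1) := by
      apply Real.le_sqrt' (by positivity) |>.mpr
      have h5 : (1/r)^2 * r^2 = 1 := by field_simp
      nlinarith [hr2, sq_nonneg r, hr0]
    have h6 : 1 ≤ r * Real.sqrt (2*d+1) := by
      have h7 := mul_le_mul_of_nonneg_left hsq hr0.le
      field_simp at h7
      nlinarith [h7]
    rw [inv_le_iff_one_le_mul₀ hX]
    linarith [h6, mul_comm r (Real.sqrt (2*d+1))]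
  nlinarith [hexp, hrpow]

set_option maxHeartbeats 4000000 in
/-- For every `d ≥ 1/2`, `ψ(d) < 2 ξ(d)`, i.e.
`(1/2)(1 - exp(-(d/2)(1+e^{-d}))) < (2/3)(1 - (2d+1)^{-1/2})`. -/
theorem psi_lt_two_xi (d : ℝ) (hd : 1 / 2 ≤ d) :
    (1 / 2) * (1 - Real.exp (-(d / 2) * (1 + Real.exp (-d))))
      < (2 / 3) * (1 - (2 * d + 1) ^ (-(1 / 2) : ℝ)) := by
  rcases le_or_gt d (61/100) with h | h
  · exact key (1/2) (61/100) (30327/50000) (442/625) (4899947/40000000) hd h (by norm_num)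
      (by norm_num) (expA (by norm_num) (by norm_num) (by norm_num)) (by norm_num)
      (by norm_num) (by norm_num) (by norm_num) (by norm_num) (by norm_num) (by norm_num)
  rcases le_or_gt d (37/50) with h | h
  · exact key (61/100) (37/50) (1698/3125) (839/1250) (178451/1250000) (by linarith) h (by norm_num)
      (by norm_num) (expA (by norm_num) (by norm_num) (by norm_num)) (by norm_num)
      (by norm_num) (by norm_num) (by norm_num) (by norm_num) (by norm_num) (by norm_num)
  rcases le_or_gt d (89/100) with h | h
  · exact key (37/50) (89/100) (1491/3125) (6351/10000) (51353/312500) (by linarith) h (by norm_num)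
      (by norm_num) (expA (by norm_num) (by norm_num) (by norm_num)) (by norm_num)
      (by norm_num) (by norm_num) (by norm_num) (by norm_num) (by norm_num) (by norm_num)
  rcases le_or_gt d (107/100) with h | h
  · exact key (89/100) (107/100) (20533/50000) (2999/5000) (7547031/40000000) (by linarith) h (by norm_num)
      (by norm_num) (expA (by norm_num) (by norm_num) (by norm_num)) (by norm_num)
      (by norm_num) (by norm_num) (by norm_num) (by norm_num) (by norm_num) (by norm_num)
  rcases le_or_gt d (32/25) with h | h
  · exact key (107/100) (32/25) (34301/100000) (1411/2500) (134301/625000) (by linarith) h (by norm_num)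
      (by norm_num) (expA (by norm_num) (by norm_num) (by norm_num)) (by norm_num)
      (by norm_num) (by norm_num) (by norm_num) (by norm_num) (by norm_num) (by norm_num)
  rcases le_or_gt d (153/100) with h | h
  · exact key (32/25) (153/100) (6951/25000) (53/100) (4888503/20000000) (by linarith) h (by norm_num)
      (by norm_num) (expA (by norm_num) (by norm_num) (by norm_num)) (by norm_num)
      (by norm_num) (by norm_num) (by norm_num) (by norm_num) (by norm_num) (by norm_num)
  rcases le_or_gt d (181/100) with h | h
  · exact key (153/100) (181/100) (10827/50000) (4963/10000) (11009687/40000000) (by linarith) h (by norm_num)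
      (by norm_num) (expA (by norm_num) (by norm_num) (by norm_num)) (by norm_num)
      (by norm_num) (by norm_num) (by norm_num) (by norm_num) (by norm_num) (by norm_num)
  rcases le_or_gt d (53/25) with h | h
  · exact key (181/100) (53/25) (8183/50000) (4653/10000) (3083699/10000000) (by linarith) h (by norm_num)
      (by norm_num) (expA (by norm_num) (by norm_num) (by norm_num)) (by norm_num)
      (by norm_num) (by norm_num) (by norm_num) (by norm_num) (by norm_num) (by norm_num)
  rcases le_or_gt d (123/50) with h | h
  · exact key (53/25) (123/50) (3001/25000) (4369/10000) (3444123/10000000) (by linarith) h (by norm_num)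
      (by norm_num) (expA (by norm_num) (by norm_num) (by norm_num)) (by norm_num)
      (by norm_num) (by norm_num) (by norm_num) (by norm_num) (by norm_num) (by norm_num)
  rcases le_or_gt d (281/100) with h | h
  · exact key (123/50) (281/100) (267/3125) (411/1000) (29786/78125) (by linarith) h (by norm_num)
      (by norm_num) (expA (by norm_num) (by norm_num) (by norm_num)) (by norm_num)
      (by norm_num) (by norm_num) (by norm_num) (by norm_num) (by norm_num) (by norm_num)
  rcases le_or_gt d (63/20) with h | h
  · exact key (281/100) (63/20) (6021/100000) (3887/10000) (6679323/16000000) (by linarith) h (by norm_num)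
      (by norm_num) (expA (by norm_num) (by norm_num) (by norm_num)) (by norm_num)
      (by norm_num) (by norm_num) (by norm_num) (by norm_num) (by norm_num) (by norm_num)
  rcases le_or_gt d (87/25) with h | h
  · exact key (63/20) (87/25) (2143/50000) (1851/5000) (4536441/10000000) (by linarith) h (by norm_num)
      (by norm_num) (expA (by norm_num) (by norm_num) (by norm_num)) (by norm_num)
      (by norm_num) (by norm_num) (by norm_num) (by norm_num) (by norm_num) (by norm_num)
  rcases le_or_gt d (379/100) with h | h
  · exact key (87/25) (379/100) (3081/100000) (709/2000) (39067699/80000000) (by linarith) h (by norm_num)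
      (by norm_num) (expA (by norm_num) (by norm_num) (by norm_num)) (by norm_num)
      (by norm_num) (by norm_num) (by norm_num) (by norm_num) (by norm_num) (by norm_num)
  rcases le_or_gt d (102/25) with h | h
  · exact key (379/100) (102/25) (113/5000) (1707/5000) (260763/500000) (by linarith) h (by norm_num)
      (by norm_num) (expA (by norm_num) (by norm_num) (by norm_num)) (by norm_num)
      (by norm_num) (by norm_num) (by norm_num) (by norm_num) (by norm_num) (by norm_num)
  rcases le_or_gt d (87/20) with h | h
  · exact key (102/25) (87/20) (423/25000) (661/2000) (2211801/4000000) (by linarith) h (by norm_num)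
      (by norm_num) (expA (by norm_num) (by norm_num) (by norm_num)) (by norm_num)
      (by norm_num) (by norm_num) (by norm_num) (by norm_num) (by norm_num) (by norm_num)
  rcases le_or_gt d (461/100) with h | h
  · exact key (87/20) (461/100) (323/25000) (3211/10000) (11673903/20000000) (by linarith) h (by norm_num)
      (by norm_num) (expA (by norm_num) (by norm_num) (by norm_num)) (by norm_num)
      (by norm_num) (by norm_num) (by norm_num) (by norm_num) (by norm_num) (by norm_num)
  rcases le_or_gt d (243/50) with h | h
  · exact key (461/100) (243/50) (997/100000) (3129/10000) (24542271/40000000) (by linarith) h (by norm_num)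
      (by norm_num) (expA (by norm_num) (by norm_num) (by norm_num)) (by norm_num)
      (by norm_num) (by norm_num) (by norm_num) (by norm_num) (by norm_num) (by norm_num)
  rcases le_or_gt d (128/25) with h | h
  · exact key (243/50) (128/25) (777/100000) (611/2000) (100777/156250) (by linarith) h (by norm_num)
      (by norm_num) (expA (by norm_num) (by norm_num) (by norm_num)) (by norm_num)
      (by norm_num) (by norm_num) (by norm_num) (by norm_num) (by norm_num) (by norm_num)
  rcases le_or_gt d (27/5) with h | h
  · exact key (128/25) (27/5) (3/500) (2983/10000) (13581/20000) (by linarith) h (by norm_num)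
      (by norm_num) (expA (by norm_num) (by norm_num) (by norm_num)) (by norm_num)
      (by norm_num) (by norm_num) (by norm_num) (by norm_num) (by norm_num) (by norm_num)
  rcases le_or_gt d (143/25) with h | h
  · exact key (27/5) (143/25) (227/50000) (182/625) (7182461/10000000) (by linarith) h (by norm_num)
      (by norm_num) (expA (by norm_num) (by norm_num) (by norm_num)) (by norm_num)
      (by norm_num) (by norm_num) (by norm_num) (by norm_num) (by norm_num) (by norm_num)
  rcases le_or_gt d (153/25) with h | h
  · exact key (143/25) (153/25) (33/10000) (709/2500) (1535049/2000000) (by linarith) h (by norm_num)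
      (by norm_num) (expA (by norm_num) (by norm_num) (by norm_num)) (by norm_num)
      (by norm_num) (by norm_num) (by norm_num) (by norm_num) (by norm_num) (by norm_num)
  rcases le_or_gt d (671/100) with h | h
  · exact key (153/25) (671/100) (223/100000) (2749/10000) (67249633/80000000) (by linarith) h (by norm_num)
      (by norm_num) (expA (by norm_num) (by norm_num) (by norm_num)) (by norm_num)
      (by norm_num) (by norm_num) (by norm_num) (by norm_num) (by norm_num) (by norm_num)
  rcases le_or_gt d (15/2) with h | h
  · exact key (671/100) (15/2) (1/800) (1317/5000) (2403/2560) (by linarith) h (by norm_num)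
      (by norm_num) (expA (by norm_num) (by norm_num) (by norm_num)) (by norm_num)
      (by norm_num) (by norm_num) (by norm_num) (by norm_num) (by norm_num) (by norm_num)
  -- tail: d > 15/2
  have h1 : 0 < Real.exp (-(d / 2) * (1 + Real.exp (-d))) := Real.exp_pos _
  have hx : (0:ℝ) < 2*d+1 := by linarith
  have hrp : (2*d+1) ^ (-(1/2):ℝ) ≤ 1/4 := by
    rw [Real.rpow_neg hx.le, ← Real.sqrt_eq_rpow, ← one_div]
    have h4 : (4:ℝ) ≤ Real.sqrt (2*d+1) := by
      apply (Real.le_sqrt' (by norm_num)).mpr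
      nlinarith
    exact one_div_le_one_div_of_le (by norm_num) h4
  linarith
end

section
/- For every finite triangle-tree T, the minimum size of a cover of the triangles of T by edges equals the maximum size of a set of pairwise edge-disjoint triangles of T; that is, τ(T) = ν(T). -/
noncomputable section

/-- `ν(G)`: the maximum size of a set of pairwise edge-disjoint triangles of `G`. -/
def triMatchNum {V : Type*} [Fintype V] [DecidableEq V] (G : SimpleGraph V) : ℕ :=
  sSup {k | ∃ 𝒯 : Finset (Finset V), (∀ t ∈ 𝒯, t ∈ G.cliqueSet 3) ∧
    (𝒯 : Set (Finset V)).Pairwise (fun a b => (a ∩ b).card ≤ 1) ∧ 𝒯.card = k}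

/-- `τ(G)`: the minimum size of a set of edges of `G` meeting every triangle of `G`. -/
def triCoverNum {V : Type*} [Fintype V] [DecidableEq V] (G : SimpleGraph V) : ℕ :=
  sInf {k | ∃ F : Finset (Sym2 V), (∀ e ∈ F, e ∈ G.edgeSet) ∧
    (∀ t ∈ G.cliqueSet 3, ∃ e ∈ F, ∀ v ∈ e, v ∈ t) ∧ F.card = k}

/-- A triangle-tree: built from a single edge by repeatedly adding a triangle consisting of an
existing edge together with a brand-new vertex. -/
inductive IsTriTree {V : Type*} : SimpleGraph V → Prop where
  | single (x y : V) (hxy : x ≠ y) : IsTriTree (SimpleGraph.fromEdgeSet {s(x, y)})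
  | grow (T : SimpleGraph V) (x y z : V) (hT : IsTriTree T) (hxy : T.Adj x y)
      (hz : z ∉ T.support) :
      IsTriTree (T ⊔ SimpleGraph.fromEdgeSet {s(x, z), s(y, z)})

lemma matching_le_cover {V : Type*} [DecidableEq V] (G : SimpleGraph V)
    (F : Finset (Sym2 V)) (𝒯 : Finset (Finset V))
    (hF : ∀ e ∈ F, e ∈ G.edgeSet)
    (hcov : ∀ t ∈ 𝒯, ∃ e ∈ F, ∀ v ∈ e, v ∈ t)
    (hpair : (𝒯 : Set (Finset V)).Pairwise fun a b => (a ∩ b).card ≤ 1) :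
    𝒯.card ≤ F.card := by
  classical
  choose f hf1 hf2 using hcov
  rw [← Finset.card_attach (s := 𝒯)]
  apply Finset.card_le_card_of_injOn (fun t => f t.1 t.2)
  · intro t _
    exact hf1 t.1 t.2
  · intro t₁ h₁ t₂ h₂ heq
    by_contra hne
    have hne' : t₁.1 ≠ t₂.1 := fun h => hne (Subtype.ext h)
    obtain ⟨a, b, hab⟩ : ∃ a b, f t₁.1 t₁.2 = s(a, b) :=
      ⟨(f t₁.1 t₁.2).out.1, (f t₁.1 t₁.2).out.2, by
        rw [Sym2.mk, Prod.mk.eta, (f t₁.1 t₁.2).out_eq]⟩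
    have hadj : G.Adj a b := by
      have := hF _ (hf1 t₁.1 t₁.2); rw [hab] at this; exact this
    have h1 := hf2 t₁.1 t₁.2
    have h2 := hf2 t₂.1 t₂.2
    simp only at heq
    rw [← heq] at h2
    rw [hab] at h1 h2
    have hsub : ({a, b} : Finset V) ⊆ t₁.1 ∩ t₂.1 := by
      intro v hv
      rcases Finset.mem_insert.1 hv with rfl | hv
      · exact Finset.mem_inter.2 ⟨h1 v (Sym2.mem_mk_left _ _), h2 v (Sym2.mem_mk_left _ _)⟩
      · rw [Finset.mem_singleton] at hv; subst hv
        exact Finset.mem_inter.2 ⟨h1 v (Sym2.mem_mk_right _ _), h2 v (Sym2.mem_mk_right _ _)⟩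
    have h2le : 2 ≤ (t₁.1 ∩ t₂.1).card := by
      calc 2 = ({a, b} : Finset V).card := (Finset.card_pair hadj.ne).symm
        _ ≤ _ := Finset.card_le_card hsub
    have := hpair t₁.2 t₂.2 hne'
    omega

lemma konig_key {V : Type*} [DecidableEq V] {T : SimpleGraph V} (hT : IsTriTree T) :
    ∀ 𝒮 : Finset (Finset V), (∀ t ∈ 𝒮, t ∈ T.cliqueSet 3) →
    ∃ (F : Finset (Sym2 V)) (𝒯 : Finset (Finset V)),
      (∀ e ∈ F, e ∈ T.edgeSet) ∧ (∀ t ∈ 𝒮, ∃ e ∈ F, ∀ v ∈ e, v ∈ t) ∧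
      𝒯 ⊆ 𝒮 ∧ ((𝒯 : Set (Finset V)).Pairwise fun a b => (a ∩ b).card ≤ 1) ∧
      F.card = 𝒯.card := by
  classical
  induction hT with
  | single x y hxy =>
    intro 𝒮 h𝒮
    have hempty : ∀ t, t ∉ 𝒮 := by
      intro t ht
      have := h𝒮 t ht
      rw [SimpleGraph.mem_cliqueSet_iff, SimpleGraph.is3Clique_iff] at this
      obtain ⟨a, b, c, hab, hac, hbc, rfl⟩ := this
      rw [SimpleGraph.fromEdgeSet_adj, Set.mem_singleton_iff, Sym2.eq_iff] at hab hac hbc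
      obtain ⟨h1 | h1, hne1⟩ := hab <;> obtain ⟨h2 | h2, hne2⟩ := hac <;>
        obtain ⟨h3 | h3, hne3⟩ := hbc <;> simp_all
    refine ⟨∅, ∅, by simp, fun t ht => absurd ht (hempty t), by simp, by simp, rfl⟩
  | grow T x y z hT hxy hz ih =>
    intro 𝒮 h𝒮
    set T' := T ⊔ SimpleGraph.fromEdgeSet {s(x, z), s(y, z)} with hT'
    have hxny : x ≠ y := hxy.ne
    have hxz : x ≠ z := fun h => hz (h ▸ ⟨y, hxy⟩)
    have hyz : y ≠ z := fun h => hz (h ▸ ⟨x, hxy.symm⟩)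
    -- z is in no triangle of T
    have hzt : ∀ t ∈ T.cliqueSet 3, z ∉ t := by
      intro t ht hzt
      rw [SimpleGraph.mem_cliqueSet_iff, SimpleGraph.isNClique_iff] at ht
      obtain ⟨hcl, hc3⟩ := ht
      obtain ⟨w, hw, hwz⟩ := Finset.exists_mem_ne (s := t) (by omega) z
      exact hz ⟨w, hcl hzt hw (Ne.symm hwz)⟩
    -- adjacency to z in T' forces x or y
    have hadjz : ∀ a, T'.Adj a z → a = x ∨ a = y := by
      intro a h
      rcases h with h | h
      · exact absurd ⟨a, h.symm⟩ hz
      · rw [SimpleGraph.fromEdgeSet_adj, Set.mem_insert_iff, Set.mem_singleton_iff] at h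
        obtain ⟨h1 | h1, hne⟩ := h
        · rw [Sym2.eq_iff] at h1
          rcases h1 with ⟨rfl, _⟩ | ⟨rfl, rfl⟩
          · exact Or.inl rfl
          · exact absurd rfl hne
        · rw [Sym2.eq_iff] at h1
          rcases h1 with ⟨rfl, _⟩ | ⟨rfl, rfl⟩
          · exact Or.inr rfl
          · exact absurd rfl hne
    -- adjacency avoiding z is in T
    have hnoz : ∀ a b, T'.Adj a b → a ≠ z → b ≠ z → T.Adj a b := by
      intro a b h ha hb
      rcases h with h | h
      · exact h
      · rw [SimpleGraph.fromEdgeSet_adj, Set.mem_insert_iff, Set.mem_singleton_iff] at h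
        obtain ⟨h1 | h1, hne⟩ := h <;> rw [Sym2.eq_iff] at h1 <;>
          rcases h1 with ⟨rfl, rfl⟩ | ⟨rfl, rfl⟩ <;> simp_all
    -- triangles of T'
    have htri : ∀ t ∈ T'.cliqueSet 3, t = {x, y, z} ∨ t ∈ T.cliqueSet 3 := by
      intro t ht
      rw [SimpleGraph.mem_cliqueSet_iff, SimpleGraph.is3Clique_iff] at ht
      obtain ⟨a, b, c, hab, hac, hbc, rfl⟩ := ht
      by_cases haz : a = z
      · subst haz
        left
        rcases hadjz b hab.symm with rfl | rfl <;> rcases hadjz c hac.symm with rfl | rfl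
        · exact absurd rfl hbc.ne
        · ext v; simp only [Finset.mem_insert, Finset.mem_singleton]; try tauto
        · ext v; simp only [Finset.mem_insert, Finset.mem_singleton]; try tauto
        · exact absurd rfl hbc.ne
      · by_cases hbz : b = z
        · subst hbz
          left
          rcases hadjz a hab with rfl | rfl <;> rcases hadjz c hbc.symm with rfl | rfl
          · exact absurd rfl hac.ne
          · ext v; simp only [Finset.mem_insert, Finset.mem_singleton]; try tauto
          · ext v; simp only [Finset.mem_insert, Finset.mem_singleton]; try tauto
          · exact absurd rfl hac.ne
        · by_cases hcz : c = z
          · subst hcz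
            left
            rcases hadjz a hac with rfl | rfl <;> rcases hadjz b hbc with rfl | rfl
            · exact absurd rfl hab.ne
            · ext v; simp only [Finset.mem_insert, Finset.mem_singleton]; try tauto
            · ext v; simp only [Finset.mem_insert, Finset.mem_singleton]; try tauto
            · exact absurd rfl hab.ne
          · right
            rw [SimpleGraph.mem_cliqueSet_iff]
            exact SimpleGraph.is3Clique_triple_iff.2
              ⟨hnoz a b hab haz hbz, hnoz a c hac haz hcz, hnoz b c hbc hbz hcz⟩
    have hTle : T ≤ T' := le_sup_left
    have hedge : ∀ e ∈ T.edgeSet, e ∈ T'.edgeSet := fun e he =>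
      SimpleGraph.edgeSet_subset_edgeSet.2 hTle he
    by_cases hXYZ : ({x, y, z} : Finset V) ∈ 𝒮
    · -- the new triangle is present
      set 𝒮₀ := 𝒮.filter (fun t => ¬(x ∈ t ∧ y ∈ t)) with h𝒮₀def
      have h𝒮₀ : ∀ t ∈ 𝒮₀, t ∈ T.cliqueSet 3 := by
        intro t ht
        rw [Finset.mem_filter] at ht
        rcases htri t (h𝒮 t ht.1) with rfl | h
        · exact absurd ⟨by simp, by simp⟩ ht.2
        · exact h
      obtain ⟨F₀, 𝒯₀, hF₀, hcov₀, hsub₀, hpair₀, hcard₀⟩ := ih 𝒮₀ h𝒮₀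
      by_cases hxyF : s(x, y) ∈ F₀
      · refine ⟨F₀, 𝒯₀, fun e he => hedge e (hF₀ e he), ?_,
          hsub₀.trans (Finset.filter_subset _ _), hpair₀, hcard₀⟩
        intro t ht
        by_cases hxt : x ∈ t ∧ y ∈ t
        · exact ⟨s(x, y), hxyF, fun v hv => by
            rcases Sym2.mem_iff.1 hv with rfl | rfl
            exacts [hxt.1, hxt.2]⟩
        · exact hcov₀ t (Finset.mem_filter.2 ⟨ht, hxt⟩)
      · -- add the edge xy and the triangle xyz
        have hXYZnot : ({x, y, z} : Finset V) ∉ 𝒯₀ := by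
          intro h
          have := Finset.mem_filter.1 (hsub₀ h)
          exact this.2 ⟨by simp, by simp⟩
        refine ⟨insert s(x, y) F₀, insert {x, y, z} 𝒯₀, ?_, ?_, ?_, ?_, ?_⟩
        · intro e he
          rcases Finset.mem_insert.1 he with rfl | he
          · exact T'.mem_edgeSet.2 (Or.inl hxy)
          · exact hedge e (hF₀ e he)
        · intro t ht
          by_cases hxt : x ∈ t ∧ y ∈ t
          · exact ⟨s(x, y), Finset.mem_insert_self _ _, fun v hv => by
              rcases Sym2.mem_iff.1 hv with rfl | rfl
              exacts [hxt.1, hxt.2]⟩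
          · obtain ⟨e, he, hce⟩ := hcov₀ t (Finset.mem_filter.2 ⟨ht, hxt⟩)
            exact ⟨e, Finset.mem_insert_of_mem he, hce⟩
        · intro t ht
          rcases Finset.mem_insert.1 ht with rfl | ht
          · exact hXYZ
          · exact Finset.filter_subset _ _ (hsub₀ ht)
        · rw [Finset.coe_insert]
          refine (@Set.pairwise_insert_of_symm _ _ _ _ ⟨?_⟩).2 ⟨hpair₀, ?_⟩
          · intro a b h
            rwa [Finset.inter_comm]
          · intro t ht _
            have ht𝒮₀ := hsub₀ ht
            have htT : t ∈ T.cliqueSet 3 := h𝒮₀ t ht𝒮₀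
            have hzn : z ∉ t := hzt t htT
            have hxy' : ¬(x ∈ t ∧ y ∈ t) := (Finset.mem_filter.1 ht𝒮₀).2
            by_cases hxt : x ∈ t
            · have hsub : ({x, y, z} : Finset V) ∩ t ⊆ {x} := by
                intro v hv
                rw [Finset.mem_inter] at hv
                rcases hv with ⟨hv1, hv2⟩
                simp only [Finset.mem_insert, Finset.mem_singleton] at hv1 ⊢
                rcases hv1 with rfl | rfl | rfl
                · rfl
                · exact absurd ⟨hxt, hv2⟩ hxy'
                · exact absurd hv2 hzn
              calc (({x, y, z} : Finset V) ∩ t).card ≤ ({x} : Finset V).card :=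
                    Finset.card_le_card hsub
                _ = 1 := Finset.card_singleton x
            · have hsub : ({x, y, z} : Finset V) ∩ t ⊆ {y} := by
                intro v hv
                rw [Finset.mem_inter] at hv
                rcases hv with ⟨hv1, hv2⟩
                simp only [Finset.mem_insert, Finset.mem_singleton] at hv1 ⊢
                rcases hv1 with rfl | rfl | rfl
                · exact absurd hv2 hxt
                · rfl
                · exact absurd hv2 hzn
              calc (({x, y, z} : Finset V) ∩ t).card ≤ ({y} : Finset V).card :=
                    Finset.card_le_card hsub
                _ = 1 := Finset.card_singleton y
        · rw [Finset.card_insert_of_notMem hxyF, Finset.card_insert_of_notMem hXYZnot,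
            hcard₀]
    · -- all triangles of 𝒮 are triangles of T
      have h𝒮T : ∀ t ∈ 𝒮, t ∈ T.cliqueSet 3 := by
        intro t ht
        rcases htri t (h𝒮 t ht) with rfl | h
        · exact absurd ht hXYZ
        · exact h
      obtain ⟨F₀, 𝒯₀, hF₀, hcov₀, hsub₀, hpair₀, hcard₀⟩ := ih 𝒮 h𝒮T
      exact ⟨F₀, 𝒯₀, fun e he => hedge e (hF₀ e he), hcov₀, hsub₀, hpair₀, hcard₀⟩

/-- In a finite triangle-tree, the minimum triangle cover and the maximum triangle
matching have the same size: `τ(T) = ν(T)`. -/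
theorem tau_eq_nu_of_triTree {V : Type*} [Fintype V] [DecidableEq V]
    (T : SimpleGraph V) (hT : IsTriTree T) : triCoverNum T = triMatchNum T := by
  classical
  set S := {k | ∃ 𝒯 : Finset (Finset V), (∀ t ∈ 𝒯, t ∈ T.cliqueSet 3) ∧
    (𝒯 : Set (Finset V)).Pairwise (fun a b => (a ∩ b).card ≤ 1) ∧ 𝒯.card = k} with hS
  set C := {k | ∃ F : Finset (Sym2 V), (∀ e ∈ F, e ∈ T.edgeSet) ∧
    (∀ t ∈ T.cliqueSet 3, ∃ e ∈ F, ∀ v ∈ e, v ∈ t) ∧ F.card = k} with hC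
  have hfin : (T.cliqueSet 3).Finite := Set.toFinite _
  set 𝒮 := hfin.toFinset with h𝒮def
  have h𝒮 : ∀ t, t ∈ 𝒮 ↔ t ∈ T.cliqueSet 3 := fun t => Set.Finite.mem_toFinset hfin
  obtain ⟨F, 𝒯, hF, hcov, hsub, hpair, hcard⟩ := konig_key hT 𝒮 (fun t ht => (h𝒮 t).1 ht)
  have hFC : F.card ∈ C := ⟨F, hF, fun t ht => hcov t ((h𝒮 t).2 ht), rfl⟩
  have h𝒯S : 𝒯.card ∈ S := ⟨𝒯, fun t ht => (h𝒮 t).1 (hsub ht), hpair, rfl⟩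
  have hbddS : BddAbove S := by
    refine ⟨Fintype.card (Finset V), ?_⟩
    rintro k ⟨𝒯', -, -, rfl⟩
    exact Finset.card_le_univ 𝒯'
  have hdual : ∀ k ∈ S, ∀ m ∈ C, k ≤ m := by
    rintro k ⟨𝒯', h1, h2, rfl⟩ m ⟨F', g1, g2, rfl⟩
    exact matching_le_cover T F' 𝒯' g1 (fun t ht => g2 t (h1 t ht)) h2
  have h1 : triCoverNum T ≤ triMatchNum T := by
    calc triCoverNum T ≤ F.card := Nat.sInf_le hFC
      _ = 𝒯.card := hcard
      _ ≤ triMatchNum T := le_csSup hbddS h𝒯S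
  have h2 : triMatchNum T ≤ triCoverNum T :=
    csSup_le ⟨_, h𝒯S⟩ fun k hk => le_csInf ⟨_, hFC⟩ fun m hm => hdual k hk m hm
  exact le_antisymm h1 h2
end
end

section
/- Fix d > 0 and let p(n) = (d/(n−2))^{1/2}, and let γ = γ(n) be a sequence of positive integers with γ(n)·log log n / log n → 0. Then for distinct vertices x, y and every ε > 0, for all sufficiently large n the probability that xy is an edge of G = G_{n,p(n)} and S_{γ(n)}(xy) is not a triangle-tree is at most n^{−1+ε}. -/
open MeasureTheory Filter

noncomputable section

/-- The Bernoulli(p) measure on `Bool`: mass `p` at `true` and `1-p` at `false`. -/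
def berBool (p : ℝ) : Measure Bool :=
  ENNReal.ofReal p • Measure.dirac true + ENNReal.ofReal (1 - p) • Measure.dirac false

/-- The Erdős–Rényi measure `G_{n,p}`: each unordered pair of vertices receives an
independent Bernoulli(p) indicator. -/
def erMeasure (n : ℕ) (p : ℝ) : Measure (Sym2 (Fin n) → Bool) :=
  Measure.pi fun _ => berBool p

/-- The graph on `Fin n` determined by a sample point `ω`. -/
def erGraph (n : ℕ) (ω : Sym2 (Fin n) → Bool) : SimpleGraph (Fin n) where
  Adj x y := x ≠ y ∧ ω s(x, y) = true
  symm := by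
    constructor
    intro x y h
    exact ⟨h.1.symm, by rw [Sym2.eq_swap]; exact h.2⟩
  loopless := by
    constructor
    intro x h
    exact h.1 rfl

/-- Two edges of `G` lie in a common triangle of `G`. -/
def ShareTri {V : Type*} (G : SimpleGraph V) (a b : Sym2 V) : Prop :=
  a ∈ G.edgeSet ∧ b ∈ G.edgeSet ∧
    ∃ t ∈ G.cliqueSet 3, (∀ v ∈ a, v ∈ t) ∧ ∀ v ∈ b, v ∈ t

/-- The triangle-distance from `e` to `f` in `G` is at most `γ`. -/
def triDistLE {V : Type*} (G : SimpleGraph V) : ℕ → Sym2 V → Sym2 V → Prop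
  | 0, e, f => e = f
  | (γ + 1), e, f => triDistLE G γ e f ∨ ∃ g, triDistLE G γ e g ∧ ShareTri G g f

/-- `S_γ(e)`: the subgraph of `G` consisting of the edges of `G` at triangle-distance at
most `γ` from `e`. -/
def triBall {V : Type*} (G : SimpleGraph V) (γ : ℕ) (e : Sym2 V) : SimpleGraph V :=
  SimpleGraph.fromEdgeSet {f | f ∈ G.edgeSet ∧ triDistLE G γ e f}

namespace ErdosRenyiAux

open SimpleGraph

variable {V : Type*} [DecidableEq V]

lemma sym2_cases (g : Sym2 V) : ∃ a b, g = s(a, b) := by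
  induction g using Sym2.ind with
  | _ a b => exact ⟨a, b, rfl⟩

lemma triDistLE_succ {G : SimpleGraph V} {k : ℕ} {e f : Sym2 V} (h : triDistLE G k e f) :
    triDistLE G (k + 1) e f := Or.inl h

lemma triDistLE_mono {G : SimpleGraph V} {j k : ℕ} (hjk : j ≤ k) {e f : Sym2 V}
    (h : triDistLE G j e f) : triDistLE G k e f := by
  induction k with
  | zero => rwa [Nat.le_zero.mp hjk] at h
  | succ k ih =>
    rcases Nat.lt_or_ge j (k + 1) with h' | h'
    · exact Or.inl (ih (Nat.lt_succ_iff.mp h'))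
    · rwa [le_antisymm hjk h'] at h

lemma triDistLE_refl {G : SimpleGraph V} (k : ℕ) (e : Sym2 V) : triDistLE G k e e :=
  triDistLE_mono (Nat.zero_le k) rfl

lemma triangle_structure {G : SimpleGraph V} {t : Finset V} (ht : t ∈ G.cliqueSet 3)
    {a b : V} (hab : a ≠ b) (ha : a ∈ t) (hb : b ∈ t) :
    ∃ w, w ≠ a ∧ w ≠ b ∧ t = {a, b, w} ∧ G.Adj a w ∧ G.Adj b w := by
  rw [SimpleGraph.mem_cliqueSet_iff] at ht
  obtain ⟨hclique, hcard⟩ := ht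
  have hsub : ({a, b} : Finset V) ⊆ t := by
    intro v hv; simp only [Finset.mem_insert, Finset.mem_singleton] at hv
    rcases hv with rfl | rfl <;> assumption
  have hcard2 : ({a, b} : Finset V).card = 2 := by
    rw [Finset.card_insert_of_notMem (by simpa using hab), Finset.card_singleton]
  have : (t \ {a, b}).card = 1 := by
    rw [Finset.card_sdiff_of_subset hsub, hcard, hcard2]
  obtain ⟨w, hw⟩ := Finset.card_eq_one.mp this
  have hwmem : w ∈ t \ ({a, b} : Finset V) := by rw [hw]; exact Finset.mem_singleton_self w
  rw [Finset.mem_sdiff] at hwmem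
  obtain ⟨hwt, hwab⟩ := hwmem
  simp only [Finset.mem_insert, Finset.mem_singleton, not_or] at hwab
  refine ⟨w, hwab.1, hwab.2, ?_, ?_, ?_⟩
  · apply Finset.eq_of_subset_of_card_le ?_ ?_ |>.symm
    · intro v hv
      simp only [Finset.mem_insert, Finset.mem_singleton] at hv
      rcases hv with rfl | rfl | rfl <;> assumption
    · rw [hcard]
      have : ({a, b, w} : Finset V).card = 3 := by
        rw [Finset.card_insert_of_notMem (by simp [hab, Ne.symm hwab.1]),
          Finset.card_insert_of_notMem (by simp [Ne.symm hwab.2]), Finset.card_singleton]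
      omega
  · exact hclique ha hwt (Ne.symm hwab.1)
  · exact hclique hb hwt (Ne.symm hwab.2)

/-- The invariant for a "chain" witness: a set `S` of vertices containing `x` and `y`,
together with a set `F` of edges of `G` inside `S`, all at triangle-distance at most `K`
from `s(x,y)`, with `|F| = 2|S| - 3`, and every vertex of `S` covered by `F`. -/
structure InvP (G : SimpleGraph V) (x y : V) (K : ℕ) (S : Finset V) (F : Finset (Sym2 V)) :
    Prop where
  hx : x ∈ S
  hy : y ∈ S
  hF : ∀ g ∈ F, g ∈ G.edgeSet ∧ (∀ v ∈ g, v ∈ S) ∧ triDistLE G K s(x, y) g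
  hcard : F.card = 2 * S.card - 3
  hcover : ∀ v ∈ S, ∃ g ∈ F, v ∈ g

lemma InvP.two_le_card {G : SimpleGraph V} {x y : V} {K : ℕ} {S : Finset V}
    {F : Finset (Sym2 V)} (hxy : x ≠ y) (h : InvP G x y K S F) : 2 ≤ S.card := by
  have : ({x, y} : Finset V) ⊆ S := by
    intro v hv; simp only [Finset.mem_insert, Finset.mem_singleton] at hv
    rcases hv with rfl | rfl
    exacts [h.hx, h.hy]
  calc 2 = ({x, y} : Finset V).card := by
        rw [Finset.card_insert_of_notMem (by simpa using hxy), Finset.card_singleton]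
    _ ≤ S.card := Finset.card_le_card this

lemma InvP.base {G : SimpleGraph V} {x y : V} (hxy : x ≠ y) (he : s(x, y) ∈ G.edgeSet)
    (K : ℕ) : InvP G x y K {x, y} {s(x, y)} where
  hx := by simp
  hy := by simp
  hF := by
    intro g hg
    rw [Finset.mem_singleton] at hg
    subst hg
    exact ⟨he, by intro v hv; rw [Sym2.mem_iff] at hv; simpa using hv, triDistLE_refl K _⟩
  hcard := by
    rw [Finset.card_singleton, Finset.card_insert_of_notMem (by simpa using hxy),
      Finset.card_singleton]
  hcover := by
    intro v hv
    simp only [Finset.mem_insert, Finset.mem_singleton] at hv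
    refine ⟨s(x, y), Finset.mem_singleton_self _, ?_⟩
    rw [Sym2.mem_iff]; exact hv

/-- The chain lemma: a triangle-path of length `k` starting at `s(x,y)` can be absorbed
into a chain witness, enlarging it by at most `k` vertices. -/
lemma chain_extend {G : SimpleGraph V} {x y : V} (hxy : x ≠ y) {K : ℕ} :
    ∀ k, k ≤ K → ∀ f, triDistLE G k s(x, y) f → ∀ S F, InvP G x y K S F →
      ∃ S' F', InvP G x y K S' F' ∧ S ⊆ S' ∧ (∀ v ∈ f, v ∈ S') ∧ S'.card ≤ S.card + k := by
  intro k
  induction k with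
  | zero =>
    intro _ f hf S F hInv
    refine ⟨S, F, hInv, le_refl _, ?_, by omega⟩
    rcases hf with rfl
    intro v hv
    rw [Sym2.mem_iff] at hv
    rcases hv with rfl | rfl
    exacts [hInv.hx, hInv.hy]
  | succ k ih =>
    intro hkK f hf S F hInv
    rcases hf with hf | ⟨g, hg, hshare⟩
    · obtain ⟨S', F', h1, h2, h3, h4⟩ := ih (le_of_lt hkK) f hf S F hInv
      exact ⟨S', F', h1, h2, h3, by omega⟩
    obtain ⟨S₁, F₁, hInv₁, hSS₁, hgS₁, hcard₁⟩ := ih (le_of_lt hkK) g hg S F hInv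
    obtain ⟨hgE, hfE, t, ht, hgt, hft⟩ := hshare
    by_cases hfin : ∀ v ∈ f, v ∈ S₁
    · exact ⟨S₁, F₁, hInv₁, hSS₁, hfin, by omega⟩
    push_neg at hfin
    obtain ⟨w, hwf, hwS₁⟩ := hfin
    obtain ⟨a, b, rfl⟩ := sym2_cases g
    have hab : a ≠ b := (G.mem_edgeSet.mp hgE).ne
    have haS₁ : a ∈ S₁ := hgS₁ a (by rw [Sym2.mem_iff]; left; rfl)
    have hbS₁ : b ∈ S₁ := hgS₁ b (by rw [Sym2.mem_iff]; right; rfl)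
    have hat : a ∈ t := hgt a (by rw [Sym2.mem_iff]; left; rfl)
    have hbt : b ∈ t := hgt b (by rw [Sym2.mem_iff]; right; rfl)
    obtain ⟨w', hw'a, hw'b, htw', haw', hbw'⟩ := triangle_structure ht hab hat hbt
    -- the vertex `w` of `f` outside `S₁` must be `w'`
    have hwt : w ∈ t := hft w hwf
    have hww' : w = w' := by
      rw [htw'] at hwt
      simp only [Finset.mem_insert, Finset.mem_singleton] at hwt
      rcases hwt with rfl | rfl | rfl
      · exact absurd haS₁ hwS₁
      · exact absurd hbS₁ hwS₁
      · rfl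
    subst hww'
    have hdista : triDistLE G (k + 1) s(x, y) s(a, w) :=
      Or.inr ⟨s(a, b), hg, hgE, haw'.symm.symm, t, ht, hgt, by
        intro v hv; rw [Sym2.mem_iff] at hv
        rcases hv with rfl | rfl
        · exact hat
        · rw [htw']; simp⟩
    have hdistb : triDistLE G (k + 1) s(x, y) s(b, w) :=
      Or.inr ⟨s(a, b), hg, hgE, hbw'.symm.symm, t, ht, hgt, by
        intro v hv; rw [Sym2.mem_iff] at hv
        rcases hv with rfl | rfl
        · exact hbt
        · rw [htw']; simp⟩
    have hawF₁ : s(a, w) ∉ F₁ := fun hmem =>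
      hwS₁ ((hInv₁.hF _ hmem).2.1 w (by rw [Sym2.mem_iff]; right; rfl))
    have hbwF₁ : s(b, w) ∉ F₁ := fun hmem =>
      hwS₁ ((hInv₁.hF _ hmem).2.1 w (by rw [Sym2.mem_iff]; right; rfl))
    have habw : s(a, w) ≠ s(b, w) := by
      intro heq
      rw [Sym2.eq_iff] at heq
      rcases heq with ⟨h, -⟩ | ⟨h, -⟩
      · exact hab h
      · exact hw'a h.symm
    refine ⟨insert w S₁, insert s(a, w) (insert s(b, w) F₁), ?_, ?_, ?_, ?_⟩
    · constructor
      · exact Finset.mem_insert_of_mem hInv₁.hx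
      · exact Finset.mem_insert_of_mem hInv₁.hy
      · intro g' hg'
        simp only [Finset.mem_insert] at hg'
        rcases hg' with rfl | rfl | hg'
        · refine ⟨G.mem_edgeSet.mpr haw', ?_, triDistLE_mono hkK hdista⟩
          intro v hv; rw [Sym2.mem_iff] at hv
          rcases hv with rfl | rfl
          · exact Finset.mem_insert_of_mem haS₁
          · exact Finset.mem_insert_self _ _
        · refine ⟨G.mem_edgeSet.mpr hbw', ?_, triDistLE_mono hkK hdistb⟩
          intro v hv; rw [Sym2.mem_iff] at hv
          rcases hv with rfl | rfl
          · exact Finset.mem_insert_of_mem hbS₁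
          · exact Finset.mem_insert_self _ _
        · obtain ⟨h1, h2, h3⟩ := hInv₁.hF _ hg'
          exact ⟨h1, fun v hv => Finset.mem_insert_of_mem (h2 v hv), h3⟩
      · have h2 : 2 ≤ S₁.card := hInv₁.two_le_card hxy
        rw [Finset.card_insert_of_notMem hwS₁,
          Finset.card_insert_of_notMem (by
            simp only [Finset.mem_insert]
            push_neg
            exact ⟨habw, hawF₁⟩),
          Finset.card_insert_of_notMem hbwF₁, hInv₁.hcard]
        omega
      · intro v hv
        rcases Finset.mem_insert.mp hv with rfl | hv
        · exact ⟨s(a, v), Finset.mem_insert_self _ _, by rw [Sym2.mem_iff]; right; rfl⟩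
        · obtain ⟨g', hg', hvg'⟩ := hInv₁.hcover v hv
          exact ⟨g', Finset.mem_insert_of_mem (Finset.mem_insert_of_mem hg'), hvg'⟩
    · exact fun v hv => Finset.mem_insert_of_mem (hSS₁ hv)
    · intro v hv
      have hvt : v ∈ t := hft v hv
      rw [htw'] at hvt
      simp only [Finset.mem_insert, Finset.mem_singleton] at hvt
      rcases hvt with rfl | rfl | rfl
      · exact Finset.mem_insert_of_mem haS₁
      · exact Finset.mem_insert_of_mem hbS₁
      · exact Finset.mem_insert_self _ _
    · rw [Finset.card_insert_of_notMem hwS₁]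
      omega

end ErdosRenyiAux
namespace ErdosRenyiAux

open SimpleGraph

variable {V : Type*} [DecidableEq V]

lemma mem_triBall_edgeSet {G : SimpleGraph V} {γ : ℕ} {e f : Sym2 V} :
    f ∈ (triBall G γ e).edgeSet ↔ f ∈ G.edgeSet ∧ triDistLE G γ e f := by
  rw [triBall, SimpleGraph.edgeSet_fromEdgeSet]
  constructor
  · rintro ⟨h, -⟩; exact h
  · intro h; exact ⟨h, G.not_isDiag_of_mem_edgeSet h.1⟩

lemma mem_triBall_support {G : SimpleGraph V} {γ : ℕ} {e : Sym2 V} {v : V} :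
    v ∈ (triBall G γ e).support ↔
      ∃ f, (f ∈ G.edgeSet ∧ triDistLE G γ e f) ∧ v ∈ f := by
  rw [SimpleGraph.mem_support]
  constructor
  · rintro ⟨w, hw⟩
    exact ⟨s(v, w), mem_triBall_edgeSet.mp ((triBall G γ e).mem_edgeSet.mpr hw),
      by rw [Sym2.mem_iff]; left; rfl⟩
  · rintro ⟨f, hf, hvf⟩
    obtain ⟨a, b, rfl⟩ := sym2_cases f
    have hadj : (triBall G γ e).Adj a b :=
      (triBall G γ e).mem_edgeSet.mp (mem_triBall_edgeSet.mpr hf)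
    rw [Sym2.mem_iff] at hvf
    rcases hvf with rfl | rfl
    · exact ⟨b, hadj⟩
    · exact ⟨a, hadj.symm⟩

/-- A small dense witness: a set `S` of at most `M` vertices containing `x` and `y`
holding at least `2|S| - 2` edges of `G`. -/
def BadW (G : SimpleGraph V) (x y : V) (M : ℕ) : Prop :=
  ∃ (S : Finset V) (F : Finset (Sym2 V)), x ∈ S ∧ y ∈ S ∧ S.card ≤ M ∧
    (∀ g ∈ F, g ∈ G.edgeSet ∧ ∀ v ∈ g, v ∈ S) ∧ 2 * S.card - 2 ≤ F.card

lemma BadW.mono {G : SimpleGraph V} {x y : V} {M M' : ℕ} (h : M ≤ M') (hb : BadW G x y M) :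
    BadW G x y M' := by
  obtain ⟨S, F, h1, h2, h3, h4, h5⟩ := hb
  exact ⟨S, F, h1, h2, le_trans h3 h, h4, h5⟩

/-- Growing a triangle-tree by a whole family of new triangles, one new vertex each. -/
lemma growMany {T : SimpleGraph V} (hT : IsTriTree T) (Cs : Finset V) (a b : V → V)
    (hadj : ∀ c ∈ Cs, T.Adj (a c) (b c)) (hnew : ∀ c ∈ Cs, c ∉ T.support) :
    IsTriTree (T ⊔ SimpleGraph.fromEdgeSet (⋃ c ∈ (Cs : Set V), {s(a c, c), s(b c, c)})) := by
  classical
  revert hadj hnew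
  induction Cs using Finset.induction_on with
  | empty => intro _ _; simpa using hT
  | @insert c Cs' hc ih =>
    intro hadj hnew
    have hrw : (⋃ c' ∈ ((insert c Cs' : Finset V) : Set V), {s(a c', c'), s(b c', c')})
        = ({s(a c, c), s(b c, c)} : Set (Sym2 V)) ∪
          (⋃ c' ∈ (Cs' : Set V), {s(a c', c'), s(b c', c')}) := by
      rw [Finset.coe_insert, Set.biUnion_insert]
    rw [hrw, SimpleGraph.fromEdgeSet_union, sup_comm (SimpleGraph.fromEdgeSet _) _,
      ← sup_assoc]
    -- goal : IsTriTree ((T ⊔ fromEdgeSet (⋃ Cs')) ⊔ fromEdgeSet {s(a c, c), s(b c, c)})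
    have hT' := ih (fun c' hc' => hadj c' (Finset.mem_insert_of_mem hc'))
      (fun c' hc' => hnew c' (Finset.mem_insert_of_mem hc'))
    have hsupp : ∀ v, v ∈ (T ⊔ SimpleGraph.fromEdgeSet
        (⋃ c' ∈ (Cs' : Set V), {s(a c', c'), s(b c', c')})).support →
        v ∈ T.support ∨ v ∈ Cs' := by
      intro v hv
      rw [SimpleGraph.mem_support] at hv
      obtain ⟨w, hw⟩ := hv
      rcases hw with hw | hw
      · exact Or.inl (SimpleGraph.mem_support _ |>.mpr ⟨w, hw⟩)
      · rw [SimpleGraph.fromEdgeSet_adj] at hw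
        obtain ⟨hmem, hvw⟩ := hw
        simp only [Set.mem_iUnion] at hmem
        obtain ⟨c', hc', hmem⟩ := hmem
        simp only [Set.mem_insert_iff, Set.mem_singleton_iff] at hmem
        have hac' : (a c') ∈ T.support :=
          SimpleGraph.mem_support _ |>.mpr ⟨b c', hadj c' (Finset.mem_insert_of_mem hc')⟩
        have hbc' : (b c') ∈ T.support :=
          SimpleGraph.mem_support _ |>.mpr ⟨a c', (hadj c' (Finset.mem_insert_of_mem hc')).symm⟩
        rcases hmem with hmem | hmem
        · have : v ∈ s(a c', c') := by rw [← hmem]; rw [Sym2.mem_iff]; left; rfl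
          rw [Sym2.mem_iff] at this
          rcases this with rfl | rfl
          · exact Or.inl hac'
          · exact Or.inr hc'
        · have : v ∈ s(b c', c') := by rw [← hmem]; rw [Sym2.mem_iff]; left; rfl
          rw [Sym2.mem_iff] at this
          rcases this with rfl | rfl
          · exact Or.inl hbc'
          · exact Or.inr hc'
    refine IsTriTree.grow _ (a c) (b c) c hT' ?_ ?_
    · exact Or.inl (hadj c (Finset.mem_insert_self _ _))
    · intro hc'
      rcases hsupp c hc' with h | h
      · exact hnew c (Finset.mem_insert_self _ _) h
      · exact hc h
end ErdosRenyiAux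
namespace ErdosRenyiAux

open SimpleGraph

variable {V : Type*} [DecidableEq V]

/-- `g` is a "base" for the vertex `c`: an edge at triangle-distance at most `γ` from
`s(x,y)` lying in a triangle containing `c`. -/
def BaseOf (G : SimpleGraph V) (x y : V) (γ : ℕ) (c : V) (g : Sym2 V) : Prop :=
  g ∈ G.edgeSet ∧ triDistLE G γ s(x, y) g ∧
    ∃ t ∈ G.cliqueSet 3, (∀ v ∈ g, v ∈ t) ∧ c ∈ t

def FailA (G : SimpleGraph V) (x y : V) (γ : ℕ) : Prop :=
  ∃ f, f ∈ G.edgeSet ∧ triDistLE G (γ + 1) s(x, y) f ∧ ¬ triDistLE G γ s(x, y) f ∧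
    ∀ v ∈ f, v ∈ (triBall G γ s(x, y)).support

def FailB (G : SimpleGraph V) (x y : V) (γ : ℕ) : Prop :=
  ∃ c, c ∉ (triBall G γ s(x, y)).support ∧
    ∃ g g', g ≠ g' ∧ BaseOf G x y γ c g ∧ BaseOf G x y γ c g'

lemma card_pair (hxy : x ≠ y) : ({x, y} : Finset V).card = 2 := by
  rw [Finset.card_insert_of_notMem (by simpa using hxy), Finset.card_singleton]

lemma baseOf_adj {G : SimpleGraph V} {x y : V} {γ : ℕ} {c : V} {g : Sym2 V}
    (hg : BaseOf G x y γ c g) (hc : c ∉ (triBall G γ s(x, y)).support) :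
    ∃ p q, g = s(p, q) ∧ G.Adj p q ∧ G.Adj p c ∧ G.Adj q c ∧
      triDistLE G γ s(x, y) s(p, q) ∧ p ∈ (triBall G γ s(x, y)).support ∧
      q ∈ (triBall G γ s(x, y)).support := by
  obtain ⟨hgE, hgd, t, ht, hgt, hct⟩ := hg
  obtain ⟨p, q, rfl⟩ := sym2_cases g
  have hpq : G.Adj p q := G.mem_edgeSet.mp hgE
  have hpt : p ∈ t := hgt p (by rw [Sym2.mem_iff]; left; rfl)
  have hqt : q ∈ t := hgt q (by rw [Sym2.mem_iff]; right; rfl)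
  have hps : p ∈ (triBall G γ s(x, y)).support :=
    mem_triBall_support.mpr ⟨s(p, q), ⟨hgE, hgd⟩, by rw [Sym2.mem_iff]; left; rfl⟩
  have hqs : q ∈ (triBall G γ s(x, y)).support :=
    mem_triBall_support.mpr ⟨s(p, q), ⟨hgE, hgd⟩, by rw [Sym2.mem_iff]; right; rfl⟩
  obtain ⟨w, hwp, hwq, htw, hpw, hqw⟩ := triangle_structure ht hpq.ne hpt hqt
  have hcw : c = w := by
    rw [htw] at hct
    simp only [Finset.mem_insert, Finset.mem_singleton] at hct
    rcases hct with rfl | rfl | rfl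
    · exact absurd hps hc
    · exact absurd hqs hc
    · rfl
  subst hcw
  exact ⟨p, q, rfl, hpq, hpw, hqw, hgd, hps, hqs⟩

lemma failA_bad {G : SimpleGraph V} {x y : V} (hxy : x ≠ y)
    (he : s(x, y) ∈ G.edgeSet) {γ : ℕ} (hA : FailA G x y γ) :
    BadW G x y (2 * (γ + 1) + 4) := by
  obtain ⟨f, hfE, hfd1, hfd0, hfs⟩ := hA
  obtain ⟨u, v, rfl⟩ := sym2_cases f
  obtain ⟨h1, ⟨h1E, h1d⟩, hu1⟩ :=
    mem_triBall_support.mp (hfs u (by rw [Sym2.mem_iff]; left; rfl))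
  obtain ⟨h2, ⟨h2E, h2d⟩, hv2⟩ :=
    mem_triBall_support.mp (hfs v (by rw [Sym2.mem_iff]; right; rfl))
  obtain ⟨S₁, F₁, hInv₁, -, hh1, hc1⟩ :=
    chain_extend hxy γ le_rfl h1 h1d {x, y} {s(x, y)} (InvP.base hxy he γ)
  obtain ⟨S₂, F₂, hInv₂, hS₁₂, hh2, hc2⟩ := chain_extend hxy γ le_rfl h2 h2d S₁ F₁ hInv₁
  have hfF₂ : s(u, v) ∉ F₂ := fun hmem => hfd0 (hInv₂.hF _ hmem).2.2
  refine ⟨S₂, insert s(u, v) F₂, hInv₂.hx, hInv₂.hy, ?_, ?_, ?_⟩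
  · have := card_pair hxy (x := x) (y := y)
    omega
  · intro g hg
    rcases Finset.mem_insert.mp hg with rfl | hg
    · refine ⟨hfE, ?_⟩
      intro w hw
      rw [Sym2.mem_iff] at hw
      rcases hw with rfl | rfl
      · exact hS₁₂ (hh1 w hu1)
      · exact hh2 w hv2
    · exact ⟨(hInv₂.hF _ hg).1, (hInv₂.hF _ hg).2.1⟩
  · rw [Finset.card_insert_of_notMem hfF₂, hInv₂.hcard]
    have := hInv₂.two_le_card hxy
    omega

lemma sym2_ne_pick {a b a' b' : V} (h : s(a, b) ≠ s(a', b')) (h' : a' ≠ b') :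
    (a' ≠ a ∧ a' ≠ b) ∨ (b' ≠ a ∧ b' ≠ b) := by
  rcases eq_or_ne a' a with rfl | ha
  · rcases eq_or_ne b' b with rfl | hb
    · exact absurd rfl h
    · right
      refine ⟨fun hba => h' hba.symm, hb⟩
  · rcases eq_or_ne a' b with rfl | hab'
    · rcases eq_or_ne b' a with rfl | hb
      · exact absurd (by rw [Sym2.eq_iff]; right; exact ⟨rfl, rfl⟩) h
      · right; exact ⟨hb, fun hbb => h' hbb.symm⟩
    · left; exact ⟨ha, hab'⟩

lemma failB_bad {G : SimpleGraph V} {x y : V} (hxy : x ≠ y)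
    (he : s(x, y) ∈ G.edgeSet) {γ : ℕ} (hB : FailB G x y γ) :
    BadW G x y (2 * (γ + 1) + 4) := by
  obtain ⟨c, hcs, g, g', hgg', hBg, hBg'⟩ := hB
  obtain ⟨p, q, rfl, hpq, hpc, hqc, hgd, -, -⟩ := baseOf_adj hBg hcs
  obtain ⟨p', q', rfl, hpq', hpc', hqc', hgd', -, -⟩ := baseOf_adj hBg' hcs
  obtain ⟨S₁, F₁, hInv₁, -, hh1, hc1⟩ :=
    chain_extend hxy γ le_rfl _ hgd {x, y} {s(x, y)} (InvP.base hxy he γ)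
  obtain ⟨S₂, F₂, hInv₂, hS₁₂, hh2, hc2⟩ := chain_extend hxy γ le_rfl _ hgd' S₁ F₁ hInv₁
  have hpS : p ∈ S₂ := hS₁₂ (hh1 p (by rw [Sym2.mem_iff]; left; rfl))
  have hqS : q ∈ S₂ := hS₁₂ (hh1 q (by rw [Sym2.mem_iff]; right; rfl))
  have hpS' : p' ∈ S₂ := hh2 p' (by rw [Sym2.mem_iff]; left; rfl)
  have hqS' : q' ∈ S₂ := hh2 q' (by rw [Sym2.mem_iff]; right; rfl)
  have hcS₂ : c ∉ S₂ := by
    intro hmem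
    obtain ⟨g₀, hg₀, hcg₀⟩ := hInv₂.hcover c hmem
    exact hcs (mem_triBall_support.mpr
      ⟨g₀, ⟨(hInv₂.hF _ hg₀).1, (hInv₂.hF _ hg₀).2.2⟩, hcg₀⟩)
  -- pick `z ∈ {p', q'}` outside `{p, q}`
  obtain ⟨z, hzc, hzS, hzp, hzq⟩ :
      ∃ z, G.Adj z c ∧ z ∈ S₂ ∧ z ≠ p ∧ z ≠ q := by
    rcases sym2_ne_pick hgg' hpq'.ne with ⟨h1, h2⟩ | ⟨h1, h2⟩
    · exact ⟨p', hpc', hpS', h1, h2⟩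
    · exact ⟨q', hqc', hqS', h1, h2⟩
  have hcp : c ≠ p := fun h => hcS₂ (h ▸ hpS)
  have hcq : c ≠ q := fun h => hcS₂ (h ▸ hqS)
  have hcz : c ≠ z := fun h => hcS₂ (h ▸ hzS)
  have hne1 : s(p, c) ≠ s(q, c) := by
    intro hh; rw [Sym2.eq_iff] at hh
    rcases hh with ⟨hh, -⟩ | ⟨-, hh⟩
    · exact hpq.ne hh
    · exact hcq hh
  have hne2 : s(z, c) ≠ s(p, c) := by
    intro hh; rw [Sym2.eq_iff] at hh
    rcases hh with ⟨hh, -⟩ | ⟨hh, -⟩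
    · exact hzp hh
    · exact hcz hh.symm
  have hne3 : s(z, c) ≠ s(q, c) := by
    intro hh; rw [Sym2.eq_iff] at hh
    rcases hh with ⟨hh, -⟩ | ⟨hh, -⟩
    · exact hzq hh
    · exact hcz hh.symm
  have hnotF : ∀ w, s(w, c) ∉ F₂ := fun w hmem =>
    hcS₂ ((hInv₂.hF _ hmem).2.1 c (by rw [Sym2.mem_iff]; right; rfl))
  refine ⟨insert c S₂, insert s(z, c) (insert s(p, c) (insert s(q, c) F₂)),
    Finset.mem_insert_of_mem hInv₂.hx, Finset.mem_insert_of_mem hInv₂.hy, ?_, ?_, ?_⟩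
  · rw [Finset.card_insert_of_notMem hcS₂]
    have := card_pair hxy (x := x) (y := y)
    omega
  · intro g₀ hg₀
    simp only [Finset.mem_insert] at hg₀
    have hins : ∀ w ∈ S₂, ∀ v₀ ∈ s(w, c), v₀ ∈ insert c S₂ := by
      intro w hw v₀ hv₀
      rw [Sym2.mem_iff] at hv₀
      rcases hv₀ with rfl | rfl
      · exact Finset.mem_insert_of_mem hw
      · exact Finset.mem_insert_self _ _
    rcases hg₀ with rfl | rfl | rfl | hg₀
    · exact ⟨G.mem_edgeSet.mpr hzc, hins z hzS⟩
    · exact ⟨G.mem_edgeSet.mpr hpc, hins p hpS⟩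
    · exact ⟨G.mem_edgeSet.mpr hqc, hins q hqS⟩
    · exact ⟨(hInv₂.hF _ hg₀).1, fun v₀ hv₀ =>
        Finset.mem_insert_of_mem ((hInv₂.hF _ hg₀).2.1 v₀ hv₀)⟩
  · have m1 : s(q, c) ∉ F₂ := hnotF q
    have m2 : s(p, c) ∉ insert s(q, c) F₂ := by
      intro hmem
      rcases Finset.mem_insert.mp hmem with h | h
      · exact hne1 h
      · exact hnotF p h
    have m3 : s(z, c) ∉ insert s(p, c) (insert s(q, c) F₂) := by
      intro hmem
      rcases Finset.mem_insert.mp hmem with h | hmem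
      · exact hne2 h
      rcases Finset.mem_insert.mp hmem with h | h
      · exact hne3 h
      · exact hnotF z h
    rw [Finset.card_insert_of_notMem m3, Finset.card_insert_of_notMem m2,
      Finset.card_insert_of_notMem m1, Finset.card_insert_of_notMem hcS₂, hInv₂.hcard]
    have := hInv₂.two_le_card hxy
    omega

end ErdosRenyiAux
namespace ErdosRenyiAux

open SimpleGraph

variable {V : Type*} [DecidableEq V]

lemma good_step [Fintype V] {G : SimpleGraph V} {x y : V} (hxy : x ≠ y)
    (he : s(x, y) ∈ G.edgeSet) {γ : ℕ} (hA : ¬ FailA G x y γ) (hB : ¬ FailB G x y γ)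
    (hT : IsTriTree (triBall G γ s(x, y))) : IsTriTree (triBall G (γ + 1) s(x, y)) := by
  classical
  set B := triBall G γ s(x, y) with hBdef
  set CsSet : Set V := {c | c ∈ (triBall G (γ + 1) s(x, y)).support ∧ c ∉ B.support}
    with hCsSet
  set Cs : Finset V := (Set.toFinite CsSet).toFinset with hCsdef
  have hCsmem : ∀ c, c ∈ Cs ↔ c ∈ (triBall G (γ + 1) s(x, y)).support ∧ c ∉ B.support := by
    intro c
    rw [hCsdef, Set.Finite.mem_toFinset]
    exact Iff.rfl
  -- choose a base edge for each new vertex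
  have hsel : ∀ c : V, ∃ ab : V × V, c ∈ Cs →
      G.Adj ab.1 ab.2 ∧ triDistLE G γ s(x, y) s(ab.1, ab.2) ∧
        G.Adj ab.1 c ∧ G.Adj ab.2 c := by
    intro c
    by_cases hc : c ∈ Cs
    · obtain ⟨hc1, hc2⟩ := (hCsmem c).mp hc
      obtain ⟨f, ⟨hfE, hfd⟩, hcf⟩ := mem_triBall_support.mp hc1
      have hfd0 : ¬ triDistLE G γ s(x, y) f := fun h =>
        hc2 (mem_triBall_support.mpr ⟨f, ⟨hfE, h⟩, hcf⟩)
      rcases hfd with h | ⟨g, hgd, hshare⟩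
      · exact absurd h hfd0
      obtain ⟨hgE, -, t, ht, hgt, hft⟩ := hshare
      have hBase : BaseOf G x y γ c g := ⟨hgE, hgd, t, ht, hgt, hft c hcf⟩
      obtain ⟨p, q, rfl, hadj, hpc, hqc, hd, -, -⟩ := baseOf_adj hBase hc2
      exact ⟨(p, q), fun _ => ⟨hadj, hd, hpc, hqc⟩⟩
    · exact ⟨(x, x), fun h => absurd h hc⟩
  choose ab hab using hsel
  set a : V → V := fun c => (ab c).1 with ha
  set b : V → V := fun c => (ab c).2 with hb
  have hchosenBase : ∀ c ∈ Cs, BaseOf G x y γ c s(a c, b c) := by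
    intro c hc
    obtain ⟨h1, h2, h3, h4⟩ := hab c hc
    refine ⟨G.mem_edgeSet.mpr h1, h2, {a c, b c, c}, ?_, ?_, by simp⟩
    · rw [SimpleGraph.mem_cliqueSet_iff]
      exact SimpleGraph.is3Clique_triple_iff.mpr ⟨h1, h3, h4⟩
    · intro v hv
      rw [Sym2.mem_iff] at hv
      rcases hv with rfl | rfl <;> simp
  have huniq : ∀ c ∈ Cs, ∀ g, BaseOf G x y γ c g → g = s(a c, b c) := by
    intro c hc g hg
    by_contra hne
    exact hB ⟨c, ((hCsmem c).mp hc).2, g, s(a c, b c), hne, hg, hchosenBase c hc⟩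
  -- the key identity
  have heq : triBall G (γ + 1) s(x, y) =
      B ⊔ SimpleGraph.fromEdgeSet (⋃ c ∈ (Cs : Set V), {s(a c, c), s(b c, c)}) := by
    ext u v
    rw [SimpleGraph.sup_adj]
    constructor
    · intro h
      obtain ⟨hEG, hd⟩ := mem_triBall_edgeSet.mp
        ((SimpleGraph.mem_edgeSet (triBall G (γ + 1) s(x, y))).mpr h)
      by_cases hdγ : triDistLE G γ s(x, y) s(u, v)
      · exact Or.inl ((SimpleGraph.mem_edgeSet _).mp (mem_triBall_edgeSet.mpr ⟨hEG, hdγ⟩))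
      right
      rw [SimpleGraph.fromEdgeSet_adj]
      refine ⟨?_, h.ne⟩
      have hone : u ∉ B.support ∨ v ∉ B.support := by
        by_contra hcon
        push_neg at hcon
        refine hA ⟨s(u, v), hEG, hd, hdγ, ?_⟩
        intro w hw
        rw [Sym2.mem_iff] at hw
        rcases hw with rfl | rfl
        · exact hcon.1
        · exact hcon.2
      have key : ∀ u' v', s(u', v') = s(u, v) → v' ∉ B.support →
          s(u, v) ∈ ⋃ c ∈ (Cs : Set V), ({s(a c, c), s(b c, c)} : Set (Sym2 V)) := by
        intro u' v' heq' hv'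
        have hd' : triDistLE G (γ + 1) s(x, y) s(u', v') := heq' ▸ hd
        have hdγ' : ¬ triDistLE G γ s(x, y) s(u', v') := heq' ▸ hdγ
        have hd'' := hd'
        rcases hd' with hcontra | ⟨g, hgd, hshare⟩
        · exact absurd hcontra hdγ'
        obtain ⟨hgE, hfE', t, ht, hgt, hft⟩ := hshare
        have hBase : BaseOf G x y γ v' g :=
          ⟨hgE, hgd, t, ht, hgt, hft v' (by rw [Sym2.mem_iff]; right; rfl)⟩
        have hv'Cs : v' ∈ Cs := by
          rw [hCsmem]
          refine ⟨?_, hv'⟩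
          exact mem_triBall_support.mpr ⟨s(u', v'), ⟨heq' ▸ hEG, hd''⟩,
            by rw [Sym2.mem_iff]; right; rfl⟩
        have hgab : g = s(a v', b v') := huniq v' hv'Cs g hBase
        obtain ⟨p, q, hgpq, hpq, hpc, hqc, -, hps, hqs⟩ := baseOf_adj hBase hv'
        -- u' ∈ t and u' is p or q
        have hu't : u' ∈ t := hft u' (by rw [Sym2.mem_iff]; left; rfl)
        have hpt : p ∈ t := hgt p (by rw [hgpq, Sym2.mem_iff]; left; rfl)
        have hqt : q ∈ t := hgt q (by rw [hgpq, Sym2.mem_iff]; right; rfl)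
        obtain ⟨w, hwp, hwq, htw, -, -⟩ := triangle_structure ht hpq.ne hpt hqt
        have hu'pq : u' = p ∨ u' = q := by
          rw [htw] at hu't
          simp only [Finset.mem_insert, Finset.mem_singleton] at hu't
          rcases hu't with h' | h' | h'
          · exact Or.inl h'
          · exact Or.inr h'
          · -- u' = w; then v' ∈ t too, and v' ∉ {p, q} (support), so v' = w = u'
            exfalso
            have hv't : v' ∈ t := hft v' (by rw [Sym2.mem_iff]; right; rfl)
            rw [htw] at hv't
            simp only [Finset.mem_insert, Finset.mem_singleton] at hv't
            have huv' : u' ≠ v' := by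
              have : G.Adj u' v' := G.mem_edgeSet.mp (heq' ▸ hEG)
              exact this.ne
            rcases hv't with h'' | h'' | h''
            · exact hv' (h'' ▸ hps)
            · exact hv' (h'' ▸ hqs)
            · exact huv' (h' ▸ h''.symm ▸ rfl)
        -- now s(u', v') ∈ {s(a v', v'), s(b v', v')}
        have hpab : p = a v' ∧ q = b v' ∨ p = b v' ∧ q = a v' := by
          have := hgpq.symm.trans hgab
          rw [Sym2.eq_iff] at this
          rcases this with ⟨h1, h2⟩ | ⟨h1, h2⟩
          · exact Or.inl ⟨h1, h2⟩
          · exact Or.inr ⟨h1, h2⟩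
        rw [Set.mem_iUnion]
        refine ⟨v', ?_⟩
        rw [Set.mem_iUnion]
        refine ⟨hv'Cs, ?_⟩
        simp only [Set.mem_insert_iff, Set.mem_singleton_iff]
        rw [← heq']
        rcases hu'pq with rfl | rfl
        · rcases hpab with ⟨h1, -⟩ | ⟨h1, -⟩
          · left; rw [h1]
          · right; rw [h1]
        · rcases hpab with ⟨-, h1⟩ | ⟨-, h1⟩
          · right; rw [h1]
          · left; rw [h1]
      rcases hone with hu | hv
      · have := key v u (Sym2.eq_swap) hu
        exact this
      · exact key u v rfl hv
    · intro h
      rcases h with h | h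
      · obtain ⟨hE, hdist⟩ := mem_triBall_edgeSet.mp ((SimpleGraph.mem_edgeSet _).mpr h)
        exact (SimpleGraph.mem_edgeSet _).mp
          (mem_triBall_edgeSet.mpr ⟨hE, triDistLE_succ hdist⟩)
      · rw [SimpleGraph.fromEdgeSet_adj] at h
        obtain ⟨hmem, hne⟩ := h
        rw [Set.mem_iUnion] at hmem
        obtain ⟨c, hmem⟩ := hmem
        rw [Set.mem_iUnion] at hmem
        obtain ⟨hc, hmem⟩ := hmem
        obtain ⟨h1, h2, h3, h4⟩ := hab c hc
        have hbase : triDistLE G γ s(x, y) s(a c, b c) := h2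
        have htc : ({a c, b c, c} : Finset V) ∈ G.cliqueSet 3 := by
          rw [SimpleGraph.mem_cliqueSet_iff]
          exact SimpleGraph.is3Clique_triple_iff.mpr ⟨h1, h3, h4⟩
        have hshare : ∀ w z, s(w, z) ∈ ({s(a c, c), s(b c, c)} : Set (Sym2 V)) →
            ShareTri G s(a c, b c) s(w, z) := by
          intro w z hwz
          simp only [Set.mem_insert_iff, Set.mem_singleton_iff] at hwz
          have hEwz : s(w, z) ∈ G.edgeSet := by
            rcases hwz with h' | h'
            · rw [h']; exact G.mem_edgeSet.mpr h3
            · rw [h']; exact G.mem_edgeSet.mpr h4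
          refine ⟨G.mem_edgeSet.mpr h1, hEwz, {a c, b c, c}, htc, ?_, ?_⟩
          · intro v₀ hv₀
            rw [Sym2.mem_iff] at hv₀
            rcases hv₀ with rfl | rfl <;> simp
          · intro v₀ hv₀
            rcases hwz with h' | h' <;> rw [h'] at hv₀ <;> rw [Sym2.mem_iff] at hv₀ <;>
              rcases hv₀ with rfl | rfl <;> simp
        simp only [Set.mem_insert_iff, Set.mem_singleton_iff] at hmem
        have hEuv : s(u, v) ∈ G.edgeSet := by
          rcases hmem with h' | h'
          · rw [h']; exact G.mem_edgeSet.mpr h3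
          · rw [h']; exact G.mem_edgeSet.mpr h4
        have hduv : triDistLE G (γ + 1) s(x, y) s(u, v) := by
          refine Or.inr ⟨s(a c, b c), hbase, ?_⟩
          rcases hmem with h' | h'
          · rw [h']; exact hshare _ _ (by simp)
          · rw [h']; exact hshare _ _ (by simp)
        exact (SimpleGraph.mem_edgeSet _).mp (mem_triBall_edgeSet.mpr ⟨hEuv, hduv⟩)
  rw [heq]
  apply growMany hT Cs a b
  · intro c hc
    obtain ⟨h1, h2, -, -⟩ := hab c hc
    exact (SimpleGraph.mem_edgeSet _).mp
      (mem_triBall_edgeSet.mpr ⟨G.mem_edgeSet.mpr h1, h2⟩)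
  · intro c hc
    exact ((hCsmem c).mp hc).2

lemma main_dichotomy [Fintype V] (G : SimpleGraph V) (x y : V) (hxy : x ≠ y)
    (he : s(x, y) ∈ G.edgeSet) (γ : ℕ) :
    IsTriTree (triBall G γ s(x, y)) ∨ BadW G x y (2 * γ + 4) := by
  classical
  induction γ with
  | zero =>
    left
    have hset : {f | f ∈ G.edgeSet ∧ triDistLE G 0 s(x, y) f} = {s(x, y)} := by
      ext f
      simp only [Set.mem_setOf_eq, Set.mem_singleton_iff]
      constructor
      · rintro ⟨-, h⟩
        exact h.symm
      · rintro rfl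
        exact ⟨he, rfl⟩
    have : triBall G 0 s(x, y) = SimpleGraph.fromEdgeSet {s(x, y)} := by
      rw [triBall, hset]
    rw [this]
    exact IsTriTree.single x y hxy
  | succ γ ih =>
    by_cases hA : FailA G x y γ
    · exact Or.inr (failA_bad hxy he hA)
    by_cases hB : FailB G x y γ
    · exact Or.inr (failB_bad hxy he hB)
    rcases ih with hT | hbad
    · exact Or.inl (good_step hxy he hA hB hT)
    · exact Or.inr (hbad.mono (by omega))

end ErdosRenyiAux
namespace ErdosRenyiAux

open MeasureTheory SimpleGraph

instance berBool.isFiniteMeasure (p : ℝ) : IsFiniteMeasure (berBool p) := by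
  constructor
  have huniv : berBool p Set.univ = ENNReal.ofReal p + ENNReal.ofReal (1 - p) := by
    simp [berBool, Measure.dirac_apply_of_mem (Set.mem_univ _)]
  rw [huniv]
  exact ENNReal.add_lt_top.mpr ⟨ENNReal.ofReal_lt_top, ENNReal.ofReal_lt_top⟩

lemma berBool_true (p : ℝ) : berBool p {true} = ENNReal.ofReal p := by
  simp [berBool, Measure.dirac_apply]

lemma berBool_univ (p : ℝ) (hp0 : 0 ≤ p) (hp1 : p ≤ 1) : berBool p Set.univ = 1 := by
  have huniv : berBool p Set.univ = ENNReal.ofReal p + ENNReal.ofReal (1 - p) := by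
    simp [berBool, Measure.dirac_apply_of_mem (Set.mem_univ _)]
  rw [huniv, ← ENNReal.ofReal_add hp0 (by linarith)]
  norm_num

/-- probability of a cylinder event -/
lemma cyl_measure (n : ℕ) (p : ℝ) (hp0 : 0 ≤ p) (hp1 : p ≤ 1)
    (F : Finset (Sym2 (Fin n))) :
    erMeasure n p {ω | ∀ e ∈ F, ω e = true} = ENNReal.ofReal p ^ F.card := by
  classical
  have hset : {ω : Sym2 (Fin n) → Bool | ∀ e ∈ F, ω e = true} =
      Set.pi Set.univ (fun e => if e ∈ F then ({true} : Set Bool) else Set.univ) := by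
    ext ω
    simp only [Set.mem_setOf_eq, Set.mem_pi, Set.mem_univ, forall_true_left]
    constructor
    · intro h e
      by_cases he : e ∈ F
      · simp [he, h e he]
      · simp [he]
    · intro h e he
      have := h e
      rw [if_pos he] at this
      simpa using this
  rw [hset, erMeasure, MeasureTheory.Measure.pi_pi]
  have hfac : ∀ e : Sym2 (Fin n),
      berBool p (if e ∈ F then ({true} : Set Bool) else Set.univ) =
        if e ∈ F then ENNReal.ofReal p else 1 := by
    intro e
    by_cases he : e ∈ F
    · rw [if_pos he, if_pos he, berBool_true]
    · rw [if_neg he, if_neg he, berBool_univ p hp0 hp1]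
  calc (∏ e : Sym2 (Fin n), berBool p (if e ∈ F then ({true} : Set Bool) else Set.univ))
      = ∏ e : Sym2 (Fin n), (if e ∈ F then ENNReal.ofReal p else 1) := by
        exact Finset.prod_congr rfl fun e _ => hfac e
    _ = ∏ e ∈ F, ENNReal.ofReal p := by
        rw [Finset.prod_ite_mem, Finset.univ_inter]
    _ = ENNReal.ofReal p ^ F.card := Finset.prod_const _

end ErdosRenyiAux
namespace ErdosRenyiAux

open MeasureTheory SimpleGraph

open Classical in
/-- The collection of witness pairs `(S, F)`. -/
noncomputable def Wits (n M : ℕ) (x y : Fin n) :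
    Finset (Finset (Fin n) × Finset (Sym2 (Fin n))) :=
  Finset.univ.filter (fun P => x ∈ P.1 ∧ y ∈ P.1 ∧ P.1.card ≤ M ∧
    P.2.card = 2 * P.1.card - 2 ∧ ∀ g ∈ P.2, ∀ v ∈ g, v ∈ P.1)

lemma mem_Wits {n M : ℕ} {x y : Fin n} {P : Finset (Fin n) × Finset (Sym2 (Fin n))} :
    P ∈ Wits n M x y ↔ x ∈ P.1 ∧ y ∈ P.1 ∧ P.1.card ≤ M ∧
      P.2.card = 2 * P.1.card - 2 ∧ ∀ g ∈ P.2, ∀ v ∈ g, v ∈ P.1 := by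
  rw [Wits, Finset.mem_filter]
  simp only [Finset.mem_univ, true_and]

lemma event_subset (n M : ℕ) (x y : Fin n) (hxy : x ≠ y) (γ : ℕ) (hM : 2 * γ + 4 ≤ M) :
    {ω : Sym2 (Fin n) → Bool | s(x, y) ∈ (erGraph n ω).edgeSet ∧
        ¬ IsTriTree (triBall (erGraph n ω) γ s(x, y))}
      ⊆ ⋃ P ∈ (Wits n M x y : Set (Finset (Fin n) × Finset (Sym2 (Fin n)))),
          {ω | ∀ e ∈ P.2, ω e = true} := by
  intro ω hω
  obtain ⟨he, hnt⟩ := hω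
  rcases main_dichotomy (erGraph n ω) x y hxy he γ with h | h
  · exact absurd h hnt
  obtain ⟨S, F, hxS, hyS, hScard, hF, hFcard⟩ := h.mono hM
  obtain ⟨F', hF'sub, hF'card⟩ := Finset.exists_subset_card_eq hFcard
  rw [Set.mem_iUnion]
  refine ⟨(S, F'), ?_⟩
  rw [Set.mem_iUnion]
  refine ⟨?_, ?_⟩
  · rw [Finset.mem_coe, mem_Wits]
    exact ⟨hxS, hyS, hScard, hF'card, fun g hg => (hF g (hF'sub hg)).2⟩
  · intro e heF
    have heE := (hF e (hF'sub heF)).1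
    obtain ⟨u, v, rfl⟩ := sym2_cases e
    exact ((erGraph n ω).mem_edgeSet.mp heE).2

lemma wits_fiber_card (n M : ℕ) (x y : Fin n) (hxy : x ≠ y) (v : ℕ) (hv : 2 ≤ v) :
    ((Wits n M x y).filter (fun P => P.1.card = v)).card ≤
      n ^ (v - 2) * (v * v) ^ (2 * v - 2) := by
  classical
  set SetsV : Finset (Finset (Fin n)) :=
    (Finset.univ.powersetCard v).filter (fun S => x ∈ S ∧ y ∈ S) with hSetsV
  have hsub : (Wits n M x y).filter (fun P => P.1.card = v) ⊆
      SetsV.biUnion (fun S => {S} ×ˢ Finset.powersetCard (2 * v - 2) S.sym2) := by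
    intro P hP
    rw [Finset.mem_filter, mem_Wits] at hP
    obtain ⟨⟨hxS, hyS, hcard, hFc, hFS⟩, hcv⟩ := hP
    rw [Finset.mem_biUnion]
    refine ⟨P.1, ?_, ?_⟩
    · rw [hSetsV, Finset.mem_filter, Finset.mem_powersetCard]
      exact ⟨⟨Finset.subset_univ _, hcv⟩, hxS, hyS⟩
    · rw [Finset.mem_product]
      refine ⟨Finset.mem_singleton_self _, ?_⟩
      rw [Finset.mem_powersetCard]
      refine ⟨?_, by rw [hFc, hcv]⟩
      intro g hg
      rw [Finset.mem_sym2_iff]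
      exact fun a ha => hFS g hg a ha
  refine le_trans (Finset.card_le_card hsub) (le_trans Finset.card_biUnion_le ?_)
  have hbound : ∀ S ∈ SetsV, ({S} ×ˢ Finset.powersetCard (2 * v - 2) S.sym2).card ≤
      (v * v) ^ (2 * v - 2) := by
    intro S hS
    rw [Finset.card_product, Finset.card_singleton, one_mul, Finset.card_powersetCard]
    have hScard : S.card = v := by
      rw [hSetsV, Finset.mem_filter, Finset.mem_powersetCard] at hS
      exact hS.1.2
    have hsym2 : S.sym2.card ≤ v * v := by
      rw [Finset.card_sym2, hScard, Nat.choose_two_right, Nat.add_sub_cancel]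
      exact Nat.div_le_of_le_mul (by nlinarith)
    exact le_trans (Nat.choose_le_pow _ _) (Nat.pow_le_pow_left hsym2 _)
  refine le_trans (Finset.sum_le_sum hbound) ?_
  rw [Finset.sum_const, smul_eq_mul]
  have hc : SetsV.card ≤ n ^ (v - 2) := by
    have hinj : SetsV.card ≤
        ((Finset.univ : Finset (Fin n)).powersetCard (v - 2)).card := by
      apply Finset.card_le_card_of_injOn (fun S => (S.erase x).erase y)
      · intro S hS
        rw [Finset.mem_coe, hSetsV, Finset.mem_filter, Finset.mem_powersetCard] at hS
        obtain ⟨⟨-, hcv⟩, hxS, hyS⟩ := hS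
        rw [Finset.mem_coe, Finset.mem_powersetCard]
        refine ⟨Finset.subset_univ _, ?_⟩
        rw [Finset.card_erase_of_mem (by rw [Finset.mem_erase]; exact ⟨hxy.symm, hyS⟩),
          Finset.card_erase_of_mem hxS]
        omega
      · intro S hS S' hS' hEq
        simp only [hSetsV, Finset.coe_filter, Set.mem_setOf_eq,
          Finset.mem_powersetCard] at hS hS'
        have hrec : ∀ (T : Finset (Fin n)), x ∈ T → y ∈ T →
            insert x (insert y ((T.erase x).erase y)) = T := by
          intro T hxT hyT
          rw [Finset.insert_erase (by rw [Finset.mem_erase]; exact ⟨hxy.symm, hyT⟩),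
            Finset.insert_erase hxT]
        have hEq' : (S.erase x).erase y = (S'.erase x).erase y := hEq
        calc S = insert x (insert y ((S.erase x).erase y)) := (hrec S hS.2.1 hS.2.2).symm
          _ = insert x (insert y ((S'.erase x).erase y)) := by rw [hEq']
          _ = S' := hrec S' hS'.2.1 hS'.2.2
    rw [Finset.card_powersetCard, Finset.card_univ, Fintype.card_fin] at hinj
    exact le_trans hinj (Nat.choose_le_pow _ _)
  exact Nat.mul_le_mul_right _ hc

lemma measure_event_le (n : ℕ) (p : ℝ) (hp0 : 0 ≤ p) (hp1 : p ≤ 1) (x y : Fin n)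
    (hxy : x ≠ y) (γ : ℕ) :
    erMeasure n p {ω | s(x, y) ∈ (erGraph n ω).edgeSet ∧
        ¬ IsTriTree (triBall (erGraph n ω) γ s(x, y))}
      ≤ ∑ v ∈ Finset.Icc 2 (2 * γ + 4),
          ((n ^ (v - 2) * (v * v) ^ (2 * v - 2) : ℕ) : ENNReal) *
            ENNReal.ofReal p ^ (2 * v - 2) := by
  classical
  set M := 2 * γ + 4 with hM
  calc erMeasure n p {ω | s(x, y) ∈ (erGraph n ω).edgeSet ∧
        ¬ IsTriTree (triBall (erGraph n ω) γ s(x, y))}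
      ≤ erMeasure n p (⋃ P ∈ (Wits n M x y :
          Set (Finset (Fin n) × Finset (Sym2 (Fin n)))), {ω | ∀ e ∈ P.2, ω e = true}) :=
        measure_mono (event_subset n M x y hxy γ le_rfl)
    _ ≤ ∑ P ∈ Wits n M x y, erMeasure n p {ω | ∀ e ∈ P.2, ω e = true} :=
        measure_biUnion_finset_le _ _
    _ = ∑ P ∈ Wits n M x y, ENNReal.ofReal p ^ P.2.card :=
        Finset.sum_congr rfl fun P _ => cyl_measure n p hp0 hp1 P.2
    _ = ∑ v ∈ Finset.Icc 2 M, ∑ P ∈ (Wits n M x y).filter (fun P => P.1.card = v),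
          ENNReal.ofReal p ^ P.2.card := by
        refine (Finset.sum_fiberwise_of_maps_to ?_ _).symm
        intro P hP
        rw [mem_Wits] at hP
        rw [Finset.mem_Icc]
        refine ⟨?_, hP.2.2.1⟩
        have hsub : ({x, y} : Finset (Fin n)) ⊆ P.1 := by
          intro w hw
          simp only [Finset.mem_insert, Finset.mem_singleton] at hw
          rcases hw with rfl | rfl
          exacts [hP.1, hP.2.1]
        calc 2 = ({x, y} : Finset (Fin n)).card := (card_pair hxy).symm
          _ ≤ P.1.card := Finset.card_le_card hsub
    _ ≤ ∑ v ∈ Finset.Icc 2 M,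
          ((n ^ (v - 2) * (v * v) ^ (2 * v - 2) : ℕ) : ENNReal) *
            ENNReal.ofReal p ^ (2 * v - 2) := by
        refine Finset.sum_le_sum ?_
        intro v hv
        rw [Finset.mem_Icc] at hv
        have hterm : ∀ P ∈ (Wits n M x y).filter (fun P => P.1.card = v),
            ENNReal.ofReal p ^ P.2.card = ENNReal.ofReal p ^ (2 * v - 2) := by
          intro P hP
          rw [Finset.mem_filter, mem_Wits] at hP
          rw [hP.1.2.2.2.1, hP.2]
        rw [Finset.sum_congr rfl hterm, Finset.sum_const, nsmul_eq_mul]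
        exact mul_le_mul_left (Nat.cast_le.mpr (wits_fiber_card n M x y hxy v hv.1)) _

end ErdosRenyiAux
namespace ErdosRenyiAux

lemma term_bound {n v M : ℕ} {d : ℝ} (hd : 0 < d) (hn : 4 ≤ n) (hv2 : 2 ≤ v) (hvM : v ≤ M) :
    ((n ^ (v - 2) * (v * v) ^ (2 * v - 2) : ℕ) : ℝ) *
        Real.sqrt (d / ((n : ℝ) - 2)) ^ (2 * v - 2)
      ≤ ((M : ℝ) * M) ^ (2 * M) * ((2 * d + 1) ^ M / n) := by
  obtain ⟨k, rfl⟩ : ∃ k, v = k + 2 := ⟨v - 2, by omega⟩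
  have hN4 : (4 : ℝ) ≤ (n : ℝ) := by exact_mod_cast hn
  have hN2 : (2 : ℝ) ≤ (n : ℝ) - 2 := by linarith
  have hNpos : (0 : ℝ) < n := by linarith
  have harg : 0 ≤ d / ((n : ℝ) - 2) := div_nonneg hd.le (by linarith)
  have hsq : Real.sqrt (d / ((n : ℝ) - 2)) ^ 2 = d / ((n : ℝ) - 2) := Real.sq_sqrt harg
  have e1 : k + 2 - 2 = k := by omega
  have e2 : 2 * (k + 2) - 2 = 2 * (k + 1) := by omega
  rw [e1, e2]
  push_cast
  rw [pow_mul (Real.sqrt (d / ((n : ℝ) - 2))) 2 (k + 1), hsq]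
  have hkM : ((k : ℝ) + 2) ≤ (M : ℝ) := by exact_mod_cast hvM
  have hMnn : (0 : ℝ) ≤ (M : ℝ) := Nat.cast_nonneg M
  have hb1 : (((k : ℝ) + 2) * ((k : ℝ) + 2)) ^ (2 * (k + 1)) ≤ ((M : ℝ) * M) ^ (2 * M) := by
    have b1 : ((k : ℝ) + 2) * ((k : ℝ) + 2) ≤ (M : ℝ) * M :=
      mul_le_mul hkM hkM (by positivity) hMnn
    refine le_trans (pow_le_pow_left₀ (by positivity) b1 _) ?_
    refine pow_le_pow_right₀ ?_ (by omega)
    nlinarith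
  have hb2 : (n : ℝ) ^ k * (d / ((n : ℝ) - 2)) ^ (k + 1) ≤ (2 * d + 1) ^ M / n := by
    have hkey : (n : ℝ) ^ k * (d / ((n : ℝ) - 2)) ^ (k + 1)
        = ((n : ℝ) * (d / ((n : ℝ) - 2))) ^ (k + 1) / n := by
      rw [mul_pow, pow_succ]
      field_simp
      ring
    rw [hkey]
    have hbase : (n : ℝ) * (d / ((n : ℝ) - 2)) ≤ 2 * d := by
      rw [mul_div_assoc']
      rw [div_le_iff₀ (by linarith : (0 : ℝ) < (n : ℝ) - 2)]
      nlinarith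
    calc ((n : ℝ) * (d / ((n : ℝ) - 2))) ^ (k + 1) / n ≤ (2 * d) ^ (k + 1) / n := by
          have := pow_le_pow_left₀ (by positivity) hbase (k + 1)
          exact div_le_div_of_nonneg_right this hNpos.le
      _ ≤ (2 * d + 1) ^ M / n := by
          have h1 : (2 * d) ^ (k + 1) ≤ (2 * d + 1) ^ (k + 1) :=
            pow_le_pow_left₀ (by linarith) (by linarith) _
          have h2 : (2 * d + 1) ^ (k + 1) ≤ (2 * d + 1) ^ M :=
            pow_le_pow_right₀ (by linarith) (by omega)
          exact div_le_div_of_nonneg_right (le_trans h1 h2) hNpos.le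
  calc (n : ℝ) ^ k * (((k : ℝ) + 2) * ((k : ℝ) + 2)) ^ (2 * (k + 1)) *
        (d / ((n : ℝ) - 2)) ^ (k + 1)
      = (((k : ℝ) + 2) * ((k : ℝ) + 2)) ^ (2 * (k + 1)) *
          ((n : ℝ) ^ k * (d / ((n : ℝ) - 2)) ^ (k + 1)) := by ring
    _ ≤ ((M : ℝ) * M) ^ (2 * M) * ((2 * d + 1) ^ M / n) :=
        mul_le_mul hb1 hb2 (by positivity) (by positivity)

end ErdosRenyiAux
namespace ErdosRenyiAux

open Filter

lemma asymp (d : ℝ) (hd : 0 < d) (γ : ℕ → ℕ) (hγpos : ∀ n, 0 < γ n)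
    (hγ : Tendsto (fun n : ℕ => (γ n : ℝ) * Real.log (Real.log n) / Real.log n)
      atTop (nhds 0)) (ε : ℝ) (hε : 0 < ε) :
    ∀ᶠ n : ℕ in atTop,
      (((2 * γ n + 4 : ℕ) : ℝ) + 1) *
          (((2 * γ n + 4 : ℕ) : ℝ) * ((2 * γ n + 4 : ℕ) : ℝ)) ^ (2 * (2 * γ n + 4)) *
          (2 * d + 1) ^ (2 * γ n + 4)
        ≤ (n : ℝ) ^ ε := by
  set C : ℝ := max (2 * d + 1) 3 with hC
  have hC3 : (3 : ℝ) ≤ C := le_max_right _ _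
  have hC2d : 2 * d + 1 ≤ C := le_max_left _ _
  have hC0 : (0 : ℝ) < C := by linarith
  have hlog : Tendsto (fun n : ℕ => Real.log n) atTop atTop :=
    Real.tendsto_log_atTop.comp tendsto_natCast_atTop_atTop
  have hloglog : Tendsto (fun n : ℕ => Real.log (Real.log n)) atTop atTop :=
    Real.tendsto_log_atTop.comp hlog
  have hmin : (0 : ℝ) < min 1 (ε / 72) := by
    apply lt_min one_pos
    positivity
  filter_upwards [hlog.eventually_gt_atTop 0, hloglog.eventually_ge_atTop 1,
    hloglog.eventually_ge_atTop (Real.log (6 * C)),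
    hγ.eventually_lt_const hmin, eventually_ge_atTop 1] with n hlogpos hll1 hllC hq hn1
  set l : ℝ := Real.log n
  set ll : ℝ := Real.log (Real.log n)
  have hnpos : (0 : ℝ) < (n : ℝ) := by
    have : (1 : ℝ) ≤ (n : ℝ) := by exact_mod_cast hn1
    linarith
  have hγ1 : (1 : ℝ) ≤ (γ n : ℝ) := by exact_mod_cast hγpos n
  obtain ⟨M, hM⟩ : ∃ M : ℕ, 2 * γ n + 4 = M := ⟨_, rfl⟩
  rw [hM]
  have hMr : ((M : ℕ) : ℝ) = 2 * (γ n : ℝ) + 4 := by rw [← hM]; push_cast; ring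
  have hM6 : (6 : ℝ) ≤ ((M : ℕ) : ℝ) := by rw [hMr]; linarith
  have hM1 : (1 : ℕ) ≤ M := by omega
  have h3M : 3 * ((M : ℕ) : ℝ) ≤ C * M := mul_le_mul_of_nonneg_right hC3 (by linarith)
  have hCM18 : (18 : ℝ) ≤ C * M := by nlinarith
  have hCM1 : (1 : ℝ) ≤ C * M := by linarith
  have hCM0 : (0 : ℝ) < C * M := by linarith
  have hMCM : ((M : ℕ) : ℝ) ≤ C * M := by linarith
  have hCCM : C ≤ C * M := by
    have := mul_le_mul_of_nonneg_left hM6 hC0.le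
    nlinarith
  -- step 1 : LHS ≤ (C*M)^(6*M)
  have step1 : (((M : ℕ) : ℝ) + 1) * (((M : ℕ) : ℝ) * ((M : ℕ) : ℝ)) ^ (2 * M) *
      (2 * d + 1) ^ M ≤ (C * M) ^ (6 * M) := by
    have f1 : ((M : ℕ) : ℝ) + 1 ≤ C * M := by linarith
    have f2 : (((M : ℕ) : ℝ) * ((M : ℕ) : ℝ)) ^ (2 * M) ≤ (C * M) ^ (4 * M) := by
      have hb : ((M : ℕ) : ℝ) * ((M : ℕ) : ℝ) ≤ (C * M) ^ 2 := by
        rw [pow_two]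
        exact mul_le_mul hMCM hMCM (by linarith) (by linarith)
      refine le_trans (pow_le_pow_left₀ (by positivity) hb _) ?_
      rw [← pow_mul]
      exact pow_le_pow_right₀ hCM1 (by omega)
    have f3 : (2 * d + 1) ^ M ≤ (C * M) ^ M :=
      pow_le_pow_left₀ (by linarith) (by linarith) _
    calc (((M : ℕ) : ℝ) + 1) * (((M : ℕ) : ℝ) * ((M : ℕ) : ℝ)) ^ (2 * M) *
          (2 * d + 1) ^ M
        ≤ (C * M) * (C * M) ^ (4 * M) * (C * M) ^ M := by
          refine mul_le_mul (mul_le_mul f1 f2 (by positivity) (by linarith)) f3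
            (by positivity) (by positivity)
      _ = (C * M) ^ (1 + 4 * M + M) := by rw [pow_add, pow_add, pow_one]
      _ ≤ (C * M) ^ (6 * M) := pow_le_pow_right₀ hCM1 (by omega)
  -- step 2 : (C*M)^(6*M) ≤ n^ε
  have step2 : (C * ((M : ℕ) : ℝ)) ^ (6 * M) ≤ (n : ℝ) ^ ε := by
    have hlogx0 : 0 ≤ Real.log (C * M) := Real.log_nonneg hCM1
    have hγ0 : (0 : ℝ) < (γ n : ℝ) := by linarith
    have hCγ : C * 1 ≤ C * (γ n : ℝ) := mul_le_mul_of_nonneg_left hγ1 hC0.le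
    have hlogx : Real.log (C * M) ≤ Real.log (6 * C) + Real.log (γ n : ℝ) := by
      have hle : C * ((M : ℕ) : ℝ) ≤ (6 * C) * (γ n : ℝ) := by
        rw [hMr]
        have h2 : C * (2 * (γ n : ℝ) + 4) = 2 * (C * (γ n : ℝ)) + 4 * C := by ring
        have h3 : (6 * C) * (γ n : ℝ) = 6 * (C * (γ n : ℝ)) := by ring
        rw [h2, h3]
        linarith
      calc Real.log (C * ((M : ℕ) : ℝ)) ≤ Real.log ((6 * C) * (γ n : ℝ)) :=
            Real.log_le_log hCM0 hle
        _ = Real.log (6 * C) + Real.log (γ n : ℝ) :=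
            Real.log_mul (by positivity) (by positivity)
    have hql : (γ n : ℝ) * ll ≤ min 1 (ε / 72) * l := by
      rw [div_lt_iff₀ hlogpos] at hq
      exact hq.le
    have hγl : (γ n : ℝ) ≤ l := by
      have h1 : (γ n : ℝ) * 1 ≤ (γ n : ℝ) * ll :=
        mul_le_mul_of_nonneg_left hll1 (by linarith)
      have h2 : min 1 (ε / 72) * l ≤ 1 * l :=
        mul_le_mul_of_nonneg_right (min_le_left _ _) hlogpos.le
      have h3 : (γ n : ℝ) * 1 = (γ n : ℝ) := mul_one _
      have h4 : (1 : ℝ) * l = l := one_mul _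
      linarith
    have hlogγ : Real.log (γ n : ℝ) ≤ ll := Real.log_le_log hγ0 hγl
    have hqe : (γ n : ℝ) * ll ≤ ε / 72 * l := by
      have h2 : min 1 (ε / 72) * l ≤ ε / 72 * l :=
        mul_le_mul_of_nonneg_right (min_le_right _ _) hlogpos.le
      linarith
    have hkey : ((6 * M : ℕ) : ℝ) * Real.log (C * M) ≤ Real.log (n : ℝ) * ε := by
      have hcast : ((6 * M : ℕ) : ℝ) = 6 * ((M : ℕ) : ℝ) := by push_cast; ring
      rw [hcast]
      have s0 : 6 * ((M : ℕ) : ℝ) ≤ 36 * (γ n : ℝ) := by rw [hMr]; linarith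
      have s1 : 6 * ((M : ℕ) : ℝ) * Real.log (C * M) ≤
          36 * (γ n : ℝ) * Real.log (C * M) :=
        mul_le_mul_of_nonneg_right s0 hlogx0
      have s2 : 36 * (γ n : ℝ) * Real.log (C * M) ≤ 36 * (γ n : ℝ) * (ll + ll) := by
        refine mul_le_mul_of_nonneg_left ?_ (by positivity)
        linarith
      have s3 : 36 * (γ n : ℝ) * (ll + ll) = 72 * ((γ n : ℝ) * ll) := by ring
      have s4 : 72 * ((γ n : ℝ) * ll) ≤ ε * l := by
        have : 72 * ((γ n : ℝ) * ll) ≤ 72 * (ε / 72 * l) :=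
          mul_le_mul_of_nonneg_left hqe (by norm_num)
        have h5 : 72 * (ε / 72 * l) = ε * l := by ring
        linarith
      calc 6 * ((M : ℕ) : ℝ) * Real.log (C * M)
          ≤ 36 * (γ n : ℝ) * Real.log (C * M) := s1
        _ ≤ 36 * (γ n : ℝ) * (ll + ll) := s2
        _ = 72 * ((γ n : ℝ) * ll) := s3
        _ ≤ ε * l := s4
        _ = Real.log (n : ℝ) * ε := by rw [mul_comm]
    have hpow : (C * ((M : ℕ) : ℝ)) ^ (6 * M) =
        Real.exp (((6 * M : ℕ) : ℝ) * Real.log (C * M)) := by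
      rw [← Real.log_pow, Real.exp_log (by positivity)]
    rw [hpow, Real.rpow_def_of_pos hnpos]
    exact Real.exp_le_exp.mpr hkey
  exact le_trans step1 step2

end ErdosRenyiAux
/-- Fix `d > 0`, `p(n) = (d/(n-2))^{1/2}` and `γ(n)` with `γ(n) log log n / log n → 0`.
Then for distinct vertices `x, y` and every `ε > 0`, for all large `n` the probability that
`xy` is an edge of `G_{n,p(n)}` and `S_{γ(n)}(xy)` is not a triangle-tree is at most
`n^{-1+ε}`. -/
theorem ball_is_tree_whp (d : ℝ) (hd : 0 < d) (γ : ℕ → ℕ) (hγpos : ∀ n, 0 < γ n)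
    (hγ : Tendsto (fun n : ℕ => (γ n : ℝ) * Real.log (Real.log n) / Real.log n)
      atTop (nhds 0))
    (x y : ℕ) (hxy : x ≠ y) (ε : ℝ) (hε : 0 < ε) :
    ∀ᶠ n : ℕ in atTop, ∀ (hx : x < n) (hy : y < n),
      erMeasure n (Real.sqrt (d / ((n : ℝ) - 2)))
          {ω | s((⟨x, hx⟩ : Fin n), (⟨y, hy⟩ : Fin n)) ∈ (erGraph n ω).edgeSet ∧
            ¬ IsTriTree
                (triBall (erGraph n ω) (γ n) s((⟨x, hx⟩ : Fin n), (⟨y, hy⟩ : Fin n)))}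
        ≤ ENNReal.ofReal ((n : ℝ) ^ (-1 + ε)) := by
  classical
  have hdn : ∀ᶠ n : ℕ in atTop, d ≤ (n : ℝ) - 2 := by
    filter_upwards [(tendsto_natCast_atTop_atTop (R := ℝ)).eventually_ge_atTop (d + 2)]
      with n hn
    linarith
  filter_upwards [hdn, ErdosRenyiAux.asymp d hd γ hγpos hγ ε hε, eventually_ge_atTop 4]
    with n hdn2 hasymp hn4
  intro hx hy
  have hN4 : (4 : ℝ) ≤ (n : ℝ) := by exact_mod_cast hn4
  have hnR : (0 : ℝ) < (n : ℝ) := by linarith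
  have hp0 : 0 ≤ Real.sqrt (d / ((n : ℝ) - 2)) := Real.sqrt_nonneg _
  have hp1 : Real.sqrt (d / ((n : ℝ) - 2)) ≤ 1 := by
    rw [Real.sqrt_le_one]
    rw [div_le_one (by linarith : (0 : ℝ) < (n : ℝ) - 2)]
    exact hdn2
  have hxy' : (⟨x, hx⟩ : Fin n) ≠ (⟨y, hy⟩ : Fin n) := by
    intro h
    exact hxy (by injection h)
  obtain ⟨M, hMeq⟩ : ∃ M : ℕ, 2 * γ n + 4 = M := ⟨_, rfl⟩
  rw [hMeq] at hasymp
  have hA0 : (0 : ℝ) ≤ ((M : ℝ) * M) ^ (2 * M) * ((2 * d + 1) ^ M / n) := by positivity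
  calc erMeasure n (Real.sqrt (d / ((n : ℝ) - 2)))
        {ω | s((⟨x, hx⟩ : Fin n), (⟨y, hy⟩ : Fin n)) ∈ (erGraph n ω).edgeSet ∧
          ¬ IsTriTree
              (triBall (erGraph n ω) (γ n) s((⟨x, hx⟩ : Fin n), (⟨y, hy⟩ : Fin n)))}
      ≤ ∑ v ∈ Finset.Icc 2 (2 * γ n + 4),
          ((n ^ (v - 2) * (v * v) ^ (2 * v - 2) : ℕ) : ENNReal) *
            ENNReal.ofReal (Real.sqrt (d / ((n : ℝ) - 2))) ^ (2 * v - 2) :=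
        ErdosRenyiAux.measure_event_le n _ hp0 hp1 _ _ hxy' (γ n)
    _ ≤ ∑ v ∈ Finset.Icc 2 (2 * γ n + 4),
          ENNReal.ofReal (((M : ℝ) * M) ^ (2 * M) * ((2 * d + 1) ^ M / n)) := by
        refine Finset.sum_le_sum ?_
        intro v hv
        rw [Finset.mem_Icc, hMeq] at hv
        rw [← ENNReal.ofReal_natCast, ← ENNReal.ofReal_pow hp0,
          ← ENNReal.ofReal_mul (by positivity)]
        exact ENNReal.ofReal_le_ofReal
          (ErdosRenyiAux.term_bound hd hn4 hv.1 hv.2)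
    _ ≤ ENNReal.ofReal ((n : ℝ) ^ (-1 + ε)) := by
        rw [Finset.sum_const, nsmul_eq_mul, Nat.card_Icc, hMeq]
        have hcardle : ((M + 1 - 2 : ℕ) : ℝ) ≤ (M : ℝ) + 1 := by
          have : (M + 1 - 2 : ℕ) ≤ M + 1 := by omega
          exact_mod_cast Nat.cast_le.mpr this
        rw [show ((M + 1 - 2 : ℕ) : ENNReal) = ENNReal.ofReal ((M + 1 - 2 : ℕ) : ℝ) from
          (ENNReal.ofReal_natCast _).symm, ← ENNReal.ofReal_mul (by positivity)]
        refine ENNReal.ofReal_le_ofReal ?_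
        have h1 : ((M + 1 - 2 : ℕ) : ℝ) * (((M : ℝ) * M) ^ (2 * M) * ((2 * d + 1) ^ M / n))
            ≤ (((M : ℝ) + 1) * (((M : ℝ) * M) ^ (2 * M) * (2 * d + 1) ^ M)) / n := by
          have := mul_le_mul_of_nonneg_right hcardle hA0
          calc ((M + 1 - 2 : ℕ) : ℝ) * (((M : ℝ) * M) ^ (2 * M) * ((2 * d + 1) ^ M / n))
              ≤ ((M : ℝ) + 1) * (((M : ℝ) * M) ^ (2 * M) * ((2 * d + 1) ^ M / n)) := this
            _ = (((M : ℝ) + 1) * (((M : ℝ) * M) ^ (2 * M) * (2 * d + 1) ^ M)) / n := by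
                ring
        refine le_trans h1 ?_
        have h2 : (((M : ℝ) + 1) * (((M : ℝ) * M) ^ (2 * M) * (2 * d + 1) ^ M)) / n
            ≤ (n : ℝ) ^ ε / n := by
          refine div_le_div_of_nonneg_right ?_ hnR.le
          calc ((M : ℝ) + 1) * (((M : ℝ) * M) ^ (2 * M) * (2 * d + 1) ^ M)
              = ((M : ℝ) + 1) * ((M : ℝ) * M) ^ (2 * M) * (2 * d + 1) ^ M := by ring
            _ ≤ (n : ℝ) ^ ε := hasymp
        refine le_trans h2 ?_
        rw [Real.rpow_add hnR, Real.rpow_neg_one]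
        rw [div_eq_mul_inv, mul_comm]
end
end

section
/- For all integers n ≥ 0 and c ≥ −n and every p ∈ [0,1], the total variation distance between the binomial distribution Bin(n+c, p) and the binomial distribution Bin(n, p) is at most |c|·p. -/
noncomputable def binPMF (p : ℝ) (m k : ℕ) : ℝ := (m.choose k : ℝ) * p ^ k * (1 - p) ^ (m - k)

lemma binPMF_nonneg {p : ℝ} (hp0 : 0 ≤ p) (hp1 : p ≤ 1) (m k : ℕ) : 0 ≤ binPMF p m k := by
  have h : (0:ℝ) ≤ 1 - p := by linarith
  exact mul_nonneg (mul_nonneg (Nat.cast_nonneg _) (pow_nonneg hp0 _)) (pow_nonneg h _)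

lemma binPMF_eq_zero {p : ℝ} {m k : ℕ} (h : m < k) : binPMF p m k = 0 := by
  simp [binPMF, Nat.choose_eq_zero_of_lt h]

lemma summable_binPMF (p : ℝ) (m : ℕ) : Summable (binPMF p m) := by
  apply summable_of_ne_finset_zero (s := Finset.range (m+1))
  intro k hk
  simp only [Finset.mem_range, not_lt] at hk
  exact binPMF_eq_zero (by omega)

lemma tsum_binPMF (p : ℝ) (m : ℕ) : ∑' k, binPMF p m k = 1 := by
  rw [tsum_eq_sum (s := Finset.range (m+1)) (by
    intro k hk
    simp only [Finset.mem_range, not_lt] at hk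
    exact binPMF_eq_zero (by omega))]
  have := add_pow p (1-p) m
  simp only [add_sub_cancel, one_pow] at this
  rw [eq_comm]
  calc (1:ℝ) = (p + (1-p))^m := by ring_nf
    _ = _ := by rw [add_pow]; apply Finset.sum_congr rfl; intro k hk; unfold binPMF; ring

lemma binPMF_step (p : ℝ) (m k : ℕ) :
    binPMF p (m+1) k = (1-p) * binPMF p m k + p * (if k = 0 then 0 else binPMF p m (k-1)) := by
  cases k with
  | zero => simp [binPMF, pow_succ]; ring
  | succ k =>
    simp only [Nat.succ_ne_zero, if_false, Nat.succ_sub_one, Nat.succ_eq_add_one]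
    unfold binPMF
    have e1 : m + 1 - (k+1) = m - k := by omega
    rw [Nat.choose_succ_succ, e1]
    push_cast
    simp only [Nat.succ_eq_add_one]
    by_cases h : k + 1 ≤ m
    · have e2 : m - k = (m - (k+1)) + 1 := by omega
      rw [e2, pow_succ]
      ring
    · rw [Nat.choose_eq_zero_of_lt (show m < k+1 by omega)]
      push_cast
      ring

lemma step_bound {p : ℝ} (hp0 : 0 ≤ p) (hp1 : p ≤ 1) (m : ℕ) :
    ∑' k, |binPMF p (m+1) k - binPMF p m k| ≤ 2 * p := by
  set F : ℕ → ℝ := fun k => if k = 0 then 0 else binPMF p m (k-1) with hF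
  have hFsupp : ∀ k ∉ Finset.range (m+2), F k = 0 := by
    intro k hk
    simp only [Finset.mem_range, not_lt] at hk
    simp [hF, binPMF_eq_zero (show m < k - 1 by omega), show k ≠ 0 by omega]
  have hFsum : Summable F := summable_of_ne_finset_zero hFsupp
  have hfsum := summable_binPMF p m
  have habs : ∀ k, |binPMF p (m+1) k - binPMF p m k| ≤ p * (F k + binPMF p m k) := by
    intro k
    have := binPMF_step p m k
    have h1 : binPMF p (m+1) k - binPMF p m k = p * (F k - binPMF p m k) := by
      rw [this]; simp only [hF]; ring
    rw [h1, abs_mul, abs_of_nonneg hp0]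
    apply mul_le_mul_of_nonneg_left ?_ hp0
    have h2 : 0 ≤ F k := by
      simp only [hF]; split
      · exact le_refl 0
      · exact binPMF_nonneg hp0 hp1 _ _
    have h3 := binPMF_nonneg hp0 hp1 m k
    rw [abs_le]; constructor <;> linarith
  have hsumm1 : Summable (fun k => |binPMF p (m+1) k - binPMF p m k|) := by
    apply summable_of_ne_finset_zero (s := Finset.range (m+2))
    intro k hk
    simp only [Finset.mem_range, not_lt] at hk
    rw [binPMF_eq_zero (show m+1 < k by omega), binPMF_eq_zero (show m < k by omega)]
    simp
  have hsumm2 : Summable (fun k => p * (F k + binPMF p m k)) := by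
    exact ((hFsum.add hfsum).mul_left p)
  calc ∑' k, |binPMF p (m+1) k - binPMF p m k|
      ≤ ∑' k, p * (F k + binPMF p m k) := Summable.tsum_le_tsum habs hsumm1 hsumm2
    _ = p * ((∑' k, F k) + ∑' k, binPMF p m k) := by
        rw [tsum_mul_left, Summable.tsum_add hFsum hfsum]
    _ = p * ((∑' k, F k) + 1) := by rw [tsum_binPMF]
    _ ≤ 2 * p := by
        have : ∑' k, F k = ∑' k, binPMF p m k := by
          rw [Summable.tsum_eq_zero_add hFsum]
          simp [hF]
        rw [this, tsum_binPMF]; linarith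

lemma summable_absdiff (p : ℝ) (a b : ℕ) :
    Summable (fun k => |binPMF p a k - binPMF p b k|) := by
  apply summable_of_ne_finset_zero (s := Finset.range (max a b + 1))
  intro k hk
  simp only [Finset.mem_range, not_lt] at hk
  rw [binPMF_eq_zero (show a < k by omega), binPMF_eq_zero (show b < k by omega)]
  simp

lemma dist_bound {p : ℝ} (hp0 : 0 ≤ p) (hp1 : p ≤ 1) (m : ℕ) :
    ∀ d : ℕ, ∑' k, |binPMF p (m+d) k - binPMF p m k| ≤ 2 * d * p := by
  intro d
  induction d with
  | zero => simp
  | succ d ih =>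
    have h1 : ∀ k, |binPMF p (m+(d+1)) k - binPMF p m k| ≤
        |binPMF p (m+d+1) k - binPMF p (m+d) k| + |binPMF p (m+d) k - binPMF p m k| := by
      intro k
      have : m + (d+1) = m + d + 1 := by omega
      rw [this]
      exact abs_sub_le _ _ _
    calc ∑' k, |binPMF p (m+(d+1)) k - binPMF p m k|
        ≤ ∑' k, (|binPMF p (m+d+1) k - binPMF p (m+d) k| + |binPMF p (m+d) k - binPMF p m k|) :=
          Summable.tsum_le_tsum h1 (summable_absdiff p _ _) ((summable_absdiff p _ _).add (summable_absdiff p _ _))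
      _ = (∑' k, |binPMF p (m+d+1) k - binPMF p (m+d) k|) + ∑' k, |binPMF p (m+d) k - binPMF p m k| :=
          Summable.tsum_add (summable_absdiff p _ _) (summable_absdiff p _ _)
      _ ≤ 2 * p + 2 * d * p := add_le_add (step_bound hp0 hp1 _) ih
      _ = 2 * ((d:ℕ):ℝ) * p + 2 * p := by ring
      _ = 2 * ((d+1:ℕ):ℝ) * p := by push_cast; ring

/-- For integers `n ≥ 0` and `c ≥ -n` and `p ∈ [0,1]`, the total variation distance
(half the ℓ¹ distance between the probability mass functions) between `Bin(n+c, p)` and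
`Bin(n, p)` is at most `|c| p`. -/
theorem tv_binomial_shift (n : ℕ) (c : ℤ) (hc : -(n : ℤ) ≤ c) (p : ℝ)
    (hp0 : 0 ≤ p) (hp1 : p ≤ 1) :
    (1 / 2) * ∑' k : ℕ,
        |(((n : ℤ) + c).toNat.choose k : ℝ) * p ^ k * (1 - p) ^ (((n : ℤ) + c).toNat - k)
          - (n.choose k : ℝ) * p ^ k * (1 - p) ^ (n - k)|
      ≤ |(c : ℝ)| * p := by
  set m := ((n : ℤ) + c).toNat with hm
  have key : ∑' k, |binPMF p m k - binPMF p n k| ≤ 2 * |(c:ℝ)| * p := by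
    rcases le_or_gt 0 c with h | h
    · have hmeq : m = n + c.toNat := by omega
      have : |(c:ℝ)| = (c.toNat : ℝ) := by
        rw [abs_of_nonneg (by exact_mod_cast h)]
        exact_mod_cast (Int.toNat_of_nonneg h).symm
      rw [this, hmeq]
      have := dist_bound hp0 hp1 n c.toNat
      linarith [this]
    · have hmeq : n = m + (-c).toNat := by omega
      have habs : |(c:ℝ)| = ((-c).toNat : ℝ) := by
        have h4 : ((-c).toNat : ℤ) = -c := Int.toNat_of_nonneg (by omega)
        rw [abs_of_neg (show (c:ℝ) < 0 by exact_mod_cast h)]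
        exact_mod_cast h4.symm
      rw [habs]
      have h2 := dist_bound hp0 hp1 m (-c).toNat
      have h3 : ∀ k, |binPMF p m k - binPMF p n k| = |binPMF p (m + (-c).toNat) k - binPMF p m k| := by
        intro k; rw [← hmeq, abs_sub_comm]
      rw [tsum_congr h3]
      linarith
  have : (1/2 : ℝ) * ∑' k, |binPMF p m k - binPMF p n k| ≤ |(c:ℝ)| * p := by linarith
  exact this
end

section
/- Every finite simple graph H with at least one edge satisfies ν(H) ≤ |E(H)|/3 and τ(H) < |E(H)|/2. -/
noncomputable section
open Finset
set_option maxHeartbeats 1000000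

lemma edTriple {V : Type*} [DecidableEq V] (a b c : V) (hab : a ≠ b) (hac : a ≠ c) (hbc : b ≠ c) :
    ({a,b,c} : Finset V).sym2.filter (fun e => ¬ e.IsDiag) = {s(a,b), s(a,c), s(b,c)} := by
  ext e
  induction e using Sym2.ind with
  | _ x y =>
    simp only [mem_filter, Finset.mk_mem_sym2_iff, Sym2.isDiag_iff_proj_eq, mem_insert,
      mem_singleton, Sym2.eq_iff]
    constructor
    · rintro ⟨⟨hx, hy⟩, hxy⟩
      rcases hx with rfl | rfl | rfl <;> rcases hy with rfl | rfl | rfl <;> tauto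
    · rintro (⟨rfl, rfl⟩ | ⟨rfl, rfl⟩ | ⟨rfl, rfl⟩ | ⟨rfl, rfl⟩ | ⟨rfl, rfl⟩ | ⟨rfl, rfl⟩) <;>
        simp_all <;> tauto

lemma edTripleCard {V : Type*} [DecidableEq V] (a b c : V) (hab : a ≠ b) (hac : a ≠ c) (hbc : b ≠ c) :
    ({s(a,b), s(a,c), s(b,c)} : Finset (Sym2 V)).card = 3 := by
  rw [card_insert_of_notMem, card_insert_of_notMem, card_singleton] <;>
    simp [Sym2.eq_iff] <;> tauto

lemma nu_bound {V : Type*} [Fintype V] [DecidableEq V] (H : SimpleGraph V) [DecidableRel H.Adj]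
    (𝒯 : Finset (Finset V)) (h1 : ∀ t ∈ 𝒯, t ∈ H.cliqueSet 3)
    (h2 : (𝒯 : Set (Finset V)).Pairwise (fun a b => (a ∩ b).card ≤ 1)) :
    3 * 𝒯.card ≤ H.edgeFinset.card := by
  classical
  set ed : Finset V → Finset (Sym2 V) := fun t => t.sym2.filter (fun e => ¬ e.IsDiag) with hed
  have hsub : 𝒯.biUnion ed ⊆ H.edgeFinset := by
    intro e he
    simp only [mem_biUnion] at he
    obtain ⟨t, ht, he⟩ := he
    induction e using Sym2.ind with
    | _ x y =>
      simp only [hed, mem_filter, Finset.mk_mem_sym2_iff, Sym2.isDiag_iff_proj_eq] at he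
      have hcl := (SimpleGraph.mem_cliqueSet_iff.mp (h1 t ht)).1
      exact SimpleGraph.mem_edgeFinset.mpr (hcl he.1.1 he.1.2 he.2)
  have hdisj : ∀ a ∈ 𝒯, ∀ b ∈ 𝒯, a ≠ b → Disjoint (ed a) (ed b) := by
    intro a ha b hb hab
    rw [Finset.disjoint_left]
    intro e hea heb
    induction e using Sym2.ind with
    | _ x y =>
      simp only [hed, mem_filter, Finset.mk_mem_sym2_iff, Sym2.isDiag_iff_proj_eq] at hea heb
      have : 1 < ((a ∩ b).card) := Finset.one_lt_card.mpr
        ⟨x, Finset.mem_inter.mpr ⟨hea.1.1, heb.1.1⟩, y, Finset.mem_inter.mpr ⟨hea.1.2, heb.1.2⟩,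
          fun h => hea.2 h⟩
      exact absurd (h2 ha hb hab) (by omega)
  have hcard : ∀ t ∈ 𝒯, (ed t).card = 3 := by
    intro t ht
    obtain ⟨a, b, c, hab, hac, hbc, rfl⟩ :=
      SimpleGraph.is3Clique_iff.mp (SimpleGraph.mem_cliqueSet_iff.mp (h1 t ht))
    rw [hed]
    simp only
    rw [edTriple a b c hab.ne hac.ne hbc.ne]
    exact edTripleCard a b c hab.ne hac.ne hbc.ne
  calc 3 * 𝒯.card = ∑ t ∈ 𝒯, (ed t).card := by
        rw [Finset.sum_congr rfl hcard, Finset.sum_const, smul_eq_mul, mul_comm]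
    _ = (𝒯.biUnion ed).card := (Finset.card_biUnion hdisj).symm
    _ ≤ H.edgeFinset.card := Finset.card_le_card hsub

lemma cover_exists {V : Type*} [Fintype V] [DecidableEq V] (H : SimpleGraph V)
    [DecidableRel H.Adj] (hH : H.edgeSet.Nonempty) :
    ∃ F : Finset (Sym2 V), (∀ e ∈ F, e ∈ H.edgeSet) ∧
      (∀ t ∈ H.cliqueSet 3, ∃ e ∈ F, ∀ v ∈ e, v ∈ t) ∧
      2 * F.card + 1 ≤ H.edgeFinset.card := by
  classical
  obtain ⟨e₀, he₀⟩ := hH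
  induction e₀ using Sym2.ind with
  | _ u v =>
  rw [SimpleGraph.mem_edgeSet] at he₀
  have huv : u ≠ v := he₀.ne
  set E := H.edgeFinset with hE
  set P : Finset V → Sym2 V → Prop := fun S e => (∀ x ∈ e, x ∈ S) ∨ (∀ x ∈ e, x ∉ S) with hP
  set 𝒮 : Finset (Finset V) := univ.filter (fun S => u ∈ S ∧ v ∉ S) with h𝒮
  have h𝒮mem : ∀ S, S ∈ 𝒮 ↔ u ∈ S ∧ v ∉ S := by
    intro S; simp [h𝒮]
  have h𝒮ne : 𝒮.Nonempty := ⟨{u}, (h𝒮mem _).mpr ⟨mem_singleton_self u, by simp [Ne.symm huv]⟩⟩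
  -- counting lemma for a single edge ≠ s(u,v)
  have hcount : ∀ e ∈ E, e ≠ s(u, v) → 2 * (𝒮.filter (fun S => P S e)).card = 𝒮.card := by
    intro e heE hne
    induction e using Sym2.ind with
    | _ x y =>
    have hxy : x ≠ y := (SimpleGraph.mem_edgeFinset.mp heE).ne
    -- find an endpoint w ∉ {u,v}, z the other
    obtain ⟨w, z, hwz, hwu, hwv, hes⟩ :
        ∃ w z, w ≠ z ∧ w ≠ u ∧ w ≠ v ∧ s(x, y) = s(w, z) := by
      by_cases hxu : x = u
      · subst hxu
        refine ⟨y, x, hxy.symm, hxy.symm, ?_, Sym2.eq_swap⟩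
        rintro rfl
        exact hne rfl
      · by_cases hxv : x = v
        · subst hxv
          refine ⟨y, x, hxy.symm, ?_, hxy.symm, Sym2.eq_swap⟩
          rintro rfl
          exact hne Sym2.eq_swap
        · exact ⟨x, y, hxy, hxu, hxv, rfl⟩
    rw [hes]
    set ι : Finset V → Finset V := fun S => if w ∈ S then S.erase w else insert w S with hι
    have hιmem : ∀ S ∈ 𝒮, ι S ∈ 𝒮 := by
      intro S hS
      rw [h𝒮mem] at hS ⊢
      constructor
      · by_cases hw : w ∈ S <;> simp [hι, hw, mem_erase, Ne.symm hwu, hS.1]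
      · by_cases hw : w ∈ S <;> simp [hι, hw, mem_erase, Ne.symm hwv, hS.2]
    have hιι : ∀ S, ι (ι S) = S := by
      intro S
      by_cases hw : w ∈ S
      · simp [hι, hw, Finset.insert_erase hw]
      · simp [hι, hw, Finset.erase_insert hw]
    have hPiff : ∀ S, P (ι S) s(w, z) ↔ ¬ P S s(w, z) := by
      intro S
      have hwι : w ∈ ι S ↔ ¬ (w ∈ S) := by
        by_cases hw : w ∈ S <;> simp [hι, hw]
      have hzι : z ∈ ι S ↔ z ∈ S := by
        by_cases hw : w ∈ S <;> simp [hι, hw, Ne.symm hwz, hwz]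
      simp only [hP, Sym2.mem_iff, forall_eq_or_imp, forall_eq]
      rw [hwι, hzι]
      tauto
    have hbij : (𝒮.filter (fun S => P S s(w, z))).card
        = (𝒮.filter (fun S => ¬ P S s(w, z))).card := by
      apply Finset.card_bij' (fun S _ => ι S) (fun S _ => ι S)
      · intro S hS
        rw [mem_filter] at hS ⊢
        exact ⟨hιmem S hS.1, fun h => (hPiff S).mp h hS.2⟩
      · intro S hS
        rw [mem_filter] at hS ⊢
        exact ⟨hιmem S hS.1, (hPiff S).mpr hS.2⟩
      · intro S _; exact hιι S
      · intro S _; exact hιι S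
    have := Finset.card_filter_add_card_filter_not (s := 𝒮)
      (fun S => P S s(w, z))
    omega
  -- the uv edge is never internal
  have hcuv : (𝒮.filter (fun S => P S s(u, v))).card = 0 := by
    rw [Finset.card_eq_zero, Finset.filter_eq_empty_iff]
    intro S hS
    rw [h𝒮mem] at hS
    simp only [hP, Sym2.mem_iff, forall_eq_or_imp, forall_eq]
    tauto
  -- sum swap
  have hswap : ∑ S ∈ 𝒮, (E.filter (fun e => P S e)).card
      = ∑ e ∈ E, (𝒮.filter (fun S => P S e)).card := by
    simp only [Finset.card_filter]
    exact Finset.sum_comm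
  have huvE : s(u, v) ∈ E := SimpleGraph.mem_edgeFinset.mpr he₀
  have hEcard : 1 ≤ E.card := Finset.card_pos.mpr ⟨_, huvE⟩
  have hsum : ∑ S ∈ 𝒮, 2 * (E.filter (fun e => P S e)).card = (E.card - 1) * 𝒮.card := by
    rw [← Finset.mul_sum, hswap, ← Finset.add_sum_erase _ _ huvE, hcuv, zero_add,
      Finset.mul_sum]
    rw [Finset.sum_congr rfl (fun e he => hcount e (Finset.mem_of_mem_erase he)
      (Finset.ne_of_mem_erase he))]
    rw [Finset.sum_const, Finset.card_erase_of_mem huvE, smul_eq_mul]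
  have hex : ∃ S ∈ 𝒮, 2 * (E.filter (fun e => P S e)).card ≤ E.card - 1 := by
    apply Finset.exists_le_of_sum_le h𝒮ne
    rw [hsum, Finset.sum_const, smul_eq_mul, mul_comm]
  obtain ⟨S, _, hSle⟩ := hex
  refine ⟨E.filter (fun e => P S e), ?_, ?_, by omega⟩
  · intro e he
    exact SimpleGraph.mem_edgeFinset.mp (Finset.mem_of_mem_filter e he)
  · intro t ht
    obtain ⟨a, b, c, hab, hac, hbc, rfl⟩ :=
      SimpleGraph.is3Clique_iff.mp (SimpleGraph.mem_cliqueSet_iff.mp ht)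
    have key : ∀ p q : V, H.Adj p q → (p ∈ S ↔ q ∈ S) → p ∈ ({a, b, c} : Finset V) →
        q ∈ ({a, b, c} : Finset V) →
        ∃ e ∈ E.filter (fun e => P S e), ∀ v ∈ e, v ∈ ({a, b, c} : Finset V) := by
      intro p q hadj hiff hp hq
      refine ⟨s(p, q), ?_, ?_⟩
      · rw [mem_filter]
        refine ⟨SimpleGraph.mem_edgeFinset.mpr hadj, ?_⟩
        simp only [hP, Sym2.mem_iff, forall_eq_or_imp, forall_eq]
        tauto
      · intro x hx
        rw [Sym2.mem_iff] at hx
        rcases hx with rfl | rfl <;> assumption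
    by_cases ha : a ∈ S <;> by_cases hb : b ∈ S <;> by_cases hc : c ∈ S
    · exact key a b hab (by tauto) (by simp) (by simp)
    · exact key a b hab (by tauto) (by simp) (by simp)
    · exact key a c hac (by tauto) (by simp) (by simp)
    · exact key b c hbc (by tauto) (by simp) (by simp)
    · exact key b c hbc (by tauto) (by simp) (by simp)
    · exact key a c hac (by tauto) (by simp) (by simp)
    · exact key a b hab (by tauto) (by simp) (by simp)
    · exact key a b hab (by tauto) (by simp) (by simp)

/-- Every finite graph `H` with at least one edge satisfies `ν(H) ≤ |E(H)|/3` and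
`τ(H) < |E(H)|/2`. -/
theorem nu_le_and_tau_lt {V : Type*} [Fintype V] [DecidableEq V] (H : SimpleGraph V)
    (hH : H.edgeSet.Nonempty) :
    (triMatchNum H : ℝ) ≤ (H.edgeSet.ncard : ℝ) / 3 ∧
      (triCoverNum H : ℝ) < (H.edgeSet.ncard : ℝ) / 2 := by
  classical
  have hm : H.edgeSet.ncard = H.edgeFinset.card := by
    rw [Set.ncard_eq_toFinset_card']
    congr 1
  set m := H.edgeFinset.card with hmdef
  constructor
  · -- ν(H) ≤ m/3
    have hset0 : (0 : ℕ) ∈ {k | ∃ 𝒯 : Finset (Finset V), (∀ t ∈ 𝒯, t ∈ H.cliqueSet 3) ∧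
        (𝒯 : Set (Finset V)).Pairwise (fun a b => (a ∩ b).card ≤ 1) ∧ 𝒯.card = k} :=
      ⟨∅, by simp, by simp, rfl⟩
    have hbdd : BddAbove {k | ∃ 𝒯 : Finset (Finset V), (∀ t ∈ 𝒯, t ∈ H.cliqueSet 3) ∧
        (𝒯 : Set (Finset V)).Pairwise (fun a b => (a ∩ b).card ≤ 1) ∧ 𝒯.card = k} := by
      refine ⟨m, fun k hk => ?_⟩
      obtain ⟨𝒯, h1, h2, rfl⟩ := hk
      have := nu_bound H 𝒯 h1 h2
      omega
    have hmem := Nat.sSup_mem ⟨0, hset0⟩ hbdd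
    obtain ⟨𝒯, h1, h2, hcard⟩ := hmem
    have h3 : 3 * triMatchNum H ≤ m := by
      rw [triMatchNum, ← hcard]
      exact nu_bound H 𝒯 h1 h2
    rw [le_div_iff₀ (by norm_num : (0:ℝ) < 3), hm]
    have h4 : (3 * triMatchNum H : ℝ) ≤ (m : ℝ) := by exact_mod_cast h3
    linarith
  · -- τ(H) < m/2
    obtain ⟨F, hF1, hF2, hF3⟩ := cover_exists H hH
    have hτ : triCoverNum H ≤ F.card := Nat.sInf_le ⟨F, hF1, hF2, rfl⟩
    rw [lt_div_iff₀ (by norm_num : (0:ℝ) < 2), hm]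
    have h4 : ((2 * F.card + 1 : ℕ) : ℝ) ≤ (m : ℝ) := by exact_mod_cast hF3
    have h5 : ((triCoverNum H : ℕ) : ℝ) ≤ (F.card : ℝ) := by exact_mod_cast hτ
    push_cast at h4
    linarith
end
end

section
/- Let S be a finite triangle-connected simple graph with at least one edge and with no isolated vertices. Then 2·(|V(S)| − 2) ≤ |E(S)| − 1, with equality if and only if S is a triangle-tree. -/
noncomputable section

/-- `G` is triangle-connected: any two of its edges are joined by a triangle-path. -/
def TriConnected {V : Type*} (G : SimpleGraph V) : Prop :=
  ∀ e ∈ G.edgeSet, ∀ f ∈ G.edgeSet, Relation.ReflTransGen (ShareTri G) e f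

namespace TriTreeAux

variable {V : Type*}

lemma mySupport_sup (A B : SimpleGraph V) : (A ⊔ B).support = A.support ∪ B.support := by
  ext v; simp [SimpleGraph.mem_support, SimpleGraph.sup_adj, exists_or]

lemma mySupport_single {x y : V} (hxy : x ≠ y) :
    (SimpleGraph.fromEdgeSet {s(x, y)}).support = {x, y} := by
  ext v
  simp only [SimpleGraph.mem_support, SimpleGraph.fromEdgeSet_adj, Set.mem_singleton_iff,
    Sym2.eq_iff, Set.mem_insert_iff, Set.mem_singleton_iff]
  constructor
  · rintro ⟨w, (⟨rfl, rfl⟩ | ⟨rfl, rfl⟩), hne⟩ <;> simp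
  · rintro (rfl | rfl)
    · exact ⟨y, Or.inl ⟨rfl, rfl⟩, hxy⟩
    · exact ⟨x, Or.inr ⟨rfl, rfl⟩, hxy.symm⟩

lemma mySupport_pair {x y z : V} (hxz : x ≠ z) (hyz : y ≠ z) :
    (SimpleGraph.fromEdgeSet {s(x, z), s(y, z)}).support = {x, y, z} := by
  ext v
  simp only [SimpleGraph.mem_support, SimpleGraph.fromEdgeSet_adj, Set.mem_insert_iff,
    Set.mem_singleton_iff, Sym2.eq_iff]
  constructor
  · rintro ⟨w, (⟨rfl, rfl⟩ | ⟨rfl, rfl⟩) | (⟨rfl, rfl⟩ | ⟨rfl, rfl⟩), hne⟩ <;> simp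
  · rintro (rfl | rfl | rfl)
    · exact ⟨z, Or.inl (Or.inl ⟨rfl, rfl⟩), hxz⟩
    · exact ⟨z, Or.inr (Or.inl ⟨rfl, rfl⟩), hyz⟩
    · exact ⟨x, Or.inl (Or.inr ⟨rfl, rfl⟩), hxz.symm⟩

lemma myEdgeSet_single {x y : V} (hxy : x ≠ y) :
    (SimpleGraph.fromEdgeSet {s(x, y)}).edgeSet = {s(x, y)} := by
  rw [SimpleGraph.edgeSet_fromEdgeSet]
  ext e
  simp only [Set.mem_diff, Set.mem_singleton_iff, Set.mem_setOf_eq]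
  exact ⟨fun h => h.1, fun h => ⟨h, by subst h; simp [hxy]⟩⟩

lemma myEdgeSet_pair {x y z : V} (hxz : x ≠ z) (hyz : y ≠ z) :
    (SimpleGraph.fromEdgeSet {s(x, z), s(y, z)}).edgeSet = {s(x, z), s(y, z)} := by
  rw [SimpleGraph.edgeSet_fromEdgeSet]
  ext e
  simp only [Set.mem_diff, Set.mem_insert_iff, Set.mem_singleton_iff, Set.mem_setOf_eq]
  constructor
  · rintro ⟨h, _⟩; exact h
  · rintro (rfl | rfl)
    · exact ⟨Or.inl rfl, by simp [hxz]⟩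
    · exact ⟨Or.inr rfl, by simp [hyz]⟩

lemma tritree_count [Fintype V] {T : SimpleGraph V} (h : IsTriTree T) :
    T.edgeSet.ncard + 3 = 2 * T.support.ncard := by
  induction h with
  | single x y hxy =>
      rw [myEdgeSet_single hxy, mySupport_single hxy]
      rw [Set.ncard_singleton, Set.ncard_pair hxy]
  | grow T x y z hT hxy hz ih =>
      have hx : x ∈ T.support := ⟨y, hxy⟩
      have hy : y ∈ T.support := ⟨x, hxy.symm⟩
      have hxz : x ≠ z := fun h => hz (h ▸ hx)
      have hyz : y ≠ z := fun h => hz (h ▸ hy)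
      rw [SimpleGraph.edgeSet_sup, myEdgeSet_pair hxz hyz, mySupport_sup,
        mySupport_pair hxz hyz]
      have hsup : T.support ∪ {x, y, z} = insert z T.support := by
        ext v
        simp only [Set.mem_union, Set.mem_insert_iff, Set.mem_singleton_iff]
        constructor
        · rintro (h | rfl | rfl | rfl) <;> tauto
        · rintro (rfl | h) <;> tauto
      have h1 : s(x, z) ∉ T.edgeSet := fun h => hz ⟨x, (T.mem_edgeSet.mp h).symm⟩
      have h2 : s(y, z) ∉ T.edgeSet := fun h => hz ⟨y, (T.mem_edgeSet.mp h).symm⟩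
      have hne : s(x, z) ≠ s(y, z) := by
        simp only [Ne, Sym2.eq_iff]
        rintro (⟨rfl, -⟩ | ⟨rfl, rfl⟩)
        · exact hxy.ne rfl
        · exact hxz rfl
      have hE : T.edgeSet ∪ {s(x, z), s(y, z)} = insert s(x,z) (insert s(y,z) T.edgeSet) := by
        ext e; simp only [Set.mem_union, Set.mem_insert_iff, Set.mem_singleton_iff]; tauto
      rw [hsup, hE]
      rw [Set.ncard_insert_of_notMem (by intro h; rcases Set.mem_insert_iff.mp h with h' | h'; exact hne h'; exact h1 h') ((T.edgeSet.toFinite.insert _)),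
        Set.ncard_insert_of_notMem h2 T.edgeSet.toFinite,
        Set.ncard_insert_of_notMem hz T.support.toFinite]
      omega

lemma reach {S : SimpleGraph V} {W : Set V} {e f : Sym2 V}
    (hp : Relation.ReflTransGen (ShareTri S) e f) (he : ∀ v ∈ e, v ∈ W) :
    (∀ v ∈ f, v ∈ W) ∨
      ∃ x y w, S.Adj x y ∧ S.Adj x w ∧ S.Adj y w ∧ x ∈ W ∧ y ∈ W ∧ w ∉ W := by
  induction hp with
  | refl => exact Or.inl he
  | @tail b c hab hbc ih =>
      rcases ih with hb | hgoal
      · by_cases hc : ∀ v ∈ c, v ∈ W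
        · exact Or.inl hc
        · push_neg at hc
          obtain ⟨w, hwc, hwW⟩ := hc
          obtain ⟨hbE, hcE, t, ht, hbt, hct⟩ := hbc
          obtain ⟨p, q, rfl⟩ : ∃ p q, b = s(p, q) := b.inductionOn fun p q => ⟨p, q, rfl⟩
          have hpq : S.Adj p q := S.mem_edgeSet.mp hbE
          have hpW : p ∈ W := hb p (by simp)
          have hqW : q ∈ W := hb q (by simp)
          have hwp : w ≠ p := fun h => hwW (h ▸ hpW)
          have hwq : w ≠ q := fun h => hwW (h ▸ hqW)
          have hcl : SimpleGraph.IsClique S (t : Set V) :=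
            (SimpleGraph.mem_cliqueSet_iff.mp ht).isClique
          have hpt : p ∈ (t : Set V) := Finset.mem_coe.mpr (hbt p (by simp))
          have hqt : q ∈ (t : Set V) := Finset.mem_coe.mpr (hbt q (by simp))
          have hwt : w ∈ (t : Set V) := Finset.mem_coe.mpr (hct w hwc)
          exact Or.inr ⟨p, q, w, hpq, hcl hpt hwt hwp.symm, hcl hqt hwt hwq.symm, hpW, hqW, hwW⟩
      · exact Or.inr hgoal

lemma exists_growth {S : SimpleGraph V} (hconn : TriConnected S) {W : Set V} {x0 y0 : V}
    (hadj : S.Adj x0 y0) (hx0 : x0 ∈ W) (hy0 : y0 ∈ W) {z : V} (hz : z ∈ S.support)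
    (hzW : z ∉ W) :
    ∃ x y w, S.Adj x y ∧ S.Adj x w ∧ S.Adj y w ∧ x ∈ W ∧ y ∈ W ∧ w ∉ W := by
  obtain ⟨u, hu⟩ := hz
  have hp := hconn s(x0, y0) (S.mem_edgeSet.mpr hadj) s(z, u)
    (S.mem_edgeSet.mpr hu)
  rcases reach hp (fun v hv => by rcases Sym2.mem_iff.mp hv with rfl | rfl
                                  exacts [hx0, hy0]) with h | h
  · exact absurd (h z (by simp)) hzW
  · exact h

def innerE (S : SimpleGraph V) (W : Set V) : Set (Sym2 V) :=
  {e | e ∈ S.edgeSet ∧ ∀ v ∈ e, v ∈ W}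

lemma climb [Fintype V] {S : SimpleGraph V} (hconn : TriConnected S)
    (hsupp : ∀ v : V, v ∈ S.support) :
    ∀ (k : ℕ) (W : Set V), (Set.univ \ W).ncard = k → 2 ≤ W.ncard →
      2 * W.ncard ≤ (innerE S W).ncard + 3 →
      (2 * W.ncard = (innerE S W).ncard + 3 →
        ∃ T, IsTriTree T ∧ T ≤ S ∧ T.support = W ∧ T.edgeSet = innerE S W) →
      2 * Fintype.card V ≤ S.edgeSet.ncard + 3 ∧
        (2 * Fintype.card V = S.edgeSet.ncard + 3 → IsTriTree S) := by
  intro k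
  induction k with
  | zero =>
      intro W hk h2 hineq heq
      have hWuniv : W = Set.univ := by
        have : (Set.univ \ W) = ∅ := (Set.ncard_eq_zero (Set.toFinite _)).mp hk
        have := Set.diff_eq_empty.mp this
        exact Set.univ_subset_iff.mp this
      subst hWuniv
      have hIE : innerE S Set.univ = S.edgeSet := by
        ext e; simp [innerE]
      have hcard : (Set.univ : Set V).ncard = Fintype.card V := by
        rw [Set.ncard_univ, Nat.card_eq_fintype_card]
      rw [hIE, hcard] at hineq heq
      refine ⟨hineq, fun h => ?_⟩
      obtain ⟨T, hT, _, _, hTE⟩ := heq h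
      rwa [SimpleGraph.edgeSet_inj.mp hTE] at hT
  | succ k ih =>
      intro W hk h2 hineq heq
      -- find a vertex outside W
      have hne : (Set.univ \ W).Nonempty := by
        rw [← Set.ncard_pos (Set.toFinite _)] at *
        omega
      obtain ⟨z, hzu⟩ := hne
      have hzW : z ∉ W := hzu.2
      -- find an edge inside W
      have hEne : (innerE S W).Nonempty := by
        rw [← Set.ncard_pos (Set.toFinite _)]
        omega
      obtain ⟨e, heE, hevW⟩ := hEne
      obtain ⟨p, q, rfl⟩ : ∃ p q, e = s(p, q) := e.inductionOn fun p q => ⟨p, q, rfl⟩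
      have hpq : S.Adj p q := S.mem_edgeSet.mp heE
      obtain ⟨x, y, w, hxy, hxw, hyw, hxW, hyW, hwW⟩ :=
        exists_growth hconn hpq (hevW p (by simp)) (hevW q (by simp)) (hsupp z) hzW
      set W' := insert w W with hW'
      have hxw' : x ≠ w := fun h => hwW (h ▸ hxW)
      have hyw' : y ≠ w := fun h => hwW (h ▸ hyW)
      have habne : s(x, w) ≠ s(y, w) := by
        simp only [Ne, Sym2.eq_iff]
        rintro (⟨rfl, -⟩ | ⟨rfl, rfl⟩)
        · exact hxy.ne rfl
        · exact hxw' rfl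
      have haE : s(x, w) ∉ innerE S W := fun h => hwW (h.2 w (by simp))
      have hbE : s(y, w) ∉ innerE S W := fun h => hwW (h.2 w (by simp))
      have hsub : insert s(x,w) (insert s(y,w) (innerE S W)) ⊆ innerE S W' := by
        rintro e (rfl | rfl | he')
        · exact ⟨S.mem_edgeSet.mpr hxw, fun v hv => by
            rcases Sym2.mem_iff.mp hv with rfl | rfl
            exacts [Set.mem_insert_of_mem _ hxW, Set.mem_insert _ _]⟩
        · exact ⟨S.mem_edgeSet.mpr hyw, fun v hv => by
            rcases Sym2.mem_iff.mp hv with rfl | rfl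
            exacts [Set.mem_insert_of_mem _ hyW, Set.mem_insert _ _]⟩
        · exact ⟨he'.1, fun v hv => Set.mem_insert_of_mem _ (he'.2 v hv)⟩
      have hcard2 : (insert s(x,w) (insert s(y,w) (innerE S W))).ncard
          = (innerE S W).ncard + 2 := by
        rw [Set.ncard_insert_of_notMem
            (by intro h; rcases Set.mem_insert_iff.mp h with h' | h'; exact habne h'; exact haE h')
            ((innerE S W).toFinite.insert _),
          Set.ncard_insert_of_notMem hbE (innerE S W).toFinite]
      have hmono : (innerE S W).ncard + 2 ≤ (innerE S W').ncard := by
        rw [← hcard2]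
        exact Set.ncard_le_ncard hsub (Set.toFinite _)
      have hW'card : W'.ncard = W.ncard + 1 := Set.ncard_insert_of_notMem hwW (Set.toFinite _)
      have hk' : (Set.univ \ W').ncard = k := by
        have : Set.univ \ W' = (Set.univ \ W) \ {w} := by
          ext v
          simp only [hW', Set.mem_diff, Set.mem_insert_iff, Set.mem_univ, true_and,
            Set.mem_singleton_iff]
          tauto
        have hwmem : w ∈ Set.univ \ W := ⟨Set.mem_univ w, hwW⟩
        rw [this, Set.ncard_diff_singleton_of_mem hwmem, hk]
        omega
      refine ih W' hk' (by omega) (by omega) ?_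
      intro heq'
      -- equality is inherited downward
      have hEWcard : 2 * W.ncard = (innerE S W).ncard + 3 := by omega
      obtain ⟨T, hT, hTS, hTsupp, hTE⟩ := heq hEWcard
      have hIE' : innerE S W' = insert s(x,w) (insert s(y,w) (innerE S W)) :=
        (Set.eq_of_subset_of_ncard_le hsub (by omega) (Set.toFinite _)).symm
      refine ⟨T ⊔ SimpleGraph.fromEdgeSet {s(x, w), s(y, w)}, ?_, ?_, ?_, ?_⟩
      · exact IsTriTree.grow T x y w hT
          (T.mem_edgeSet.mp (hTE ▸ (⟨S.mem_edgeSet.mpr hxy, fun v hv => by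
            rcases Sym2.mem_iff.mp hv with rfl | rfl
            exacts [hxW, hyW]⟩ : s(x,y) ∈ innerE S W)))
          (hTsupp ▸ hwW)
      · refine sup_le hTS ?_
        intro u v huv
        rcases ((SimpleGraph.fromEdgeSet_adj _).mp huv).1 with h' | h' <;>
          rcases Sym2.eq_iff.mp h' with ⟨rfl, rfl⟩ | ⟨rfl, rfl⟩
        · exact hxw
        · exact hxw.symm
        · exact hyw
        · exact hyw.symm
      · rw [mySupport_sup, mySupport_pair hxw' hyw', hTsupp]
        ext v
        simp only [Set.mem_union, Set.mem_insert_iff, Set.mem_singleton_iff, hW']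
        constructor
        · rintro (h | rfl | rfl | rfl)
          · exact Or.inr h
          · exact Or.inr hxW
          · exact Or.inr hyW
          · exact Or.inl rfl
        · rintro (rfl | h)
          · tauto
          · tauto
      · rw [SimpleGraph.edgeSet_sup, myEdgeSet_pair hxw' hyw', hTE, hIE']
        ext e
        simp only [Set.mem_union, Set.mem_insert_iff, Set.mem_singleton_iff]
        tauto

end TriTreeAux

open TriTreeAux in
/-- For a finite triangle-connected graph `S` with at least one edge and no isolated
vertices (every vertex of the ambient set is used), the number of vertices other than the
two root-edge endpoints is at most half the number of non-root edges:
`2(|V(S)| - 2) ≤ |E(S)| - 1`, with equality iff `S` is a triangle-tree. -/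
theorem triconnected_vertex_edge_bound {V : Type*} [Fintype V] [DecidableEq V]
    (S : SimpleGraph V) (hconn : TriConnected S) (hne : S.edgeSet.Nonempty)
    (hsupp : ∀ v : V, v ∈ S.support) :
    2 * ((Fintype.card V : ℤ) - 2) ≤ (S.edgeSet.ncard : ℤ) - 1 ∧
      (2 * ((Fintype.card V : ℤ) - 2) = (S.edgeSet.ncard : ℤ) - 1 ↔ IsTriTree S) := by
  obtain ⟨e, heS⟩ := hne
  obtain ⟨x0, y0, rfl⟩ : ∃ p q, e = s(p, q) := e.inductionOn fun p q => ⟨p, q, rfl⟩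
  have hadj : S.Adj x0 y0 := S.mem_edgeSet.mp heS
  have hne0 : x0 ≠ y0 := hadj.ne
  set W0 : Set V := {x0, y0} with hW0
  have hIE0 : innerE S W0 = {s(x0, y0)} := by
    ext f
    simp only [innerE, Set.mem_setOf_eq, Set.mem_singleton_iff]
    constructor
    · rintro ⟨hf, hv⟩
      obtain ⟨p, q, rfl⟩ : ∃ p q, f = s(p, q) := f.inductionOn fun p q => ⟨p, q, rfl⟩
      have hpq : S.Adj p q := S.mem_edgeSet.mp hf
      have hp := hv p (by simp)
      have hq := hv q (by simp)
      simp only [hW0, Set.mem_insert_iff, Set.mem_singleton_iff] at hp hq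
      rcases hp with rfl | rfl <;> rcases hq with rfl | rfl
      · exact absurd rfl hpq.ne
      · rfl
      · exact Sym2.eq_swap
      · exact absurd rfl hpq.ne
    · rintro rfl
      refine ⟨heS, fun v hv => ?_⟩
      rcases Sym2.mem_iff.mp hv with rfl | rfl
      · exact Set.mem_insert _ _
      · exact Set.mem_insert_of_mem _ rfl
  have hW0card : W0.ncard = 2 := Set.ncard_pair hne0
  have hmain := climb hconn hsupp (Set.univ \ W0).ncard W0 rfl (by omega)
    (by rw [hIE0, Set.ncard_singleton]; omega)
    (by
      intro _
      refine ⟨SimpleGraph.fromEdgeSet {s(x0, y0)}, IsTriTree.single x0 y0 hne0, ?_,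
        mySupport_single hne0, by rw [myEdgeSet_single hne0, hIE0]⟩
      intro u v huv
      rcases Sym2.eq_iff.mp ((SimpleGraph.fromEdgeSet_adj _).mp huv).1 with ⟨rfl, rfl⟩ | ⟨rfl, rfl⟩
      · exact hadj
      · exact hadj.symm)
  obtain ⟨h1, h2⟩ := hmain
  have hcount : IsTriTree S → S.edgeSet.ncard + 3 = 2 * Fintype.card V := by
    intro hT
    have hc := tritree_count hT
    have hsu : S.support = Set.univ := Set.eq_univ_of_forall hsupp
    rw [hsu, Set.ncard_univ, Nat.card_eq_fintype_card] at hc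
    exact hc
  refine ⟨by omega, ?_, fun h => by have := hcount h; omega⟩
  intro h
  exact h2 (by omega)
end
end

section
/- Let H be a finite simple graph and let V(H) = X ∪ Y be a partition of its vertex set into two blocks. Define W₀ to be the set of edges of H with both ends in X or both ends in Y; W₁ the set of edges xy ∈ W₀ such that every triangle of H containing xy has all three vertices in the same block as x and y; and W₂ the set of edges xy ∈ W₁ such that there is a triangle xyz of H with xz ∈ W₁ and yz ∈ W₁. Then W = (W₀ \ W₁) ∪ W₂ is a triangle cover of H, i.e., every triangle of H contains an edge of W. -/
noncomputable section

/-- `W₀`: edges of `H` with both ends in `X` or both ends in the complement of `X`. -/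
def W0 {V : Type*} (H : SimpleGraph V) (X : Set V) : Set (Sym2 V) :=
  {e | e ∈ H.edgeSet ∧ ((∀ v ∈ e, v ∈ X) ∨ (∀ v ∈ e, v ∉ X))}

/-- `W₁`: edges of `W₀` all of whose triangles stay in the block of the edge. -/
def W1 {V : Type*} (H : SimpleGraph V) (X : Set V) : Set (Sym2 V) :=
  {e | e ∈ W0 H X ∧ ∀ t ∈ H.cliqueSet 3, (∀ v ∈ e, v ∈ t) →
      ((∀ v ∈ t, v ∈ X) ∨ (∀ v ∈ t, v ∉ X))}

/-- `W₂`: edges `xy ∈ W₁` lying in a triangle `xyz` with `xz, yz ∈ W₁`. -/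
def W2 {V : Type*} [DecidableEq V] (H : SimpleGraph V) (X : Set V) : Set (Sym2 V) :=
  {e | e ∈ W1 H X ∧ ∃ x y z : V, e = s(x, y) ∧
      ({x, y, z} : Finset V) ∈ H.cliqueSet 3 ∧ s(x, z) ∈ W1 H X ∧ s(y, z) ∈ W1 H X}

/-- `W = (W₀ \ W₁) ∪ W₂`. -/
def Wcover {V : Type*} [DecidableEq V] (H : SimpleGraph V) (X : Set V) : Set (Sym2 V) :=
  (W0 H X \ W1 H X) ∪ W2 H X

/-- For any graph `H` and any partition of its vertices into `X` and its complement,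
`W = (W₀ \ W₁) ∪ W₂` is a triangle cover: every triangle of `H` contains an edge of `W`. -/
theorem Wcover_is_cover {V : Type*} [Fintype V] [DecidableEq V]
    (H : SimpleGraph V) (X : Set V) :
    ∀ t ∈ H.cliqueSet 3, ∃ e ∈ Wcover H X, ∀ v ∈ e, v ∈ t := by
  intro t ht
  obtain ⟨hc, hcard⟩ := ht
  obtain ⟨x, y, z, hxy, hxz, hyz, rfl⟩ := Finset.card_eq_three.mp hcard
  have hx : x ∈ ({x, y, z} : Finset V) := by simp
  have hy : y ∈ ({x, y, z} : Finset V) := by simp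
  have hz : z ∈ ({x, y, z} : Finset V) := by simp
  have axy : H.Adj x y := hc (by simp) (by simp) hxy
  have axz : H.Adj x z := hc (by simp) (by simp) hxz
  have ayz : H.Adj y z := hc (by simp) (by simp) hyz
  have ht : ({x, y, z} : Finset V) ∈ H.cliqueSet 3 := ⟨hc, hcard⟩
  -- helper for nonmono case
  have key : ∀ a b : V, a ∈ ({x, y, z} : Finset V) → b ∈ ({x, y, z} : Finset V) →
      H.Adj a b → ((a ∈ X ∧ b ∈ X) ∨ (a ∉ X ∧ b ∉ X)) →
      ¬((∀ v ∈ ({x, y, z} : Finset V), v ∈ X) ∨ (∀ v ∈ ({x, y, z} : Finset V), v ∉ X)) →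
      ∃ e ∈ Wcover H X, ∀ v ∈ e, v ∈ ({x, y, z} : Finset V) := by
    intro a b ha hb hab hside hnm
    refine ⟨s(a, b), Or.inl ⟨⟨hab, ?_⟩, ?_⟩, ?_⟩
    · rcases hside with ⟨h1, h2⟩ | ⟨h1, h2⟩
      · left; intro v hv; rcases Sym2.mem_iff.mp hv with rfl | rfl <;> assumption
      · right; intro v hv; rcases Sym2.mem_iff.mp hv with rfl | rfl <;> assumption
    · intro hW1
      exact hnm (hW1.2 _ ht (fun v hv => by
        rcases Sym2.mem_iff.mp hv with rfl | rfl <;> assumption))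
    · intro v hv; rcases Sym2.mem_iff.mp hv with rfl | rfl <;> assumption
  by_cases hmono : (∀ v ∈ ({x, y, z} : Finset V), v ∈ X) ∨ (∀ v ∈ ({x, y, z} : Finset V), v ∉ X)
  · -- monochromatic triangle: all three edges in W0
    have hW0 : ∀ a b : V, a ∈ ({x, y, z} : Finset V) → b ∈ ({x, y, z} : Finset V) →
        H.Adj a b → s(a, b) ∈ W0 H X := by
      intro a b ha hb hab
      refine ⟨hab, ?_⟩
      rcases hmono with h | h
      · left; intro v hv; rcases Sym2.mem_iff.mp hv with rfl | rfl <;> exact h _ (by assumption)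
      · right; intro v hv; rcases Sym2.mem_iff.mp hv with rfl | rfl <;> exact h _ (by assumption)
    by_cases h1 : s(x, y) ∈ W1 H X
    · by_cases h2 : s(x, z) ∈ W1 H X
      · by_cases h3 : s(y, z) ∈ W1 H X
        · -- all in W1, so s(x,y) ∈ W2
          refine ⟨s(x, y), Or.inr ⟨h1, x, y, z, rfl, ht, h2, h3⟩, ?_⟩
          intro v hv; rcases Sym2.mem_iff.mp hv with rfl | rfl <;> assumption
        · refine ⟨s(y, z), Or.inl ⟨hW0 y z hy hz ayz, h3⟩, ?_⟩
          intro v hv; rcases Sym2.mem_iff.mp hv with rfl | rfl <;> assumption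
      · refine ⟨s(x, z), Or.inl ⟨hW0 x z hx hz axz, h2⟩, ?_⟩
        intro v hv; rcases Sym2.mem_iff.mp hv with rfl | rfl <;> assumption
    · refine ⟨s(x, y), Or.inl ⟨hW0 x y hx hy axy, h1⟩, ?_⟩
      intro v hv; rcases Sym2.mem_iff.mp hv with rfl | rfl <;> assumption
  · -- non-monochromatic: two vertices on the same side
    by_cases hxX : x ∈ X <;> by_cases hyX : y ∈ X <;> by_cases hzX : z ∈ X
    · exact absurd (Or.inl (by intro v hv; simp at hv; rcases hv with rfl | rfl | rfl <;> assumption)) hmono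
    · exact key x y hx hy axy (Or.inl ⟨hxX, hyX⟩) hmono
    · exact key x z hx hz axz (Or.inl ⟨hxX, hzX⟩) hmono
    · exact key y z hy hz ayz (Or.inr ⟨hyX, hzX⟩) hmono
    · exact key y z hy hz ayz (Or.inl ⟨hyX, hzX⟩) hmono
    · exact key x z hx hz axz (Or.inr ⟨hxX, hzX⟩) hmono
    · exact key x y hx hy axy (Or.inr ⟨hxX, hyX⟩) hmono
    · exact absurd (Or.inr (by intro v hv; simp at hv; rcases hv with rfl | rfl | rfl <;> assumption)) hmono
end
end

section
/- Let p = p(n) ∈ [0,1] satisfy dₙ = (n−2)·p(n)² → ∞, and let ς = ς(n) be positive reals with ς(n) → 0 and ς(n)²·dₙ → ∞. Call an edge of G = G_{n,p(n)} heavy if it lies in at least (1+ς(n))·dₙ triangles of G. Then for every ε > 0, the probability that the number of triangles of G containing at least one heavy edge is at most ε·n³·p(n)³ tends to 1 as n → ∞. -/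
open MeasureTheory Filter

noncomputable section

/-! ### Auxiliary machinery -/

open Finset

lemma berBool_singleton (p : ℝ) (b : Bool) :
    berBool p {b} = ENNReal.ofReal (if b then p else 1 - p) := by
  cases b <;> simp [berBool, Measure.dirac_apply' _ (MeasurableSet.singleton _)]

lemma berBool_prob {p : ℝ} (hp0 : 0 ≤ p) (hp1 : p ≤ 1) : IsProbabilityMeasure (berBool p) := by
  constructor
  simp [berBool]
  rw [← ENNReal.ofReal_add hp0 (by linarith)]
  norm_num

instance (p : ℝ) : IsFiniteMeasure (berBool p) := by
  constructor
  simp [berBool]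

/-- weight of one coordinate -/
def wgt (p : ℝ) (b : Bool) : ℝ := if b then p else 1 - p

/-- weight of a sample -/
def wt (n : ℕ) (p : ℝ) (ω : Sym2 (Fin n) → Bool) : ℝ := ∏ i, wgt p (ω i)

/-- real indicator of a boolean -/
def bi (b : Bool) : ℝ := if b then 1 else 0

lemma bi_nonneg (b : Bool) : 0 ≤ bi b := by cases b <;> simp [bi]

lemma wgt_nonneg {p : ℝ} (hp0 : 0 ≤ p) (hp1 : p ≤ 1) (b : Bool) : 0 ≤ wgt p b := by
  cases b <;> simp [wgt] <;> linarith

lemma wt_nonneg {n p} (hp0 : 0 ≤ p) (hp1 : p ≤ 1) (ω) : 0 ≤ wt n p ω :=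
  Finset.prod_nonneg fun _ _ => wgt_nonneg hp0 hp1 _

lemma erMeasure_singleton (n : ℕ) {p : ℝ} (hp0 : 0 ≤ p) (hp1 : p ≤ 1)
    (ω : Sym2 (Fin n) → Bool) :
    erMeasure n p {ω} = ENNReal.ofReal (wt n p ω) := by
  rw [show ({ω} : Set (Sym2 (Fin n) → Bool)) = Set.pi Set.univ (fun i => {ω i}) from
    (Set.univ_pi_singleton ω).symm]
  rw [erMeasure, Measure.pi_pi]
  rw [wt, ENNReal.ofReal_prod_of_nonneg (fun i _ => wgt_nonneg hp0 hp1 _)]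
  exact Finset.prod_congr rfl fun i _ => by rw [berBool_singleton]; rfl

lemma erMeasure_finset (n : ℕ) {p : ℝ} (hp0 : 0 ≤ p) (hp1 : p ≤ 1)
    (F : Finset (Sym2 (Fin n) → Bool)) :
    erMeasure n p ↑F = ENNReal.ofReal (∑ ω ∈ F, wt n p ω) := by
  rw [show (↑F : Set _) = ⋃ ω ∈ F, {ω} by ext; simp]
  rw [measure_biUnion_finset ?_ (fun _ _ => measurableSet_singleton _)]
  · rw [ENNReal.ofReal_sum_of_nonneg (fun i _ => wt_nonneg hp0 hp1 _)]
    exact Finset.sum_congr rfl fun ω _ => erMeasure_singleton n hp0 hp1 ω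
  · intro a _ b _ hab
    simp [Function.onFun, Set.disjoint_singleton_left, hab]

lemma erMeasure_set (n : ℕ) {p : ℝ} (hp0 : 0 ≤ p) (hp1 : p ≤ 1)
    (S : Set (Sym2 (Fin n) → Bool)) [DecidablePred (· ∈ S)] :
    erMeasure n p S = ENNReal.ofReal (∑ ω ∈ Finset.univ.filter (· ∈ S), wt n p ω) := by
  rw [← erMeasure_finset n hp0 hp1]
  congr 1
  ext ω; simp

/-- The factorization engine. -/
lemma sum_prod_eng (n : ℕ) (G : Sym2 (Fin n) → Bool → ℝ) :
    ∑ ω : Sym2 (Fin n) → Bool, ∏ i, G i (ω i) = ∏ i, (G i true + G i false) := by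
  have := Finset.prod_univ_sum (fun _ : Sym2 (Fin n) => (Finset.univ : Finset Bool))
    (fun i b => G i b)
  rw [Fintype.piFinset_univ] at this
  rw [← this]
  exact Finset.prod_congr rfl fun i _ => by simp [Fintype.sum_bool]

/-- Expectation of a monomial of indicators. -/
lemma expect_mono (n : ℕ) (p : ℝ) (S : Finset (Sym2 (Fin n))) :
    ∑ ω : Sym2 (Fin n) → Bool, (∏ i ∈ S, bi (ω i)) * wt n p ω = p ^ S.card := by
  classical
  have h1 : ∀ ω : Sym2 (Fin n) → Bool,
      (∏ i ∈ S, bi (ω i)) * wt n p ω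
        = ∏ i, ((if i ∈ S then bi (ω i) else 1) * wgt p (ω i)) := by
    intro ω
    rw [Finset.prod_mul_distrib, wt]
    congr 1
    rw [Finset.prod_ite_mem, Finset.univ_inter]
  simp_rw [h1]
  rw [sum_prod_eng n (fun i b => (if i ∈ S then bi b else 1) * wgt p b)]
  have h2 : ∀ i : Sym2 (Fin n),
      (if i ∈ S then bi true else 1) * wgt p true + (if i ∈ S then bi false else 1) * wgt p false
        = if i ∈ S then p else 1 := by
    intro i; by_cases h : i ∈ S <;> simp [h, bi, wgt]
  simp_rw [h2]
  rw [Finset.prod_ite_mem, Finset.univ_inter, Finset.prod_const]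

section
variable {n : ℕ}

lemma sym2_blocks {x y : Fin n} (hxy : x ≠ y) (z z' : Fin n) (hz : z ≠ x ∧ z ≠ y)
    (hz' : z' ≠ x ∧ z' ≠ y) :
    s(x,z) ≠ s(y,z') ∧ (s(x,z) = s(x,z') ↔ z = z') ∧ (s(y,z) = s(y,z') ↔ z = z')
      ∧ s(x,y) ≠ s(x,z) ∧ s(x,y) ≠ s(y,z) ∧ s(x,z) ≠ s(y,z) := by
  refine ⟨?_, ?_, ?_, ?_, ?_, ?_⟩ <;> simp [Sym2.eq_iff] <;> tauto

variable (n) in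
/-- vertices other than `x, y` -/
def sxy (x y : Fin n) : Finset (Fin n) := univ.filter (fun z => z ≠ x ∧ z ≠ y)

variable (n) in
/-- indicator that `z` forms a triangle over the edge `xy` -/
def Bz (x y z : Fin n) (ω : Sym2 (Fin n) → Bool) : ℝ := bi (ω s(x,z)) * bi (ω s(y,z))

variable (n) in
/-- number of triangles over the edge `xy` (not counting the edge itself) -/
def Tz (x y : Fin n) (ω : Sym2 (Fin n) → Bool) : ℝ := ∑ z ∈ sxy n x y, Bz n x y z ω

variable {p : ℝ} {x y : Fin n}

lemma expect_M1 (p : ℝ) (hxy : x ≠ y) {z : Fin n} (hz : z ∈ sxy n x y) :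
    ∑ ω : Sym2 (Fin n) → Bool, bi (ω s(x,y)) * Bz n x y z ω * wt n p ω = p * (p^2) := by
  simp only [sxy, mem_filter] at hz
  obtain ⟨-, hz⟩ := hz
  obtain ⟨h1, h2, h3, h4, h5, h6⟩ := sym2_blocks hxy z z hz hz
  have key : ∀ ω : Sym2 (Fin n) → Bool,
      bi (ω s(x,y)) * Bz n x y z ω = ∏ i ∈ ({s(x,y), s(x,z), s(y,z)} : Finset (Sym2 (Fin n))),
        bi (ω i) := by
    intro ω
    rw [Finset.prod_insert (by simp [h4, h5]), Finset.prod_insert (by simp [h6]),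
      Finset.prod_singleton, Bz]
  simp_rw [key]
  rw [expect_mono]
  rw [Finset.card_insert_of_notMem (by simp [h4, h5]),
    Finset.card_insert_of_notMem (by simp [h6]), Finset.card_singleton]
  ring

lemma expect_M2 (p : ℝ) (hxy : x ≠ y) {z z' : Fin n} (hz : z ∈ sxy n x y)
    (hz' : z' ∈ sxy n x y) (hzz' : z ≠ z') :
    ∑ ω : Sym2 (Fin n) → Bool, bi (ω s(x,y)) * (Bz n x y z ω * Bz n x y z' ω) * wt n p ω
      = p * (p^2)^2 := by
  simp only [sxy, mem_filter] at hz hz'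
  obtain ⟨-, hz⟩ := hz
  obtain ⟨-, hz'⟩ := hz'
  obtain ⟨c1, c2, c3, c4, c5, c6⟩ := sym2_blocks hxy z z hz hz
  obtain ⟨d1, d2, d3, d4, d5, d6⟩ := sym2_blocks hxy z' z' hz' hz'
  obtain ⟨e1, e2, e3, -, -, -⟩ := sym2_blocks hxy z z' hz hz'
  obtain ⟨f1, -, -, -, -, -⟩ := sym2_blocks hxy z' z hz' hz
  have hA : s(x,y) ∉ ({s(x,z), s(y,z), s(x,z'), s(y,z')} : Finset (Sym2 (Fin n))) := by
    simp only [mem_insert, mem_singleton]; push_neg; exact ⟨c4, c5, d4, d5⟩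
  have hB : s(x,z) ∉ ({s(y,z), s(x,z'), s(y,z')} : Finset (Sym2 (Fin n))) := by
    simp only [mem_insert, mem_singleton]; push_neg
    exact ⟨c6, fun h => hzz' (e2.mp h), e1⟩
  have hC : s(y,z) ∉ ({s(x,z'), s(y,z')} : Finset (Sym2 (Fin n))) := by
    simp only [mem_insert, mem_singleton]; push_neg
    exact ⟨Ne.symm f1, fun h => hzz' (e3.mp h)⟩
  have hD : s(x,z') ∉ ({s(y,z')} : Finset (Sym2 (Fin n))) := by
    simp only [mem_singleton]; exact d6
  have key : ∀ ω : Sym2 (Fin n) → Bool,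
      bi (ω s(x,y)) * (Bz n x y z ω * Bz n x y z' ω)
        = ∏ i ∈ ({s(x,y), s(x,z), s(y,z), s(x,z'), s(y,z')} : Finset (Sym2 (Fin n))),
        bi (ω i) := by
    intro ω
    rw [Finset.prod_insert hA, Finset.prod_insert hB, Finset.prod_insert hC,
      Finset.prod_insert hD, Finset.prod_singleton]
    simp only [Bz]; ring
  simp_rw [key]
  rw [expect_mono]
  rw [Finset.card_insert_of_notMem hA, Finset.card_insert_of_notMem hB,
    Finset.card_insert_of_notMem hC, Finset.card_insert_of_notMem hD,
    Finset.card_singleton]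
  ring

lemma expect_M3 (p : ℝ) (hxy : x ≠ y) {z1 z2 z3 : Fin n} (h1 : z1 ∈ sxy n x y)
    (h2 : z2 ∈ sxy n x y) (h3 : z3 ∈ sxy n x y) (h12 : z1 ≠ z2) (h13 : z1 ≠ z3)
    (h23 : z2 ≠ z3) :
    ∑ ω : Sym2 (Fin n) → Bool,
      bi (ω s(x,y)) * (Bz n x y z1 ω * (Bz n x y z2 ω * Bz n x y z3 ω)) * wt n p ω
      = p * (p^2)^3 := by
  simp only [sxy, mem_filter] at h1 h2 h3
  obtain ⟨-, h1⟩ := h1; obtain ⟨-, h2⟩ := h2; obtain ⟨-, h3⟩ := h3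
  obtain ⟨a1, -, -, a4, a5, a6⟩ := sym2_blocks hxy z1 z1 h1 h1
  obtain ⟨b1, -, -, b4, b5, b6⟩ := sym2_blocks hxy z2 z2 h2 h2
  obtain ⟨c1, -, -, c4, c5, c6⟩ := sym2_blocks hxy z3 z3 h3 h3
  obtain ⟨d1, d2, d3, -, -, -⟩ := sym2_blocks hxy z1 z2 h1 h2
  obtain ⟨e1, e2, e3, -, -, -⟩ := sym2_blocks hxy z1 z3 h1 h3
  obtain ⟨f1, f2, f3, -, -, -⟩ := sym2_blocks hxy z2 z3 h2 h3
  obtain ⟨g1, -, -, -, -, -⟩ := sym2_blocks hxy z2 z1 h2 h1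
  obtain ⟨i1, -, -, -, -, -⟩ := sym2_blocks hxy z3 z1 h3 h1
  obtain ⟨j1, -, -, -, -, -⟩ := sym2_blocks hxy z3 z2 h3 h2
  have hA : s(x,y) ∉ ({s(x,z1), s(y,z1), s(x,z2), s(y,z2), s(x,z3), s(y,z3)} :
      Finset (Sym2 (Fin n))) := by
    simp only [mem_insert, mem_singleton]; push_neg; exact ⟨a4, a5, b4, b5, c4, c5⟩
  have hB : s(x,z1) ∉ ({s(y,z1), s(x,z2), s(y,z2), s(x,z3), s(y,z3)} :
      Finset (Sym2 (Fin n))) := by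
    simp only [mem_insert, mem_singleton]; push_neg
    exact ⟨a6, fun h => h12 (d2.mp h), d1, fun h => h13 (e2.mp h), e1⟩
  have hC : s(y,z1) ∉ ({s(x,z2), s(y,z2), s(x,z3), s(y,z3)} : Finset (Sym2 (Fin n))) := by
    simp only [mem_insert, mem_singleton]; push_neg
    exact ⟨Ne.symm g1, fun h => h12 (d3.mp h), Ne.symm i1, fun h => h13 (e3.mp h)⟩
  have hD : s(x,z2) ∉ ({s(y,z2), s(x,z3), s(y,z3)} : Finset (Sym2 (Fin n))) := by
    simp only [mem_insert, mem_singleton]; push_neg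
    exact ⟨b6, fun h => h23 (f2.mp h), f1⟩
  have hE : s(y,z2) ∉ ({s(x,z3), s(y,z3)} : Finset (Sym2 (Fin n))) := by
    simp only [mem_insert, mem_singleton]; push_neg
    exact ⟨Ne.symm j1, fun h => h23 (f3.mp h)⟩
  have hF : s(x,z3) ∉ ({s(y,z3)} : Finset (Sym2 (Fin n))) := by
    simp only [mem_singleton]; exact c6
  have key : ∀ ω : Sym2 (Fin n) → Bool,
      bi (ω s(x,y)) * (Bz n x y z1 ω * (Bz n x y z2 ω * Bz n x y z3 ω))
        = ∏ i ∈ ({s(x,y), s(x,z1), s(y,z1), s(x,z2), s(y,z2), s(x,z3), s(y,z3)} :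
            Finset (Sym2 (Fin n))), bi (ω i) := by
    intro ω
    rw [Finset.prod_insert hA, Finset.prod_insert hB, Finset.prod_insert hC,
      Finset.prod_insert hD, Finset.prod_insert hE, Finset.prod_insert hF,
      Finset.prod_singleton]
    simp only [Bz]; ring
  simp_rw [key]
  rw [expect_mono]
  rw [Finset.card_insert_of_notMem hA, Finset.card_insert_of_notMem hB,
    Finset.card_insert_of_notMem hC, Finset.card_insert_of_notMem hD,
    Finset.card_insert_of_notMem hE, Finset.card_insert_of_notMem hF,
    Finset.card_singleton]
  ring

lemma Bz_sq (z : Fin n) (ω : Sym2 (Fin n) → Bool) :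
    Bz n x y z ω * Bz n x y z ω = Bz n x y z ω := by
  cases h1 : ω s(x,z) <;> cases h2 : ω s(y,z) <;> simp [Bz, bi, h1, h2]

lemma expect_inner (hxy : x ≠ y) {z1 z2 z3 : Fin n} (h1 : z1 ∈ sxy n x y)
    (h2 : z2 ∈ sxy n x y) (h3 : z3 ∈ sxy n x y) :
    ∑ ω : Sym2 (Fin n) → Bool,
      bi (ω s(x,y)) * (Bz n x y z1 ω * ((Bz n x y z2 ω - p^2) * (Bz n x y z3 ω - p^2)))
        * wt n p ω
      = if z2 = z3 then (if z1 = z2 then p * p^2 * (1-p^2)^2 else p * (p^2)^2 * (1-p^2))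
        else 0 := by
  set q := p^2 with hq
  by_cases h23 : z2 = z3
  · subst h23
    by_cases h12 : z1 = z2
    · subst h12
      have hpt : ∀ ω : Sym2 (Fin n) → Bool,
          bi (ω s(x,y)) * (Bz n x y z1 ω * ((Bz n x y z1 ω - q) * (Bz n x y z1 ω - q)))
            * wt n p ω
          = (1-q)^2 * (bi (ω s(x,y)) * Bz n x y z1 ω * wt n p ω) := by
        intro ω
        have h := Bz_sq (x := x) (y := y) z1 ω
        have : Bz n x y z1 ω * ((Bz n x y z1 ω - q) * (Bz n x y z1 ω - q))
            = (1-q)^2 * Bz n x y z1 ω := by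
          linear_combination (Bz n x y z1 ω + 1 - 2*q) * h
        rw [this]; ring
      simp_rw [hpt]
      rw [← Finset.mul_sum, expect_M1 p hxy h1]
      split_ifs <;> first | ring | tauto
    · have hpt : ∀ ω : Sym2 (Fin n) → Bool,
          bi (ω s(x,y)) * (Bz n x y z1 ω * ((Bz n x y z2 ω - q) * (Bz n x y z2 ω - q)))
            * wt n p ω
          = (1-2*q) * (bi (ω s(x,y)) * (Bz n x y z1 ω * Bz n x y z2 ω) * wt n p ω)
            + q^2 * (bi (ω s(x,y)) * Bz n x y z1 ω * wt n p ω) := by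
        intro ω
        have h := Bz_sq (x := x) (y := y) z2 ω
        have : Bz n x y z1 ω * ((Bz n x y z2 ω - q) * (Bz n x y z2 ω - q))
            = (1-2*q) * (Bz n x y z1 ω * Bz n x y z2 ω) + q^2 * Bz n x y z1 ω := by
          linear_combination Bz n x y z1 ω * h
        rw [mul_comm (bi (ω s(x,y))) _, ← mul_assoc]
        linear_combination (wt n p ω * bi (ω s(x,y))) * this
      simp_rw [hpt]
      rw [Finset.sum_add_distrib, ← Finset.mul_sum, ← Finset.mul_sum,
        expect_M1 p hxy h1, expect_M2 p hxy h1 h2 h12]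
      split_ifs <;> first | ring | tauto
  · by_cases h12 : z1 = z2
    · subst h12
      have hpt : ∀ ω : Sym2 (Fin n) → Bool,
          bi (ω s(x,y)) * (Bz n x y z1 ω * ((Bz n x y z1 ω - q) * (Bz n x y z3 ω - q)))
            * wt n p ω
          = (1-q) * (bi (ω s(x,y)) * (Bz n x y z1 ω * Bz n x y z3 ω) * wt n p ω)
            - q*(1-q) * (bi (ω s(x,y)) * Bz n x y z1 ω * wt n p ω) := by
        intro ω
        have h := Bz_sq (x := x) (y := y) z1 ω
        have : Bz n x y z1 ω * ((Bz n x y z1 ω - q) * (Bz n x y z3 ω - q))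
            = (1-q) * (Bz n x y z1 ω * Bz n x y z3 ω) - q*(1-q) * Bz n x y z1 ω := by
          linear_combination (Bz n x y z3 ω - q) * h
        rw [mul_comm (bi (ω s(x,y))) _, ← mul_assoc]
        linear_combination (wt n p ω * bi (ω s(x,y))) * this
      simp_rw [hpt]
      rw [Finset.sum_sub_distrib, ← Finset.mul_sum, ← Finset.mul_sum,
        expect_M1 p hxy h1, expect_M2 p hxy h1 h3 h23]
      split_ifs <;> first | ring | tauto
    · by_cases h13 : z1 = z3
      · subst h13
        have hpt : ∀ ω : Sym2 (Fin n) → Bool,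
            bi (ω s(x,y)) * (Bz n x y z1 ω * ((Bz n x y z2 ω - q) * (Bz n x y z1 ω - q)))
              * wt n p ω
            = (1-q) * (bi (ω s(x,y)) * (Bz n x y z1 ω * Bz n x y z2 ω) * wt n p ω)
              - q*(1-q) * (bi (ω s(x,y)) * Bz n x y z1 ω * wt n p ω) := by
          intro ω
          have h := Bz_sq (x := x) (y := y) z1 ω
          have : Bz n x y z1 ω * ((Bz n x y z2 ω - q) * (Bz n x y z1 ω - q))
              = (1-q) * (Bz n x y z1 ω * Bz n x y z2 ω) - q*(1-q) * Bz n x y z1 ω := by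
            linear_combination (Bz n x y z2 ω - q) * h
          rw [mul_comm (bi (ω s(x,y))) _, ← mul_assoc]
          linear_combination (wt n p ω * bi (ω s(x,y))) * this
        simp_rw [hpt]
        rw [Finset.sum_sub_distrib, ← Finset.mul_sum, ← Finset.mul_sum,
          expect_M1 p hxy h1, expect_M2 p hxy h1 h2 h12]
        split_ifs <;> first | ring | tauto
      · have hpt : ∀ ω : Sym2 (Fin n) → Bool,
            bi (ω s(x,y)) * (Bz n x y z1 ω * ((Bz n x y z2 ω - q) * (Bz n x y z3 ω - q)))
              * wt n p ω
            = (bi (ω s(x,y)) * (Bz n x y z1 ω * (Bz n x y z2 ω * Bz n x y z3 ω)) * wt n p ω)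
              - q * (bi (ω s(x,y)) * (Bz n x y z1 ω * Bz n x y z2 ω) * wt n p ω)
              - q * (bi (ω s(x,y)) * (Bz n x y z1 ω * Bz n x y z3 ω) * wt n p ω)
              + q^2 * (bi (ω s(x,y)) * Bz n x y z1 ω * wt n p ω) := by
          intro ω; ring
        simp_rw [hpt]
        rw [Finset.sum_add_distrib, Finset.sum_sub_distrib, Finset.sum_sub_distrib,
          ← Finset.mul_sum, ← Finset.mul_sum, ← Finset.mul_sum,
          expect_M1 p hxy h1, expect_M2 p hxy h1 h2 h12, expect_M2 p hxy h1 h3 h13,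
          expect_M3 p hxy h1 h2 h3 h12 h13 h23]
        split_ifs <;> first | ring | tauto

lemma edge_expect (hxy : x ≠ y) :
    ∑ ω : Sym2 (Fin n) → Bool,
      bi (ω s(x,y)) * (Tz n x y ω * (Tz n x y ω - ((sxy n x y).card : ℝ) * p^2)^2)
        * wt n p ω
      = ((sxy n x y).card : ℝ) * (p * p^2 * (1-p^2)^2)
        + ((sxy n x y).card : ℝ) * (((sxy n x y).card : ℝ) - 1) * (p * (p^2)^2 * (1-p^2)) := by
  classical
  set q := p^2 with hq
  set s0 := sxy n x y with hs0
  set m := (s0.card : ℝ) with hm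
  have hT : ∀ ω : Sym2 (Fin n) → Bool,
      Tz n x y ω * (Tz n x y ω - m * q)^2
        = ∑ z1 ∈ s0, ∑ z2 ∈ s0, ∑ z3 ∈ s0,
            Bz n x y z1 ω * ((Bz n x y z2 ω - q) * (Bz n x y z3 ω - q)) := by
    intro ω
    have hsub : Tz n x y ω - m * q = ∑ z ∈ s0, (Bz n x y z ω - q) := by
      rw [Finset.sum_sub_distrib, Finset.sum_const, nsmul_eq_mul, Tz]
    have hprod : (∑ z2 ∈ s0, (Bz n x y z2 ω - q)) * (∑ z3 ∈ s0, (Bz n x y z3 ω - q))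
        = ∑ z2 ∈ s0, ∑ z3 ∈ s0, (Bz n x y z2 ω - q) * (Bz n x y z3 ω - q) :=
      Finset.sum_mul_sum _ _ _ _
    rw [sq, hsub, hprod, Tz, Finset.sum_mul]
    refine Finset.sum_congr rfl fun z1 _ => ?_
    rw [Finset.mul_sum]
    refine Finset.sum_congr rfl fun z2 _ => ?_
    rw [Finset.mul_sum]
  have hsplit : ∀ ω : Sym2 (Fin n) → Bool,
      bi (ω s(x,y)) * (Tz n x y ω * (Tz n x y ω - m * q)^2) * wt n p ω
        = ∑ z1 ∈ s0, ∑ z2 ∈ s0, ∑ z3 ∈ s0,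
            bi (ω s(x,y)) * (Bz n x y z1 ω * ((Bz n x y z2 ω - q) * (Bz n x y z3 ω - q)))
              * wt n p ω := by
    intro ω
    rw [hT ω, Finset.mul_sum, Finset.sum_mul]
    refine Finset.sum_congr rfl fun z1 _ => ?_
    rw [Finset.mul_sum, Finset.sum_mul]
    refine Finset.sum_congr rfl fun z2 _ => ?_
    rw [Finset.mul_sum, Finset.sum_mul]
  simp_rw [hsplit]
  rw [Finset.sum_comm]
  have step : ∀ z1 ∈ s0,
      (∑ ω : Sym2 (Fin n) → Bool, ∑ z2 ∈ s0, ∑ z3 ∈ s0,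
        bi (ω s(x,y)) * (Bz n x y z1 ω * ((Bz n x y z2 ω - q) * (Bz n x y z3 ω - q)))
          * wt n p ω)
      = (p * q * (1-q)^2) + (m - 1) * (p * q^2 * (1-q)) := by
    intro z1 hz1
    rw [Finset.sum_comm]
    have step2 : ∀ z2 ∈ s0,
        (∑ ω : Sym2 (Fin n) → Bool, ∑ z3 ∈ s0,
          bi (ω s(x,y)) * (Bz n x y z1 ω * ((Bz n x y z2 ω - q) * (Bz n x y z3 ω - q)))
            * wt n p ω)
        = if z1 = z2 then p * q * (1-q)^2 else p * q^2 * (1-q) := by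
      intro z2 hz2
      rw [Finset.sum_comm]
      have : ∀ z3 ∈ s0,
          (∑ ω : Sym2 (Fin n) → Bool,
            bi (ω s(x,y)) * (Bz n x y z1 ω * ((Bz n x y z2 ω - q) * (Bz n x y z3 ω - q)))
              * wt n p ω)
          = if z2 = z3 then (if z1 = z2 then p * q * (1-q)^2 else p * q^2 * (1-q)) else 0 :=
        fun z3 hz3 => expect_inner hxy hz1 hz2 hz3
      rw [Finset.sum_congr rfl this, Finset.sum_ite_eq s0 z2
        (fun _ => if z1 = z2 then p * q * (1-q)^2 else p * q^2 * (1-q)), if_pos hz2]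
    rw [Finset.sum_congr rfl step2]
    have : ∀ z2 ∈ s0, (if z1 = z2 then p * q * (1-q)^2 else p * q^2 * (1-q))
        = p * q^2 * (1-q) + (if z2 = z1 then p * q * (1-q)^2 - p * q^2 * (1-q) else 0) := by
      intro z2 _
      by_cases h : z1 = z2
      · rw [if_pos h, if_pos h.symm]; ring
      · rw [if_neg h, if_neg (Ne.symm h)]; ring
    rw [Finset.sum_congr rfl this, Finset.sum_add_distrib, Finset.sum_const,
      Finset.sum_ite_eq' s0 z1 (fun _ => p * q * (1-q)^2 - p * q^2 * (1-q)), if_pos hz1,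
      nsmul_eq_mul]
    ring
  rw [Finset.sum_congr rfl step, Finset.sum_const, nsmul_eq_mul]
  ring

lemma edge_bound (hp0 : 0 ≤ p) (hp1 : p ≤ 1) (hxy : x ≠ y) :
    ∑ ω : Sym2 (Fin n) → Bool,
      bi (ω s(x,y)) * (Tz n x y ω * (Tz n x y ω - ((sxy n x y).card : ℝ) * p^2)^2)
        * wt n p ω
      ≤ p * (((sxy n x y).card : ℝ) * p^2 + (((sxy n x y).card : ℝ) * p^2)^2) := by
  rw [edge_expect hxy]
  set m := ((sxy n x y).card : ℝ) with hm
  have hm0 : 0 ≤ m := Nat.cast_nonneg _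
  have hq0 : 0 ≤ p^2 := sq_nonneg p
  have hq1 : p^2 ≤ 1 := by nlinarith
  nlinarith [mul_nonneg hm0 hm0, mul_nonneg (mul_nonneg hp0 hq0) hq0,
    mul_nonneg hm0 (mul_nonneg (mul_nonneg hp0 hq0) hq0),
    mul_nonneg (mul_nonneg hm0 hm0) (mul_nonneg (mul_nonneg hp0 hq0) hq0),
    mul_nonneg hm0 (mul_nonneg hp0 hq0)]
end

lemma ncard_setOf {α : Type*} [Fintype α] [DecidableEq α] (P : α → Prop) [DecidablePred P] :
    {x | P x}.ncard = (univ.filter P).card := by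
  rw [← Set.ncard_coe_finset]; congr 1; ext; simp

lemma erGraph_edge (n : ℕ) (ω : Sym2 (Fin n) → Bool) (e : Sym2 (Fin n)) :
    e ∈ (erGraph n ω).edgeSet ↔ ¬ e.IsDiag ∧ ω e = true := by
  induction e using Sym2.inductionOn with
  | hf a b => simp [erGraph, Sym2.mk_isDiag_iff]

lemma card_sxy {n : ℕ} {x y : Fin n} (hxy : x ≠ y) : (sxy n x y).card = n - 2 := by
  have h1 : sxy n x y = univ \ {x, y} := by
    ext z
    simp only [sxy, mem_filter, mem_univ, true_and, mem_sdiff, mem_insert, mem_singleton]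
    simp
  have h2 : ({x, y} : Finset (Fin n)).card = 2 := by
    rw [card_insert_of_notMem (by simp [hxy]), card_singleton]
  rw [h1, card_sdiff_of_subset (subset_univ _), card_univ, Fintype.card_fin, h2]

lemma tri_count {n : ℕ} {x y : Fin n} (hxy : x ≠ y) (ω : Sym2 (Fin n) → Bool)
    (hωe : ω s(x,y) = true) [DecidablePred fun z => ω s(x,z) = true ∧ ω s(y,z) = true] :
    {t' | t' ∈ (erGraph n ω).cliqueSet 3 ∧ ∀ v ∈ s(x,y), v ∈ t'}.ncard
      = ((sxy n x y).filter (fun z => ω s(x,z) = true ∧ ω s(y,z) = true)).card := by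
  classical
  have him : {t' | t' ∈ (erGraph n ω).cliqueSet 3 ∧ ∀ v ∈ s(x,y), v ∈ t'}
      = (fun z => ({x,y,z} : Finset (Fin n))) ''
        ↑((sxy n x y).filter (fun z => ω s(x,z) = true ∧ ω s(y,z) = true)) := by
    ext t
    simp only [Set.mem_setOf_eq, Set.mem_image, Finset.coe_filter, Set.mem_setOf_eq,
      SimpleGraph.mem_cliqueSet_iff]
    constructor
    · rintro ⟨hcl, hcov⟩
      have hx : x ∈ t := hcov x (by simp)
      have hy : y ∈ t := hcov y (by simp)
      have hsub : {x, y} ⊆ t := by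
        intro v hv; simp at hv; rcases hv with rfl | rfl <;> assumption
      have hcard : (t \ {x,y}).card = 1 := by
        rw [card_sdiff_of_subset hsub, hcl.card_eq, card_insert_of_notMem (by simp [hxy]),
          card_singleton]
      obtain ⟨z, hz⟩ := Finset.card_eq_one.mp hcard
      have hzt : z ∈ t ∧ z ∉ ({x,y} : Finset (Fin n)) := by
        have := hz ▸ Finset.mem_singleton_self z
        exact Finset.mem_sdiff.mp this
      have hzx : z ≠ x := fun h => hzt.2 (by simp [h])
      have hzy : z ≠ y := fun h => hzt.2 (by simp [h])
      have ht : t = {x, y, z} := by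
        have h1 : t \ {x,y} ∪ {x,y} = t := Finset.sdiff_union_of_subset hsub
        rw [hz] at h1
        rw [← h1]; ext v; simp; tauto
      refine ⟨z, ⟨⟨by simp [sxy, hzx, hzy], ?_, ?_⟩, ht.symm⟩⟩
      · exact (hcl.isClique (by exact_mod_cast hx) (by exact_mod_cast hzt.1) (Ne.symm hzx)).2
      · exact (hcl.isClique (by exact_mod_cast hy) (by exact_mod_cast hzt.1) (Ne.symm hzy)).2
    · rintro ⟨z, ⟨⟨hz, hxz, hyz⟩, rfl⟩⟩
      simp only [sxy, mem_filter] at hz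
      refine ⟨?_, ?_⟩
      · rw [SimpleGraph.is3Clique_iff]
        exact ⟨x, y, z, ⟨hxy, hωe⟩, ⟨Ne.symm hz.2.1, hxz⟩, ⟨Ne.symm hz.2.2, hyz⟩, rfl⟩
      · intro v hv
        rw [Sym2.mem_iff] at hv
        rcases hv with rfl | rfl <;> simp
  rw [him, Set.ncard_image_of_injOn, Set.ncard_coe_finset]
  intro z1 hz1 z2 hz2 h
  simp only [Finset.coe_filter, Set.mem_setOf_eq, sxy, mem_filter] at hz1 hz2
  have h' : ({x,y,z1} : Finset (Fin n)) = {x,y,z2} := h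
  have : z1 ∈ ({x, y, z2} : Finset (Fin n)) := h' ▸ (by simp : z1 ∈ ({x,y,z1} : Finset (Fin n)))
  simp only [mem_insert, mem_singleton] at this
  rcases this with rfl | rfl | rfl
  · exact absurd rfl hz1.1.2.1
  · exact absurd rfl hz1.1.2.2
  · rfl

lemma Tz_eq {n : ℕ} (x y : Fin n) (ω : Sym2 (Fin n) → Bool)
    [DecidablePred fun z => ω s(x,z) = true ∧ ω s(y,z) = true] :
    Tz n x y ω
      = (((sxy n x y).filter (fun z => ω s(x,z) = true ∧ ω s(y,z) = true)).card : ℝ) := by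
  classical
  rw [Tz]
  have : ∀ z ∈ sxy n x y, Bz n x y z ω
      = if (ω s(x,z) = true ∧ ω s(y,z) = true) then (1:ℝ) else 0 := by
    intro z _
    by_cases h : (ω s(x,z) = true ∧ ω s(y,z) = true)
    · rw [if_pos h]; simp [Bz, bi, h.1, h.2]
    · rw [if_neg h]
      rcases not_and_or.mp h with h' | h'
      · have hf : ω s(x,z) = false := by revert h'; cases ω s(x,z) <;> simp
        simp [Bz, bi, hf]
      · have hf : ω s(y,z) = false := by revert h'; cases ω s(y,z) <;> simp
        simp [Bz, bi, hf]
  rw [Finset.sum_congr rfl this, Finset.sum_boole]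

/-- the number of triangles of `erGraph n ω` containing the pair `e` -/
def Tc (n : ℕ) (ω : Sym2 (Fin n) → Bool) (e : Sym2 (Fin n)) : ℕ :=
  {t' | t' ∈ (erGraph n ω).cliqueSet 3 ∧ ∀ v ∈ e, v ∈ t'}.ncard

/-- the number of triangles of `erGraph n ω` containing a heavy edge -/
def Ncnt (n : ℕ) (σ d : ℝ) (ω : Sym2 (Fin n) → Bool) : ℕ :=
  {t | t ∈ (erGraph n ω).cliqueSet 3 ∧ ∃ e ∈ (erGraph n ω).edgeSet, (∀ v ∈ e, v ∈ t) ∧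
    (1 + σ) * d ≤ ((Tc n ω e : ℕ) : ℝ)}.ncard

lemma count_le (n : ℕ) (σ d : ℝ) (hσ : 0 < σ) (hd : 0 < d) (ω : Sym2 (Fin n) → Bool) :
    ((Ncnt n σ d ω : ℕ) : ℝ)
      ≤ (σ^2*d^2)⁻¹ * ∑ e ∈ univ.filter (fun e : Sym2 (Fin n) => ¬ e.IsDiag),
          bi (ω e) * ((Tc n ω e : ℝ) * ((Tc n ω e : ℝ) - d)^2) := by
  classical
  set ND := univ.filter (fun e : Sym2 (Fin n) => ¬ e.IsDiag) with hND
  set heavyF := ND.filter (fun e => ω e = true ∧ (1 + σ) * d ≤ ((Tc n ω e : ℕ) : ℝ))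
    with hheavyF
  set StF : Sym2 (Fin n) → Finset (Finset (Fin n)) :=
    fun e => univ.filter (fun t => t ∈ (erGraph n ω).cliqueSet 3 ∧ ∀ v ∈ e, v ∈ t) with hStF
  have hsub : {t | t ∈ (erGraph n ω).cliqueSet 3 ∧ ∃ e ∈ (erGraph n ω).edgeSet,
      (∀ v ∈ e, v ∈ t) ∧ (1 + σ) * d ≤ ((Tc n ω e : ℕ) : ℝ)}
      ⊆ ↑(heavyF.biUnion StF) := by
    rintro t ⟨hcl, e, hedge, hcov, hheavy⟩
    obtain ⟨hdiag, hωe⟩ := (erGraph_edge n ω e).mp hedge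
    simp only [Finset.coe_biUnion, Set.mem_iUnion]
    refine ⟨e, ?_, ?_⟩
    · simp only [hheavyF, Finset.mem_coe, mem_filter, hND, mem_univ, true_and]
      exact ⟨hdiag, hωe, hheavy⟩
    · simp only [Finset.mem_coe, hStF, mem_filter, mem_univ, true_and]
      exact ⟨hcl, hcov⟩
  have h1 : (Ncnt n σ d ω : ℝ) ≤ ∑ e ∈ heavyF, ((Tc n ω e : ℕ) : ℝ) := by
    have := Set.ncard_le_ncard hsub (Finset.finite_toSet _)
    rw [Set.ncard_coe_finset] at this
    have h2 := Finset.card_biUnion_le (s := heavyF) (t := StF)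
    have h3 : ∀ e ∈ heavyF, (StF e).card = Tc n ω e := by
      intro e _
      rw [Tc, ncard_setOf]
    calc (Ncnt n σ d ω : ℝ) ≤ ((heavyF.biUnion StF).card : ℝ) := by
          exact_mod_cast le_trans (by exact_mod_cast this) (le_refl _)
      _ ≤ ((∑ e ∈ heavyF, (StF e).card : ℕ) : ℝ) := by exact_mod_cast h2
      _ = ∑ e ∈ heavyF, ((Tc n ω e : ℕ) : ℝ) := by
          push_cast
          exact Finset.sum_congr rfl fun e he => by rw [h3 e he]
  have h4 : ∀ e ∈ heavyF, ((Tc n ω e : ℕ) : ℝ)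
      ≤ (σ^2*d^2)⁻¹ * (bi (ω e) * ((Tc n ω e : ℝ) * ((Tc n ω e : ℝ) - d)^2)) := by
    intro e he
    simp only [hheavyF, mem_filter] at he
    obtain ⟨-, hωe, hheavy⟩ := he
    have hbi : bi (ω e) = 1 := by rw [hωe]; simp [bi]
    rw [hbi, one_mul]
    have hTd : σ * d ≤ (Tc n ω e : ℝ) - d := by nlinarith
    have hsd : 0 < σ^2*d^2 := by positivity
    have hsq : σ^2*d^2 ≤ ((Tc n ω e : ℝ) - d)^2 := by
      nlinarith [mul_pos hσ hd, sq_nonneg ((Tc n ω e : ℝ) - d - σ*d),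
        sq_nonneg ((Tc n ω e : ℝ) - d + σ*d)]
    have hT0 : (0:ℝ) ≤ (Tc n ω e : ℝ) := Nat.cast_nonneg _
    rw [inv_mul_eq_div, le_div_iff₀ hsd]
    exact mul_le_mul_of_nonneg_left hsq hT0
  have h5 : ∑ e ∈ heavyF, ((Tc n ω e : ℕ) : ℝ)
      ≤ ∑ e ∈ heavyF,
        (σ^2*d^2)⁻¹ * (bi (ω e) * ((Tc n ω e : ℝ) * ((Tc n ω e : ℝ) - d)^2)) :=
    Finset.sum_le_sum h4
  have h6 : ∑ e ∈ heavyF,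
        (σ^2*d^2)⁻¹ * (bi (ω e) * ((Tc n ω e : ℝ) * ((Tc n ω e : ℝ) - d)^2))
      ≤ ∑ e ∈ ND,
        (σ^2*d^2)⁻¹ * (bi (ω e) * ((Tc n ω e : ℝ) * ((Tc n ω e : ℝ) - d)^2)) := by
    refine Finset.sum_le_sum_of_subset_of_nonneg (Finset.filter_subset _ _) ?_
    intro e _ _
    have := bi_nonneg (ω e)
    have hT0 : (0:ℝ) ≤ (Tc n ω e : ℝ) := Nat.cast_nonneg _
    positivity
  rw [Finset.mul_sum]
  exact le_trans h1 (le_trans h5 h6)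

lemma edge_A {n : ℕ} {p : ℝ} (hp0 : 0 ≤ p) (hp1 : p ≤ 1) (e : Sym2 (Fin n))
    (he : ¬ e.IsDiag) :
    ∑ ω : Sym2 (Fin n) → Bool,
      bi (ω e) * ((Tc n ω e : ℝ) * ((Tc n ω e : ℝ) - ((n:ℝ)-2)*p^2)^2) * wt n p ω
      ≤ p * (((n:ℝ)-2)*p^2 + (((n:ℝ)-2)*p^2)^2) := by
  classical
  induction e using Sym2.inductionOn with
  | hf x y =>
    have hxy : x ≠ y := by simpa [Sym2.mk_isDiag_iff] using he
    have hn2 : 2 ≤ n := by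
      haveI : Nontrivial (Fin n) := ⟨x, y, hxy⟩
      have := Fintype.one_lt_card (α := Fin n)
      rwa [Fintype.card_fin] at this
    have hcast : ((n:ℝ) - 2) = ((sxy n x y).card : ℝ) := by
      rw [card_sxy hxy]
      push_cast [Nat.cast_sub hn2]
      ring
    rw [hcast]
    have hpt : ∀ ω : Sym2 (Fin n) → Bool,
        bi (ω s(x,y)) * ((Tc n ω s(x,y) : ℝ)
            * ((Tc n ω s(x,y) : ℝ) - ((sxy n x y).card : ℝ)*p^2)^2) * wt n p ω
          = bi (ω s(x,y)) * (Tz n x y ω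
            * (Tz n x y ω - ((sxy n x y).card : ℝ)*p^2)^2) * wt n p ω := by
      intro ω
      cases hb : ω s(x,y) with
      | false => simp [bi]
      | true =>
        have hTc : (Tc n ω s(x,y) : ℝ) = Tz n x y ω := by
          rw [Tc, tri_count hxy ω hb, Tz_eq]
        rw [hTc]
    rw [Finset.sum_congr rfl (fun ω _ => hpt ω)]
    exact edge_bound hp0 hp1 hxy

lemma arith_final {nr pr σ ε d : ℝ} (hn : 3 ≤ nr) (hp : 0 < pr) (hp1 : pr ≤ 1)
    (hσ : 0 < σ) (hε : 0 < ε) (hd1 : 1 ≤ d) (hdle : d ≤ nr * pr^2) :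
    (ε * nr^3 * pr^3)⁻¹ * ((σ^2*d^2)⁻¹ * (nr^2 * (pr * (d + d^2))))
      ≤ 2 / (ε * (σ^2 * d)) := by
  have hd0 : 0 < d := by linarith
  have hc : 0 < ε * nr^3 * pr^3 := by positivity
  have hs : 0 < σ^2*d^2 := by positivity
  have h1 : d + d^2 ≤ 2*d^2 := by nlinarith
  have h2 : (ε * nr^3 * pr^3)⁻¹ * ((σ^2*d^2)⁻¹ * (nr^2 * (pr * (d + d^2))))
      = nr^2 * pr * (d + d^2) / (ε * nr^3 * pr^3 * (σ^2*d^2)) := by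
    field_simp
  rw [h2, div_le_div_iff₀ (by positivity) (by positivity)]
  have key : nr^2 * (d + d^2) ≤ 2 * (nr^3 * pr^2 * d) := by
    have h3 : d^2 ≤ d * (nr * pr^2) := by nlinarith
    nlinarith [sq_nonneg nr, mul_pos (mul_pos hd0 hd0) hp]
  nlinarith [mul_le_mul_of_nonneg_left key
      (le_of_lt (by positivity : (0:ℝ) < ε * σ^2 * d * pr))]

lemma main_bound (n : ℕ) (p σ ε : ℝ) (hp0 : 0 ≤ p) (hp1 : p ≤ 1) (hσ : 0 < σ)
    (hε : 0 < ε) (hn : 3 ≤ n) (hd1 : 1 ≤ ((n:ℝ)-2)*p^2) :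
    erMeasure n p {ω | ¬ ((Ncnt n σ (((n:ℝ)-2)*p^2) ω : ℝ) ≤ ε * (n:ℝ)^3 * p^3)}
      ≤ ENNReal.ofReal (2 / (ε * (σ^2 * (((n:ℝ)-2)*p^2)))) := by
  classical
  set d : ℝ := ((n:ℝ)-2)*p^2 with hd
  have hnr : (3:ℝ) ≤ (n:ℝ) := by exact_mod_cast hn
  have hd0 : 0 < d := by linarith
  have hp : 0 < p := by
    by_contra h
    push_neg at h
    have hzero : p = 0 := le_antisymm h hp0
    have : d = 0 := by rw [hd, hzero]; ring
    linarith
  have hc : 0 < ε * (n:ℝ)^3 * p^3 := by positivity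
  set c : ℝ := ε * (n:ℝ)^3 * p^3 with hcdef
  set ND := univ.filter (fun e : Sym2 (Fin n) => ¬ e.IsDiag) with hND
  set X : (Sym2 (Fin n) → Bool) → ℝ := fun ω =>
    ∑ e ∈ ND, bi (ω e) * ((Tc n ω e : ℝ) * ((Tc n ω e : ℝ) - d)^2) with hX
  have hX0 : ∀ ω, 0 ≤ X ω := by
    intro ω
    refine Finset.sum_nonneg fun e _ => ?_
    have := bi_nonneg (ω e)
    have hT0 : (0:ℝ) ≤ (Tc n ω e : ℝ) := Nat.cast_nonneg _
    positivity
  rw [erMeasure_set n hp0 hp1]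
  apply ENNReal.ofReal_le_ofReal
  have step1 : ∑ ω ∈ univ.filter
        (· ∈ {ω | ¬ ((Ncnt n σ d ω : ℝ) ≤ c)}), wt n p ω
      ≤ ∑ ω ∈ univ.filter (· ∈ {ω | ¬ ((Ncnt n σ d ω : ℝ) ≤ c)}),
          c⁻¹ * ((σ^2*d^2)⁻¹ * (X ω * wt n p ω)) := by
    refine Finset.sum_le_sum fun ω hω => ?_
    simp only [mem_filter, Set.mem_setOf_eq, not_le] at hω
    have hlt : c < (Ncnt n σ d ω : ℝ) := hω.2
    have hle : (Ncnt n σ d ω : ℝ) ≤ (σ^2*d^2)⁻¹ * X ω := count_le n σ d hσ hd0 ω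
    have hw : 0 ≤ wt n p ω := wt_nonneg hp0 hp1 ω
    have hratio : 1 ≤ c⁻¹ * ((σ^2*d^2)⁻¹ * X ω) := by
      have h' : c ≤ (σ^2*d^2)⁻¹ * X ω := le_trans (le_of_lt hlt) hle
      have h2 : 1 ≤ ((σ^2*d^2)⁻¹ * X ω) / c := (one_le_div hc).mpr h'
      rw [div_eq_mul_inv, mul_comm] at h2
      exact h2
    calc wt n p ω = 1 * wt n p ω := by ring
      _ ≤ (c⁻¹ * ((σ^2*d^2)⁻¹ * X ω)) * wt n p ω := by
          exact mul_le_mul_of_nonneg_right hratio hw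
      _ = c⁻¹ * ((σ^2*d^2)⁻¹ * (X ω * wt n p ω)) := by ring
  have step2 : ∑ ω ∈ univ.filter (· ∈ {ω | ¬ ((Ncnt n σ d ω : ℝ) ≤ c)}),
        c⁻¹ * ((σ^2*d^2)⁻¹ * (X ω * wt n p ω))
      ≤ ∑ ω : Sym2 (Fin n) → Bool, c⁻¹ * ((σ^2*d^2)⁻¹ * (X ω * wt n p ω)) := by
    refine Finset.sum_le_sum_of_subset_of_nonneg (Finset.filter_subset _ _) ?_
    intro ω _ _
    have := hX0 ω
    have hw := wt_nonneg hp0 hp1 ω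
    positivity
  have step3 : ∑ ω : Sym2 (Fin n) → Bool, c⁻¹ * ((σ^2*d^2)⁻¹ * (X ω * wt n p ω))
      = c⁻¹ * ((σ^2*d^2)⁻¹ * ∑ e ∈ ND, ∑ ω : Sym2 (Fin n) → Bool,
          bi (ω e) * ((Tc n ω e : ℝ) * ((Tc n ω e : ℝ) - d)^2) * wt n p ω) := by
    rw [← Finset.mul_sum, ← Finset.mul_sum]
    congr 1
    congr 1
    rw [Finset.sum_comm]
    refine Finset.sum_congr rfl fun ω _ => ?_
    rw [hX, Finset.sum_mul]
  have step4 : ∑ e ∈ ND, ∑ ω : Sym2 (Fin n) → Bool,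
        bi (ω e) * ((Tc n ω e : ℝ) * ((Tc n ω e : ℝ) - d)^2) * wt n p ω
      ≤ (n:ℝ)^2 * (p * (d + d^2)) := by
    have hcard : (ND.card : ℝ) ≤ (n:ℝ)^2 := by
      have h1 : ND.card ≤ Fintype.card (Sym2 (Fin n)) := Finset.card_le_univ _
      have h2 : Fintype.card (Sym2 (Fin n)) = n * (n+1) / 2 := by
        rw [Sym2.card, Fintype.card_fin, Nat.choose_two_right, Nat.add_sub_cancel,
          Nat.mul_comm]
      have h3 : n * (n+1) / 2 ≤ n^2 := by
        have : n * (n+1) ≤ 2 * n^2 := by nlinarith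
        calc n * (n+1) / 2 ≤ 2 * n^2 / 2 := Nat.div_le_div_right this
          _ = n^2 := by omega
      have : ND.card ≤ n^2 := le_trans h1 (h2 ▸ h3)
      exact_mod_cast this
    have hA : ∀ e ∈ ND, ∑ ω : Sym2 (Fin n) → Bool,
          bi (ω e) * ((Tc n ω e : ℝ) * ((Tc n ω e : ℝ) - d)^2) * wt n p ω
        ≤ p * (d + d^2) := by
      intro e he
      simp only [hND, mem_filter] at he
      exact edge_A hp0 hp1 e he.2
    calc ∑ e ∈ ND, ∑ ω : Sym2 (Fin n) → Bool,
          bi (ω e) * ((Tc n ω e : ℝ) * ((Tc n ω e : ℝ) - d)^2) * wt n p ω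
        ≤ ∑ _e ∈ ND, p * (d + d^2) := Finset.sum_le_sum hA
      _ = (ND.card : ℝ) * (p * (d + d^2)) := by rw [Finset.sum_const, nsmul_eq_mul]
      _ ≤ (n:ℝ)^2 * (p * (d + d^2)) := by
          have hpd : 0 ≤ p * (d + d^2) := by positivity
          exact mul_le_mul_of_nonneg_right hcard hpd
  have hdle : d ≤ (n:ℝ) * p^2 := by
    rw [hd]; nlinarith [sq_nonneg p]
  calc ∑ ω ∈ univ.filter (· ∈ {ω | ¬ ((Ncnt n σ d ω : ℝ) ≤ c)}), wt n p ω
      ≤ ∑ ω : Sym2 (Fin n) → Bool, c⁻¹ * ((σ^2*d^2)⁻¹ * (X ω * wt n p ω)) :=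
        le_trans step1 step2
    _ = c⁻¹ * ((σ^2*d^2)⁻¹ * ∑ e ∈ ND, ∑ ω : Sym2 (Fin n) → Bool,
          bi (ω e) * ((Tc n ω e : ℝ) * ((Tc n ω e : ℝ) - d)^2) * wt n p ω) := step3
    _ ≤ c⁻¹ * ((σ^2*d^2)⁻¹ * ((n:ℝ)^2 * (p * (d + d^2)))) := by
        have h1 : (0:ℝ) ≤ c⁻¹ := by positivity
        have h2 : (0:ℝ) ≤ (σ^2*d^2)⁻¹ := by positivity
        exact mul_le_mul_of_nonneg_left
          (mul_le_mul_of_nonneg_left step4 h2) h1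
    _ ≤ 2 / (ε * (σ^2 * d)) := by
        rw [hcdef]
        exact arith_final hnr hp hp1 hσ hε hd1 hdle

/-- Suppose `d_n = (n-2) p(n)² → ∞` and `ς(n) → 0` with `ς(n)² d_n → ∞`.  Call an edge of
`G = G_{n,p(n)}` heavy if it lies in at least `(1+ς(n)) d_n` triangles.  Then for every
`ε > 0`, w.h.p. the number of triangles of `G` containing a heavy edge is at most
`ε n³ p(n)³`. -/
theorem few_triangles_on_heavy_edges (p : ℕ → ℝ) (hp : ∀ n, p n ∈ Set.Icc (0 : ℝ) 1)
    (hd : Tendsto (fun n : ℕ => ((n : ℝ) - 2) * (p n) ^ 2) atTop atTop)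
    (ς : ℕ → ℝ) (hςpos : ∀ n, 0 < ς n) (hς0 : Tendsto ς atTop (nhds 0))
    (hςd : Tendsto (fun n : ℕ => (ς n) ^ 2 * (((n : ℝ) - 2) * (p n) ^ 2)) atTop atTop)
    (ε : ℝ) (hε : 0 < ε) :
    Tendsto (fun n : ℕ => erMeasure n (p n)
        {ω | ((Set.ncard {t | t ∈ (erGraph n ω).cliqueSet 3 ∧
              ∃ e ∈ (erGraph n ω).edgeSet, (∀ v ∈ e, v ∈ t) ∧
                (1 + ς n) * (((n : ℝ) - 2) * (p n) ^ 2)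
                  ≤ ((Set.ncard {t' | t' ∈ (erGraph n ω).cliqueSet 3 ∧ ∀ v ∈ e, v ∈ t'}
                      : ℕ) : ℝ)} : ℕ) : ℝ)
            ≤ ε * (n : ℝ) ^ 3 * (p n) ^ 3})
      atTop (nhds 1) := by
  classical
  have hset : ∀ n : ℕ,
      {ω | ((Set.ncard {t | t ∈ (erGraph n ω).cliqueSet 3 ∧
            ∃ e ∈ (erGraph n ω).edgeSet, (∀ v ∈ e, v ∈ t) ∧
              (1 + ς n) * (((n : ℝ) - 2) * (p n) ^ 2)
                ≤ ((Set.ncard {t' | t' ∈ (erGraph n ω).cliqueSet 3 ∧ ∀ v ∈ e, v ∈ t'}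
                    : ℕ) : ℝ)} : ℕ) : ℝ)
          ≤ ε * (n : ℝ) ^ 3 * (p n) ^ 3}
      = {ω : Sym2 (Fin n) → Bool |
          ¬ ((Ncnt n (ς n) (((n:ℝ)-2)*(p n)^2) ω : ℝ) ≤ ε * (n:ℝ)^3 * (p n)^3)}ᶜ := by
    intro n
    ext ω
    simp only [Set.mem_setOf_eq, Set.mem_compl_iff, not_not, Ncnt, Tc]
  have hbad : Tendsto (fun n : ℕ => erMeasure n (p n)
      {ω : Sym2 (Fin n) → Bool |
        ¬ ((Ncnt n (ς n) (((n:ℝ)-2)*(p n)^2) ω : ℝ) ≤ ε * (n:ℝ)^3 * (p n)^3)})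
      atTop (nhds 0) := by
    have hR : Tendsto (fun n : ℕ =>
        ENNReal.ofReal (2 / (ε * ((ς n)^2 * (((n:ℝ)-2)*(p n)^2))))) atTop (nhds 0) := by
      have h1 : Tendsto (fun n : ℕ => ε * ((ς n)^2 * (((n:ℝ)-2)*(p n)^2))) atTop atTop := by
        exact Tendsto.const_mul_atTop hε hςd
      have h2 : Tendsto (fun n : ℕ => 2 / (ε * ((ς n)^2 * (((n:ℝ)-2)*(p n)^2))))
          atTop (nhds 0) := by
        simpa using Tendsto.div_atTop (tendsto_const_nhds (x := (2:ℝ))) h1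
      have := (ENNReal.continuous_ofReal.tendsto 0).comp h2
      simpa [Function.comp_def] using this
    have hev : ∀ᶠ n : ℕ in atTop, erMeasure n (p n)
        {ω : Sym2 (Fin n) → Bool |
          ¬ ((Ncnt n (ς n) (((n:ℝ)-2)*(p n)^2) ω : ℝ) ≤ ε * (n:ℝ)^3 * (p n)^3)}
        ≤ ENNReal.ofReal (2 / (ε * ((ς n)^2 * (((n:ℝ)-2)*(p n)^2)))) := by
      have hd1 : ∀ᶠ n : ℕ in atTop, 1 ≤ ((n:ℝ)-2)*(p n)^2 := hd.eventually_ge_atTop 1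
      have hn3 : ∀ᶠ n : ℕ in atTop, 3 ≤ n := eventually_ge_atTop 3
      filter_upwards [hd1, hn3] with n h1 h3
      exact main_bound n (p n) (ς n) ε (hp n).1 (hp n).2 (hςpos n) hε h3 h1
    exact tendsto_of_tendsto_of_tendsto_of_le_of_le' tendsto_const_nhds hR
      (Eventually.of_forall fun n => zero_le) hev
  have hprob : ∀ n : ℕ, IsProbabilityMeasure (erMeasure n (p n)) := by
    intro n
    haveI := berBool_prob (hp n).1 (hp n).2
    exact MeasureTheory.Measure.pi.instIsProbabilityMeasure _
  have hgood : ∀ n : ℕ, erMeasure n (p n)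
      ({ω : Sym2 (Fin n) → Bool |
        ¬ ((Ncnt n (ς n) (((n:ℝ)-2)*(p n)^2) ω : ℝ) ≤ ε * (n:ℝ)^3 * (p n)^3)}ᶜ)
      = 1 - erMeasure n (p n) {ω : Sym2 (Fin n) → Bool |
        ¬ ((Ncnt n (ς n) (((n:ℝ)-2)*(p n)^2) ω : ℝ) ≤ ε * (n:ℝ)^3 * (p n)^3)} := by
    intro n
    haveI := hprob n
    exact prob_compl_eq_one_sub ((Set.to_countable _).measurableSet)
  simp only [hset, hgood]
  have hcont : Tendsto (fun x : ENNReal => 1 - x) (nhds 0) (nhds 1) := by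
    have : Continuous (fun x : ENNReal => 1 - x) :=
      ENNReal.continuous_sub_left (by norm_num)
    simpa using this.tendsto 0
  exact hcont.comp hbad
end
end
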